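/- arXiv:1201.0774 — 12 statements merged into one kernel-verified Lean document; each statement's English description precedes it below -/
import Mathlib

section
/- Let h(z) be a nonzero complex polynomial of degree n having all its zeros in the closed unit disk |z| ≤ 1, let d > n, and let λ be a complex number with |λ| = 1. Then the polynomial P(z) = z^(d-n) h(z) + λ h*(z), where h*(z) = z^n · conj(h)(1/z) (i.e., the polynomial whose coefficients are the complex conjugates of those of h, in reversed order), has all its zeros on the unit circle |z| = 1. -/
open Polynomial

noncomputable def conjReciprocal (h : Polynomial ℂ) : Polynomial ℂ :=
  (h.map (starRingEnd ℂ)).reverse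

lemma reverse_X_sub_C (a : ℂ) : (X - C a).reverse = 1 - C a * X := by
  rw [reverse, natDegree_X_sub_C, reflect_sub]
  have h1 : reflect 1 (X : ℂ[X]) = 1 := by
    simpa using reflect_monomial 1 1 (R := ℂ)
  have h2 : reflect 1 (C a : ℂ[X]) = C a * X := by
    rw [← mul_one (C a), ← pow_zero (X : ℂ[X]), reflect_C_mul, reflect_monomial]
    simp
  rw [h1, h2]

lemma reverse_multiset_prod (s : Multiset ℂ) :
    ((s.map fun a => X - C a).prod).reverse = (s.map fun a => 1 - C a * X).prod := by
  induction s using Multiset.induction with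
  | empty =>
    have : ((1 : ℂ[X])) = C 1 := by simp
    simp only [Multiset.map_zero, Multiset.prod_zero, this, reverse_C]
  | cons a s ih =>
    simp only [Multiset.map_cons, Multiset.prod_cons, reverse_mul_of_domain,
      reverse_X_sub_C, ih]

lemma abs_one_sub_conj_mul_le (a z : ℂ) (ha : ‖a‖ ≤ 1) (hz : 1 ≤ ‖z‖) :
    ‖1 - (starRingEnd ℂ) a * z‖ ≤ ‖z - a‖ := by
  have key : Complex.normSq (z - a) - Complex.normSq (1 - (starRingEnd ℂ) a * z)
      = (Complex.normSq z - 1) * (1 - Complex.normSq a) := by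
    simp [Complex.normSq_apply, Complex.mul_re, Complex.mul_im]
    ring
  have h1 : 0 ≤ Complex.normSq z - 1 := by
    have := Complex.sq_norm z
    nlinarith [norm_nonneg z]
  have h2 : 0 ≤ 1 - Complex.normSq a := by
    have := Complex.sq_norm a
    nlinarith [norm_nonneg a]
  have : Complex.normSq (1 - (starRingEnd ℂ) a * z) ≤ Complex.normSq (z - a) := by nlinarith
  have := Real.sqrt_le_sqrt this
  simpa [Complex.norm_def] using this

lemma abs_sub_le_one_sub_conj_mul (a z : ℂ) (ha : ‖a‖ ≤ 1) (hz : ‖z‖ ≤ 1) :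
    ‖z - a‖ ≤ ‖1 - (starRingEnd ℂ) a * z‖ := by
  have key : Complex.normSq (1 - (starRingEnd ℂ) a * z) - Complex.normSq (z - a)
      = (1 - Complex.normSq z) * (1 - Complex.normSq a) := by
    simp [Complex.normSq_apply, Complex.mul_re, Complex.mul_im]
    ring
  have h1 : 0 ≤ 1 - Complex.normSq z := by
    have := Complex.sq_norm z
    nlinarith [norm_nonneg z]
  have h2 : 0 ≤ 1 - Complex.normSq a := by
    have := Complex.sq_norm a
    nlinarith [norm_nonneg a]
  have : Complex.normSq (z - a) ≤ Complex.normSq (1 - (starRingEnd ℂ) a * z) := by nlinarith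
  have := Real.sqrt_le_sqrt this
  simpa [Complex.norm_def] using this

lemma one_sub_conj_mul_ne_zero (a z : ℂ) (ha : ‖a‖ ≤ 1) (hz : ‖z‖ < 1) :
    1 - (starRingEnd ℂ) a * z ≠ 0 := by
  intro h
  have h1 : (starRingEnd ℂ) a * z = 1 := by linear_combination -h
  have := congrArg (‖·‖) h1
  simp only [norm_mul, norm_one] at this
  have hca : ‖(starRingEnd ℂ) a‖ = ‖a‖ := Complex.norm_conj a
  nlinarith [norm_nonneg a, norm_nonneg z]

theorem stmt_0 (h : Polynomial ℂ) (n d : ℕ) (lam : ℂ)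
    (hh : h ≠ 0) (hn : h.natDegree = n) (hd : n < d)
    (hz : ∀ z : ℂ, h.eval z = 0 → ‖z‖ ≤ 1)
    (hlam : ‖lam‖ = 1) :
    ∀ z : ℂ, (X ^ (d - n) * h + C lam * conjReciprocal h).eval z = 0 →
      ‖z‖ = 1 := by
  intro z hPz
  set c := h.leadingCoeff with hc
  have hc0 : c ≠ 0 := leadingCoeff_ne_zero.2 hh
  set R := h.roots with hR
  have hsplit : h = C c * (R.map fun a => X - C a).prod :=
    Splits.eq_prod_roots (IsAlgClosed.splits h)
  have hroots : ∀ a ∈ R, ‖a‖ ≤ 1 := by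
    intro a haR
    exact hz a (isRoot_of_mem_roots haR)
  -- formula for conjReciprocal h
  have hmap : h.map (starRingEnd ℂ)
      = C ((starRingEnd ℂ) c) * ((R.map (starRingEnd ℂ)).map fun a => X - C a).prod := by
    conv_lhs => rw [hsplit]
    rw [Polynomial.map_mul, map_C, Polynomial.map_multiset_prod]
    congr 1
    rw [Multiset.map_map, Multiset.map_map]
    congr 1
    exact Multiset.map_congr rfl fun a _ => by simp
  have hstar : conjReciprocal h
      = C ((starRingEnd ℂ) c) * ((R.map (starRingEnd ℂ)).map fun a => 1 - C a * X).prod := by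
    rw [conjReciprocal, hmap, reverse_mul_of_domain, reverse_C, reverse_multiset_prod]
  -- evaluations
  have hevalh : h.eval z = c * (R.map fun a => z - a).prod := by
    conv_lhs => rw [hsplit]
    simp [eval_multiset_prod, Multiset.map_map, Function.comp]
  have hevalstar : (conjReciprocal h).eval z
      = (starRingEnd ℂ) c * (R.map fun a => 1 - (starRingEnd ℂ) a * z).prod := by
    rw [hstar]
    simp [eval_multiset_prod, Multiset.map_map, Function.comp]
  -- abs of products
  have habsstar : ‖(conjReciprocal h).eval z‖
      = ‖c‖ * (R.map fun a => ‖1 - (starRingEnd ℂ) a * z‖).prod := by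
    rw [hevalstar, norm_mul, Complex.norm_conj]
    congr 1
    rw [show ‖_‖ = _ from map_multiset_prod (normHom : ℂ →*₀ ℝ) _, Multiset.map_map]
    rfl
  have habsh : ‖h.eval z‖
      = ‖c‖ * (R.map fun a => ‖z - a‖).prod := by
    rw [hevalh, norm_mul]
    congr 1
    rw [show ‖_‖ = _ from map_multiset_prod (normHom : ℂ →*₀ ℝ) _, Multiset.map_map]
    rfl
  -- the equation from hPz
  have heq : ‖z‖ ^ (d - n) * ‖h.eval z‖
      = ‖(conjReciprocal h).eval z‖ := by
    have h1 : (z ^ (d - n)) * h.eval z = -(lam * (conjReciprocal h).eval z) := by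
      simp only [eval_add, eval_mul, eval_pow, eval_X, eval_C] at hPz
      linear_combination hPz
    have := congrArg (‖·‖) h1
    simp only [norm_mul, norm_pow, norm_neg, hlam, one_mul] at this
    exact this
  -- product inequalities
  have prod_le : ∀ s : Multiset ℂ, (∀ a ∈ s, ‖a‖ ≤ 1) → 1 ≤ ‖z‖ →
      (s.map fun a => ‖1 - (starRingEnd ℂ) a * z‖).prod
        ≤ (s.map fun a => ‖z - a‖).prod := by
    intro s hs hz1
    induction s using Multiset.induction with
    | empty => simp
    | cons a s ih =>
      simp only [Multiset.map_cons, Multiset.prod_cons]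
      apply mul_le_mul (abs_one_sub_conj_mul_le a z (hs a (Multiset.mem_cons_self a s)) hz1)
        (ih fun b hb => hs b (Multiset.mem_cons_of_mem hb))
      · refine Multiset.prod_nonneg ?_
        intro x hx
        rcases Multiset.mem_map.1 hx with ⟨b, _, rfl⟩
        exact norm_nonneg _
      · exact norm_nonneg _
  have prod_ge : ∀ s : Multiset ℂ, (∀ a ∈ s, ‖a‖ ≤ 1) → ‖z‖ ≤ 1 →
      (s.map fun a => ‖z - a‖).prod
        ≤ (s.map fun a => ‖1 - (starRingEnd ℂ) a * z‖).prod := by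
    intro s hs hz1
    induction s using Multiset.induction with
    | empty => simp
    | cons a s ih =>
      simp only [Multiset.map_cons, Multiset.prod_cons]
      apply mul_le_mul (abs_sub_le_one_sub_conj_mul a z (hs a (Multiset.mem_cons_self a s)) hz1)
        (ih fun b hb => hs b (Multiset.mem_cons_of_mem hb))
      · refine Multiset.prod_nonneg ?_
        intro x hx
        rcases Multiset.mem_map.1 hx with ⟨b, _, rfl⟩
        exact norm_nonneg _
      · exact norm_nonneg _
  have prod_pos : ∀ s : Multiset ℂ, (∀ a ∈ s, ‖a‖ ≤ 1) → ‖z‖ < 1 →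
      0 < (s.map fun a => ‖1 - (starRingEnd ℂ) a * z‖).prod := by
    intro s hs hz1
    induction s using Multiset.induction with
    | empty => simp
    | cons a s ih =>
      simp only [Multiset.map_cons, Multiset.prod_cons]
      exact mul_pos
        (norm_pos_iff.2 (one_sub_conj_mul_ne_zero a z (hs a (Multiset.mem_cons_self a s)) hz1))
        (ih fun b hb => hs b (Multiset.mem_cons_of_mem hb))
  by_contra hne
  rcases lt_or_gt_of_ne hne with hlt | hgt
  · -- |z| < 1
    have hstar_pos : 0 < ‖(conjReciprocal h).eval z‖ := by
      rw [habsstar]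
      exact mul_pos (norm_pos_iff.2 hc0) (prod_pos R hroots hlt)
    have hle : ‖h.eval z‖ ≤ ‖(conjReciprocal h).eval z‖ := by
      rw [habsh, habsstar]
      exact mul_le_mul_of_nonneg_left (prod_ge R hroots hlt.le) (norm_nonneg c)
    have hpow : ‖z‖ ^ (d - n) < 1 :=
      pow_lt_one₀ (norm_nonneg z) hlt (Nat.sub_ne_zero_of_lt hd)
    nlinarith [norm_nonneg (h.eval z), norm_nonneg z,
      pow_nonneg (norm_nonneg z) (d - n)]
  · -- |z| > 1
    have hne0 : h.eval z ≠ 0 := fun h0 => absurd (hz z h0) (not_le.2 hgt)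
    have hpos : 0 < ‖h.eval z‖ := norm_pos_iff.2 hne0
    have hle : ‖(conjReciprocal h).eval z‖ ≤ ‖h.eval z‖ := by
      rw [habsh, habsstar]
      exact mul_le_mul_of_nonneg_left (prod_le R hroots hgt.le) (norm_nonneg c)
    have hpow : 1 < ‖z‖ ^ (d - n) :=
      one_lt_pow₀ hgt (Nat.sub_ne_zero_of_lt hd)
    nlinarith
end

section
/- Let h(z) be a nonzero complex polynomial of degree n with all zeros strictly inside the open unit disk |z| < 1, let d > n, and let λ be a complex number with |λ| > 1. Then every zero z of the polynomial P(z) = z^(d-n) h(z) + λ h*(z) satisfies |z| > 1. -/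
open Polynomial

lemma cr_mul (p q : Polynomial ℂ) :
    conjReciprocal (p * q) = conjReciprocal p * conjReciprocal q := by
  unfold conjReciprocal
  rw [Polynomial.map_mul, reverse_mul_of_domain]

lemma cr_C (c : ℂ) : conjReciprocal (C c) = C (starRingEnd ℂ c) := by
  simp [conjReciprocal]

lemma cr_X_sub_C (a : ℂ) :
    conjReciprocal (X - C a) = 1 - C (starRingEnd ℂ a) * X := by
  unfold conjReciprocal
  rw [Polynomial.map_sub, map_X, map_C]
  unfold reverse
  rw [natDegree_X_sub_C]
  rw [sub_eq_add_neg, reflect_add, ← map_neg, reflect_C, ← pow_one (X : Polynomial ℂ)]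
  rw [reflect_monomial]
  simp [revAt_le]
  ring

lemma cr_prod (S : Multiset ℂ) :
    conjReciprocal (S.map (fun a => X - C a)).prod
      = (S.map (fun a => 1 - C (starRingEnd ℂ a) * X)).prod := by
  induction S using Multiset.induction with
  | empty =>
      simp only [Multiset.map_zero, Multiset.prod_zero]
      unfold conjReciprocal
      rw [Polynomial.map_one]
      rw [show (1 : Polynomial ℂ) = C 1 by simp, reverse_C]
  | cons a S ih => simp [cr_mul, cr_X_sub_C, ih]

lemma key_ineq (a z : ℂ) (ha : ‖a‖ < 1) (hz : ‖z‖ ≤ 1) :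
    ‖z - a‖ ≤ ‖1 - starRingEnd ℂ a * z‖ ∧
      0 < ‖1 - starRingEnd ℂ a * z‖ := by
  have h1 : ‖starRingEnd ℂ a * z‖ < 1 := by
    rw [norm_mul, Complex.norm_conj]
    calc ‖a‖ * ‖z‖ ≤ ‖a‖ * 1 := by
          exact mul_le_mul_of_nonneg_left hz (norm_nonneg a)
      _ < 1 := by simpa using ha
  have hpos : 0 < ‖1 - starRingEnd ℂ a * z‖ := by
    apply norm_pos_iff.mpr
    intro hc
    have : (starRingEnd ℂ a * z) = 1 := by linear_combination -hc
    rw [this] at h1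
    simp at h1
  refine ⟨?_, hpos⟩
  have hsq : ‖z - a‖ ^ 2 ≤ ‖1 - starRingEnd ℂ a * z‖ ^ 2 := by
    rw [← Complex.normSq_eq_norm_sq, ← Complex.normSq_eq_norm_sq]
    have e1 : Complex.normSq (z - a) = Complex.normSq z - 2 * (z * starRingEnd ℂ a).re + Complex.normSq a := by
      simp [Complex.normSq_sub, Complex.normSq_apply, Complex.mul_re, Complex.conj_re, Complex.conj_im]
      ring
    have e2 : Complex.normSq (1 - starRingEnd ℂ a * z)
        = 1 - 2 * (z * starRingEnd ℂ a).re + Complex.normSq a * Complex.normSq z := by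
      simp [Complex.normSq_sub, Complex.normSq_apply, Complex.mul_re, Complex.conj_re, Complex.conj_im]
      ring
    rw [e1, e2]
    have hza : Complex.normSq z ≤ 1 := by
      rw [← Complex.sq_norm]; nlinarith [norm_nonneg z]
    have haa : Complex.normSq a ≤ 1 := by
      rw [← Complex.sq_norm]; nlinarith [norm_nonneg a]
    nlinarith
  nlinarith [norm_nonneg (z - a), norm_nonneg (1 - starRingEnd ℂ a * z)]

lemma prods_le (z : ℂ) (hzle : ‖z‖ ≤ 1) (S : Multiset ℂ)
    (hS : ∀ a ∈ S, ‖a‖ < 1) :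
    (S.map fun a => ‖z - a‖).prod
      ≤ (S.map fun a => ‖1 - starRingEnd ℂ a * z‖).prod ∧
    0 < (S.map fun a => ‖1 - starRingEnd ℂ a * z‖).prod := by
  induction S using Multiset.induction with
  | empty => simp
  | cons a S ih =>
    have ha := hS a (Multiset.mem_cons_self a S)
    have ih' := ih (fun b hb => hS b (Multiset.mem_cons_of_mem hb))
    obtain ⟨k1, k2⟩ := key_ineq a z ha hzle
    simp only [Multiset.map_cons, Multiset.prod_cons]
    constructor
    · apply mul_le_mul k1 ih'.1 _ k2.le
      exact Multiset.prod_nonneg (by intro x hx; obtain ⟨b, _, rfl⟩ := Multiset.mem_map.mp hx; exact norm_nonneg _)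
    · exact mul_pos k2 ih'.2

theorem stmt_1 (h : Polynomial ℂ) (n d : ℕ) (lam : ℂ)
    (hh : h ≠ 0) (hn : h.natDegree = n) (hd : n < d)
    (hz : ∀ z : ℂ, h.eval z = 0 → ‖z‖ < 1)
    (hlam : 1 < ‖lam‖) :
    ∀ z : ℂ, (X ^ (d - n) * h + C lam * conjReciprocal h).eval z = 0 →
      1 < ‖z‖ := by
  intro z hPz
  by_contra hle
  push_neg at hle
  set c := h.leadingCoeff with hc
  have hc0 : c ≠ 0 := leadingCoeff_ne_zero.mpr hh
  have hsplits : Splits h := IsAlgClosed.splits h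
  have hfac : h = C c * (h.roots.map fun a => X - C a).prod :=
    hsplits.eq_prod_roots
  have hroots : ∀ a ∈ h.roots, ‖a‖ < 1 := by
    intro a ha
    exact hz a (isRoot_of_mem_roots ha)
  -- eval of h
  have hevalh : h.eval z = c * ((h.roots.map fun a => z - a)).prod := by
    conv_lhs => rw [hfac]
    rw [eval_mul, eval_C, eval_multiset_prod]
    simp [Multiset.map_map]
  have hcr : conjReciprocal h
      = C (starRingEnd ℂ c) * (h.roots.map fun a => 1 - C (starRingEnd ℂ a) * X).prod := by
    conv_lhs => rw [hfac]
    rw [cr_mul, cr_C, cr_prod]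
  have hevalcr : (conjReciprocal h).eval z
      = starRingEnd ℂ c * ((h.roots.map fun a => 1 - starRingEnd ℂ a * z)).prod := by
    rw [hcr, eval_mul, eval_C, eval_multiset_prod]
    simp [Multiset.map_map]
  -- abs values
  set A := ((h.roots.map fun a => ‖z - a‖)).prod with hA
  set B := ((h.roots.map fun a => ‖1 - starRingEnd ℂ a * z‖)).prod with hB
  obtain ⟨hAB, hBpos⟩ := prods_le z hle h.roots hroots
  rw [← hB] at hAB hBpos
  have habsh : ‖h.eval z‖ = ‖c‖ * A := by
    rw [hevalh, norm_mul, hA, show ‖(h.roots.map fun a => z - a).prod‖ = ((h.roots.map fun a => z - a).map (‖·‖)).prod from map_multiset_prod (normHom (α := ℂ)) _, Multiset.map_map]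
    rfl
  have habscr : ‖(conjReciprocal h).eval z‖ = ‖c‖ * B := by
    rw [hevalcr, norm_mul, hB, show ‖(h.roots.map fun a => 1 - starRingEnd ℂ a * z).prod‖ = ((h.roots.map fun a => 1 - starRingEnd ℂ a * z).map (‖·‖)).prod from map_multiset_prod (normHom (α := ℂ)) _, Multiset.map_map, Complex.norm_conj]
    rfl
  -- equation from hPz
  rw [eval_add, eval_mul, eval_mul, eval_pow, eval_X, eval_C] at hPz
  have heq : ‖z ^ (d - n) * h.eval z‖
      = ‖lam * (conjReciprocal h).eval z‖ := by
    have : z ^ (d - n) * h.eval z = -(lam * (conjReciprocal h).eval z) := by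
      linear_combination hPz
    rw [this, norm_neg]
  rw [norm_mul, norm_mul, norm_pow, habsh, habscr] at heq
  have hzpow : ‖z‖ ^ (d - n) ≤ 1 := pow_le_one₀ (norm_nonneg z) hle
  have hcpos : 0 < ‖c‖ := norm_pos_iff.mpr hc0
  have hA0 : 0 ≤ A := Multiset.prod_nonneg (by
    intro x hx
    obtain ⟨b, _, rfl⟩ := Multiset.mem_map.mp hx
    exact norm_nonneg _)
  have h1 : ‖z‖ ^ (d - n) * (‖c‖ * A) ≤ ‖c‖ * A :=
    mul_le_of_le_one_left (mul_nonneg hcpos.le hA0) hzpow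
  have h2 : ‖c‖ * A ≤ ‖c‖ * B :=
    mul_le_mul_of_nonneg_left hAB hcpos.le
  have h3 : ‖c‖ * B < ‖lam‖ * (‖c‖ * B) :=
    lt_mul_of_one_lt_left (mul_pos hcpos hBpos) hlam
  linarith
end

section
/- (Gauss–Lucas) Every zero of the derivative P' of a nonconstant complex polynomial P lies in the convex hull of the set of zeros of P. -/
open Polynomial

theorem sum_inv_roots (P : Polynomial ℂ) (z : ℂ) (hz : P.eval z ≠ 0)
    (hd : P.derivative.eval z = 0) :
    (P.roots.map (fun r => (z - r)⁻¹)).sum = 0 := by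
  classical
  have hP : P ≠ 0 := by rintro rfl; simp at hz
  have hfac := (IsAlgClosed.splits P).eq_prod_roots
  have hne : ∀ r ∈ P.roots, z - r ≠ 0 := by
    intro r hr h
    exact hz (by rw [sub_eq_zero] at h; subst h; exact (isRoot_of_mem_roots hr))
  have hQne : (P.roots.map (fun r => z - r)).prod ≠ 0 := by
    refine Multiset.prod_ne_zero ?_
    simp only [Multiset.mem_map]
    rintro ⟨r, hr, h⟩
    exact hne r hr h
  have hder : P.derivative.eval z =
      P.leadingCoeff * (P.roots.map (fun r =>
        ((P.roots.erase r).map (fun s => z - s)).prod)).sum := by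
    conv_lhs => rw [hfac]
    rw [derivative_mul, derivative_C, zero_mul, zero_add, eval_mul, eval_C]
    congr 1
    rw [derivative_prod, ← coe_evalRingHom, map_multiset_sum (evalRingHom z), Multiset.map_map]
    refine congrArg _ (Multiset.map_congr rfl ?_)
    intro r hr
    simp only [Function.comp_apply, coe_evalRingHom]
    rw [eval_mul, derivative_X_sub_C, eval_one, mul_one, ← coe_evalRingHom,
      map_multiset_prod, Multiset.map_map]
    simp
  have herase : ∀ r ∈ P.roots,
      ((P.roots.erase r).map (fun s => z - s)).prod
        = (P.roots.map (fun r => z - r)).prod * (z - r)⁻¹ := by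
    intro r hr
    have h1 : (P.roots.map (fun r => z - r)).prod
        = (z - r) * ((P.roots.erase r).map (fun s => z - s)).prod := by
      conv_lhs => rw [← Multiset.cons_erase hr]
      rw [Multiset.map_cons, Multiset.prod_cons]
    rw [h1, mul_comm (z - r), mul_assoc, mul_inv_cancel₀ (hne r hr), mul_one]
  have hlc : P.leadingCoeff ≠ 0 := leadingCoeff_ne_zero.mpr hP
  have hsum : (P.roots.map (fun r =>
      ((P.roots.erase r).map (fun s => z - s)).prod)).sum = 0 := by
    rw [hd] at hder
    exact (mul_eq_zero.mp hder.symm).resolve_left hlc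
  rw [Multiset.map_congr rfl (fun r hr => herase r hr)] at hsum
  rw [Multiset.sum_map_mul_left] at hsum
  exact (mul_eq_zero.mp hsum).resolve_left hQne

theorem stmt_6 (P : Polynomial ℂ) (hP : 0 < P.degree) :
    ∀ z : ℂ, P.derivative.eval z = 0 →
      z ∈ convexHull ℝ {w : ℂ | P.eval w = 0} := by
  intro z hd
  classical
  by_cases hz : P.eval z = 0
  · exact subset_convexHull ℝ _ hz
  have hP0 : P ≠ 0 := fun h => by simp [h] at hP
  have hkey := sum_inv_roots P z hz hd
  set l : List ℂ := P.roots.toList with hl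
  have hmem : ∀ i : Fin l.length, P.eval l[i.1] = 0 := by
    intro i
    have : l[i.1] ∈ l := List.getElem_mem _
    exact isRoot_of_mem_roots (Multiset.mem_toList.mp this)
  have hne : ∀ i : Fin l.length, z - l[i.1] ≠ 0 := by
    intro i h
    rw [sub_eq_zero] at h
    exact hz (h ▸ hmem i)
  have hroot : ∃ r, r ∈ P.roots := by
    obtain ⟨r, hr⟩ := Complex.exists_root hP
    exact ⟨r, (mem_roots hP0).mpr hr⟩
  have hlen : 0 < l.length := by
    obtain ⟨r, hr⟩ := hroot
    have hm : r ∈ l := by rw [hl]; exact Multiset.mem_toList.mpr hr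
    exact List.length_pos_iff.mpr (by intro h; rw [h] at hm; simp at hm)
  have hsum : ∑ i : Fin l.length, (z - l[i.1])⁻¹ = 0 := by
    rw [Fin.sum_univ_fun_getElem l (fun r => (z - r)⁻¹)]
    have h2 : P.roots.map (fun r => (z - r)⁻¹) = (l.map fun r => (z - r)⁻¹ : List ℂ) := by
      rw [hl, ← Multiset.map_coe, Multiset.coe_toList]
    rw [h2] at hkey
    simpa using hkey
  -- weights
  set t : Fin l.length → ℝ := fun i => (Complex.normSq (z - l[i.1]))⁻¹ with ht
  have htpos : ∀ i, 0 < t i := fun i =>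
    inv_pos.mpr (Complex.normSq_pos.mpr (hne i))
  have hconj : ∑ i : Fin l.length, (t i : ℂ) * (z - l[i.1]) = 0 := by
    have := congrArg (starRingEnd ℂ) hsum
    rw [map_sum, map_zero] at this
    rw [← this]
    refine Finset.sum_congr rfl fun i _ => ?_
    rw [Complex.inv_def, map_mul, Complex.conj_conj]
    simp only [ht, map_inv₀, Complex.conj_ofReal, Complex.ofReal_inv]
    ring
  have hT : 0 < ∑ i, t i := Finset.sum_pos (fun i _ => htpos i) (by
    simp [Finset.univ_nonempty_iff, Fin.pos_iff_nonempty.mp hlen])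
  -- center of mass equals z
  have hcm : Finset.univ.centerMass t (fun i : Fin l.length => l[i.1]) = z := by
    rw [Finset.centerMass]
    have hsum2 : ∑ i : Fin l.length, t i • l[i.1] = (∑ i, t i) • z := by
      have : ∑ i : Fin l.length, (t i : ℂ) * z - ∑ i, (t i : ℂ) * l[i.1] = 0 := by
        rw [← Finset.sum_sub_distrib, ← hconj]
        exact Finset.sum_congr rfl fun i _ => by ring
      have h3 : ∑ i : Fin l.length, (t i : ℂ) * l[i.1] = (∑ i, (t i : ℂ)) * z := by
        rw [Finset.sum_mul]
        have := sub_eq_zero.mp this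
        linear_combination this.symm
      calc ∑ i : Fin l.length, t i • l[i.1] = ∑ i : Fin l.length, (t i : ℂ) * l[i.1] := by
            simp [Complex.real_smul]
        _ = (∑ i, (t i : ℂ)) * z := h3
        _ = (∑ i, t i) • z := by simp [Complex.real_smul]
    rw [hsum2, smul_smul, inv_mul_cancel₀ hT.ne', one_smul]
  rw [← hcm]
  exact Finset.centerMass_mem_convexHull _ (fun i _ => (htpos i).le) hT
    (fun i _ => hmem i)
end

section
/- If all zeros of a nonconstant complex polynomial P lie in the closed unit disk |z| ≤ 1, then all zeros of P' also lie in the closed unit disk. -/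
open Polynomial

theorem stmt_7 (P : Polynomial ℂ) (hP : 0 < P.degree)
    (hz : ∀ z : ℂ, P.eval z = 0 → ‖z‖ ≤ 1) :
    ∀ z : ℂ, P.derivative.eval z = 0 → ‖z‖ ≤ 1 := by
  intro z hz'
  by_cases hPz : P.eval z = 0
  · exact hz z hPz
  have hP0 : P ≠ 0 := fun h => by simp [h] at hPz
  have hcard : Multiset.card P.roots = P.natDegree :=
    (Polynomial.splits_iff_card_roots).mp (IsAlgClosed.splits P)
  set M := P.roots with hM
  have hzr : ∀ r ∈ M, z - r ≠ 0 := by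
    intro r hr h
    apply hPz
    rw [sub_eq_zero.mp h]
    exact (Polynomial.mem_roots hP0).mp hr
  have hfac : P = C P.leadingCoeff * (M.map fun r => X - C r).prod :=
    (Polynomial.C_leadingCoeff_mul_prod_multiset_X_sub_C hcard).symm
  have ha : P.leadingCoeff ≠ 0 := leadingCoeff_ne_zero.mpr hP0
  set Q : ℂ := (M.map fun r => z - r).prod with hQ
  have hQ0 : Q ≠ 0 := by
    rw [hQ]
    apply Multiset.prod_ne_zero
    intro h
    obtain ⟨r, hr, h0⟩ := Multiset.mem_map.mp h
    exact hzr r hr h0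
  have hder : P.derivative.eval z
      = P.leadingCoeff * (M.map fun r => ((M.erase r).map fun s => z - s).prod).sum := by
    classical
    conv_lhs => rw [hfac]
    rw [derivative_mul, derivative_C, zero_mul, zero_add, eval_mul, eval_C, derivative_prod]
    congr 1
    rw [show (eval z : Polynomial ℂ → ℂ) = ⇑(Polynomial.evalRingHom z) from rfl,
      map_multiset_sum, Multiset.map_map]
    congr 1
    apply Multiset.map_congr rfl
    intro r _
    simp [Polynomial.eval_multiset_prod, Multiset.map_map, Function.comp_def]
  have hsum : (M.map fun r => (z - r)⁻¹).sum = 0 := by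
    have hterm : ∀ r ∈ M, ((M.erase r).map fun s => z - s).prod = Q * (z - r)⁻¹ := by
      intro r hr
      have h1 := Multiset.prod_map_erase (f := fun s => z - s) hr
      rw [hQ, ← h1, mul_comm (z - r), mul_assoc, mul_inv_cancel₀ (hzr r hr), mul_one]
    have h2 : (M.map fun r => ((M.erase r).map fun s => z - s).prod).sum
        = Q * (M.map fun r => (z - r)⁻¹).sum := by
      rw [← Multiset.sum_map_mul_left]
      exact congrArg Multiset.sum (Multiset.map_congr rfl hterm)
    rw [hder, h2] at hz'
    rcases mul_eq_zero.mp hz' with h | h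
    · exact absurd h ha
    · rcases mul_eq_zero.mp h with h | h
      · exact absurd h hQ0
      · exact h
  classical
  set t : ℂ → ℝ := fun r => (Complex.normSq (z - r))⁻¹ with ht
  have htpos : ∀ r ∈ M, 0 < t r := by
    intro r hr
    exact inv_pos.mpr (Complex.normSq_pos.mpr (hzr r hr))
  have hconj : (M.map fun r => (z - r) * (t r : ℂ)).sum = 0 := by
    have h3 := congrArg (starRingEnd ℂ) hsum
    rw [map_multiset_sum, Multiset.map_map, map_zero] at h3
    rw [← h3]
    congr 1
    apply Multiset.map_congr rfl
    intro r hr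
    have htr : ((t r : ℝ) : ℂ) = (((Complex.normSq (z - r) : ℝ)) : ℂ)⁻¹ := by
      rw [ht]; simp [Complex.ofReal_inv]
    show (z - r) * ((t r : ℝ) : ℂ) = (starRingEnd ℂ) ((z - r)⁻¹)
    rw [map_inv₀, Complex.inv_def, Complex.conj_conj, Complex.normSq_conj, htr]
  set T : ℝ := (M.map t).sum with hT
  have hM0 : M ≠ 0 := by
    intro h
    have h4 : P.natDegree = 0 := by rw [← hcard, h]; simp
    have h5 := Polynomial.natDegree_pos_iff_degree_pos.mpr hP
    omega
  have hTpos : 0 < T := by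
    have h6 := Multiset.sum_lt_sum_of_nonempty (s := M) (f := fun _ => (0 : ℝ)) (g := t)
      (by simpa using hM0) htpos
    simpa using h6
  have hcastT : (M.map fun r => ((t r : ℝ) : ℂ)).sum = ((T : ℝ) : ℂ) := by
    rw [hT, show (((M.map t).sum : ℝ) : ℂ) = Complex.ofRealHom (M.map t).sum from rfl,
      map_multiset_sum, Multiset.map_map]
    rfl
  have hzT : z * (T : ℂ) = (M.map fun r => r * (t r : ℂ)).sum := by
    have hsplit : (M.map fun r => (z - r) * (t r : ℂ)).sum
        = (M.map fun r => z * (t r : ℂ)).sum - (M.map fun r => r * (t r : ℂ)).sum := by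
      rw [← Multiset.sum_map_sub]
      apply congrArg
      apply Multiset.map_congr rfl
      intro r _; ring
    have hleft : (M.map fun r => z * (t r : ℂ)).sum = z * (T : ℂ) := by
      rw [Multiset.sum_map_mul_left, hcastT]
    rw [hsplit, hleft] at hconj
    exact sub_eq_zero.mp hconj
  have hineq : ‖z‖ * T ≤ T := by
    have h1 : ‖z‖ * T = ‖z * (T : ℂ)‖ := by
      rw [norm_mul, Complex.norm_real, Real.norm_eq_abs, abs_of_pos hTpos]
    rw [h1, hzT]
    calc ‖((M.map fun r => r * (t r : ℂ)).sum)‖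
        ≤ ((M.map fun r => r * (t r : ℂ)).map fun x => ‖x‖).sum := by
          exact norm_multiset_sum_le _
      _ = (M.map fun r => ‖r‖ * t r).sum := by
          rw [Multiset.map_map]
          apply congrArg
          apply Multiset.map_congr rfl
          intro r hr
          simp [abs_of_pos (htpos r hr)]
      _ ≤ (M.map t).sum := by
          apply Multiset.sum_map_le_sum_map
          intro r hr
          have hr1 : ‖r‖ ≤ 1 := hz r ((Polynomial.mem_roots hP0).mp hr)
          nlinarith [htpos r hr]
  nlinarith
end

section
/- (Cohn's criterion, one direction) If P is a self-inversive polynomial of degree d with all zeros on the unit circle, then P can be written as P(z) = z · h(z) + ε h*(z) with h(z) = (1/d) P'(z), where h has all its zeros in the closed unit disk |z| ≤ 1 and ε is the self-inversive constant of P. -/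
open Polynomial

lemma half_lt_re (z r : ℂ) (hz : 1 < ‖z‖) (hr : ‖r‖ = 1) :
    1/2 < (z / (z - r)).re := by
  have hne : z - r ≠ 0 := sub_ne_zero.2 (by rintro rfl; linarith [hr ▸ hz])
  have hsq : 1 < Complex.normSq z := by
    have := Complex.sq_norm z
    nlinarith [norm_nonneg z]
  have hrsq : Complex.normSq r = 1 := by
    have := Complex.sq_norm r
    nlinarith
  have hpos : 0 < Complex.normSq (z - r) := Complex.normSq_pos.2 hne
  rw [Complex.div_re, ← add_div, lt_div_iff₀ hpos]
  simp only [Complex.normSq_sub, Complex.sub_re, Complex.sub_im, Complex.normSq_apply] at *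
  nlinarith

lemma deriv_ne (P : Polynomial ℂ) (hdeg : 0 < P.natDegree)
    (hz : ∀ z : ℂ, P.eval z = 0 → ‖z‖ = 1)
    (z : ℂ) (h1 : 1 < ‖z‖) : P.derivative.eval z ≠ 0 := by
  classical
  have hP : P ≠ 0 := fun h => by simp [h] at hdeg
  set S := P.roots with hS
  have hroots : ∀ r ∈ S, ‖r‖ = 1 := fun r hr => hz r ((mem_roots hP).1 hr)
  have hzr : ∀ r ∈ S, z - r ≠ 0 := fun r hr =>
    sub_ne_zero.2 (by rintro rfl; rw [hroots z hr] at h1; linarith)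
  have hPfac : P = C P.leadingCoeff * (S.map fun a => X - C a).prod :=
    (IsAlgClosed.splits P).eq_prod_roots
  set Q : ℂ := (S.map fun a => z - a).prod with hQ
  have hQne : Q ≠ 0 := by
    rw [hQ]
    refine Multiset.prod_ne_zero ?_
    simp only [Multiset.mem_map]
    rintro ⟨r, hr, hre⟩
    exact hzr r hr hre
  have hder : P.derivative.eval z
      = P.leadingCoeff * Q * (S.map fun r => (z - r)⁻¹).sum := by
    conv_lhs => rw [hPfac]
    rw [derivative_C_mul, eval_C_mul, mul_assoc]
    congr 1
    rw [derivative_prod]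
    rw [show (eval z : ℂ[X] → ℂ) = (evalRingHom z : ℂ[X] →+* ℂ) from rfl,
      map_multiset_sum (evalRingHom z), Multiset.map_map, ← Multiset.sum_map_mul_left]
    congr 1
    apply Multiset.map_congr rfl
    intro r hr
    have herase : Q = (z - r) * ((S.erase r).map fun a => z - a).prod := by
      conv_lhs => rw [hQ, ← Multiset.cons_erase hr]
      rw [Multiset.map_cons, Multiset.prod_cons]
    simp only [Function.comp_apply, derivative_sub, derivative_X, derivative_C, sub_zero,
      mul_one, coe_evalRingHom, eval_multiset_prod, Multiset.map_map]
    have : ((S.erase r).map fun a => eval z (X - C a)).prod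
        = ((S.erase r).map fun a => z - a).prod := by
      apply congrArg; apply Multiset.map_congr rfl; intro s _; simp
    rw [this, herase, mul_comm (z - r), mul_inv_cancel_right₀ (hzr r hr)]
  have hcard : 0 < Multiset.card S := by
    rw [hS, (splits_iff_card_roots).1 (IsAlgClosed.splits P)]
    exact hdeg
  have hsum : (S.map fun r => z / (z - r)).sum ≠ 0 := by
    intro h0
    have hre : ((S.map fun r => z / (z - r)).sum).re = 0 := by rw [h0]; rfl
    have hle : (Multiset.card S : ℝ) * (1/2) ≤ ((S.map fun r => z / (z - r)).sum).re := by
      have hmr : ((S.map fun r => z / (z - r)).sum).re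
          = (S.map fun r => (z / (z - r)).re).sum := by
        rw [show ((S.map fun r => z / (z - r)).sum).re
            = Complex.reAddGroupHom ((S.map fun r => z / (z - r)).sum) from rfl,
          map_multiset_sum, Multiset.map_map]
        rfl
      rw [hmr]
      have := Multiset.card_nsmul_le_sum (s := S.map fun r => (z / (z - r)).re)
        (a := (1:ℝ)/2) ?_
      · simpa [nsmul_eq_mul] using this
      · intro x hx
        obtain ⟨r, hr, rfl⟩ := Multiset.mem_map.1 hx
        exact le_of_lt (half_lt_re z r h1 (hroots r hr))
    rw [hre] at hle
    have : (0:ℝ) < (Multiset.card S : ℝ) * (1/2) := by positivity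
    linarith
  intro h0
  rw [hder] at h0
  have hlc : P.leadingCoeff ≠ 0 := leadingCoeff_ne_zero.2 hP
  have hinv : (S.map fun r => (z - r)⁻¹).sum = 0 := by
    rcases mul_eq_zero.1 h0 with h | h
    · rcases mul_eq_zero.1 h with h' | h'
      · exact absurd h' hlc
      · exact absurd h' hQne
    · exact h
  apply hsum
  have : (S.map fun r => z / (z - r)).sum = z * (S.map fun r => (z - r)⁻¹).sum := by
    rw [← Multiset.sum_map_mul_left]
    apply congrArg
    apply Multiset.map_congr rfl
    intro r _
    rw [div_eq_mul_inv]
  rw [this, hinv, mul_zero]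

theorem stmt_8 (P : Polynomial ℂ) (d : ℕ) (ε : ℂ) (hd : P.natDegree = d)
    (hd1 : 0 < d) (hε : ‖ε‖ = 1)
    (hsi : ∀ j ≤ d, P.coeff j = ε * (starRingEnd ℂ) (P.coeff (d - j)))
    (hz : ∀ z : ℂ, P.eval z = 0 → ‖z‖ = 1) :
    P = X * ((d : ℂ)⁻¹ • P.derivative)
        + C ε * conjReciprocal ((d : ℂ)⁻¹ • P.derivative) ∧
      ∀ z : ℂ, ((d : ℂ)⁻¹ • P.derivative).eval z = 0 → ‖z‖ ≤ 1 := by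
  constructor
  · set h : Polynomial ℂ := (d : ℂ)⁻¹ • P.derivative with hh
    have hdC : (d : ℂ) ≠ 0 := Nat.cast_ne_zero.2 hd1.ne'
    have hP : P ≠ 0 := fun h0 => by simp [h0] at hd; omega
    have hcoeff : ∀ k, h.coeff k = (d : ℂ)⁻¹ * (P.coeff (k+1) * (k+1 : ℕ)) := by
      intro k
      rw [hh, coeff_smul, coeff_derivative, smul_eq_mul]
      push_cast
      ring
    have hlead : P.coeff d ≠ 0 := by
      rw [← hd]; exact fun h0 => hP (leadingCoeff_eq_zero.1 h0)
    have hhd : h.coeff (d - 1) = P.coeff d := by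
      rw [hcoeff]
      have : d - 1 + 1 = d := by omega
      rw [this]
      push_cast
      field_simp
    have hdegh : h.natDegree = d - 1 := by
      apply le_antisymm
      · rw [natDegree_le_iff_coeff_eq_zero]
        intro N hN
        rw [hcoeff]
        have : P.coeff (N + 1) = 0 := coeff_eq_zero_of_natDegree_lt (by omega)
        rw [this]; ring
      · exact le_natDegree_of_ne_zero (hhd ▸ hlead)
    have hq : (h.map (starRingEnd ℂ)).natDegree = d - 1 := by
      rw [natDegree_map, hdegh]
    have hcr1 : ∀ j ≤ d - 1,
        (conjReciprocal h).coeff j = (starRingEnd ℂ) (h.coeff (d - 1 - j)) := by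
      intro j hj
      rw [conjReciprocal, coeff_reverse, hq, revAt_le hj, coeff_map]
    have hcr2 : ∀ j, d - 1 < j → (conjReciprocal h).coeff j = 0 := by
      intro j hj
      rw [conjReciprocal, coeff_reverse, hq, revAt_eq_self_of_lt hj, coeff_map,
        coeff_eq_zero_of_natDegree_lt (hdegh ▸ hj), map_zero]
    ext n
    rw [coeff_add, coeff_C_mul]
    rcases n with _ | k
    · -- n = 0
      rw [mul_coeff_zero, coeff_X_zero, zero_mul, zero_add,
        hcr1 0 (Nat.zero_le _), Nat.sub_zero, hhd]
      simpa using hsi 0 (Nat.zero_le _)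
    · rw [coeff_X_mul]
      by_cases hk : k + 1 ≤ d - 1
      · rw [hcr1 _ hk, hcoeff, hcoeff]
        have e1 : d - 1 - (k + 1) + 1 = d - (k + 1) := by omega
        rw [e1]
        have hkd : k + 1 ≤ d := by omega
        rw [hsi (k+1) hkd]
        have e2 : ((d - (k+1) : ℕ) : ℂ) = (d : ℂ) - (k+1 : ℕ) := by
          rw [Nat.cast_sub hkd]
        rw [map_mul, map_mul, map_inv₀, map_natCast, map_natCast, e2]
        push_cast
        field_simp
        ring
      · by_cases hkd : k + 1 = d
        · subst hkd
          rw [hcr2 _ (by omega), mul_zero, add_zero]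
          have : k + 1 - 1 = k := rfl
          rw [show (k + 1) - 1 = k from rfl] at hhd
          rw [hhd]
        · -- k + 1 > d
          have hgt : d < k + 1 := by omega
          rw [hcr2 _ (by omega), mul_zero, add_zero, hcoeff,
            coeff_eq_zero_of_natDegree_lt (show P.natDegree < k + 1 by omega)]
          ring
  · intro z hz0
    by_contra hc
    push_neg at hc
    have hdC : (d : ℂ) ≠ 0 := Nat.cast_ne_zero.2 hd1.ne'
    have hder0 : P.derivative.eval z = 0 := by
      rw [eval_smul, smul_eq_mul] at hz0
      rcases mul_eq_zero.1 hz0 with h | h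
      · exact absurd h (inv_ne_zero hdC)
      · exact h
    exact deriv_ne P (hd ▸ hd1) hz z hc hder0
end

section
/- Suppose h is a complex polynomial of degree n with a zero z₀ satisfying |z₀| > 1, and |λ| = 1. Then for all sufficiently large d, the polynomial P_d(z) = z^(d-n) h(z) + λ h*(z) has at least one zero of absolute value greater than 1; hence if P_d has all its zeros on the unit circle for all sufficiently large d, then h has all its zeros in |z| ≤ 1. -/
open Polynomial

theorem stmt_9 (h : Polynomial ℂ) (n : ℕ) (lam z₀ : ℂ)
    (hn : h.natDegree = n) (h0 : h.eval z₀ = 0) (habs : 1 < ‖z₀‖)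
    (hlam : ‖lam‖ = 1) :
    ∃ K : ℕ, ∀ d : ℕ, K < d →
      ∃ z : ℂ, (X ^ (d - n) * h + C lam * conjReciprocal h).eval z = 0 ∧
        1 < ‖z‖ := by
  by_cases hh : h = 0
  · refine ⟨0, fun d hd => ⟨2, ?_, ?_⟩⟩
    · simp [hh, conjReciprocal]
    · simp
  set q : Polynomial ℂ := conjReciprocal h with hqdef
  by_cases hq0 : q.eval z₀ = 0
  · exact ⟨0, fun d hd => ⟨z₀, by simp [h0, hq0], habs⟩⟩
  -- main case: h ≠ 0, q.eval z₀ ≠ 0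
  have hfin : Set.Finite ({z : ℂ | h.IsRoot z} \ {z₀}) :=
    (Polynomial.finite_setOf_isRoot hh).subset Set.diff_subset
  have hz₀mem : z₀ ∈ ({z : ℂ | h.IsRoot z} \ {z₀})ᶜ := by simp
  obtain ⟨ε, hε, hball⟩ :=
    Metric.isOpen_iff.1 hfin.isClosed.isOpen_compl z₀ hz₀mem
  set ρ : ℝ := min (ε / 2) ((‖z₀‖ - 1) / 2) with hρdef
  have hρpos : 0 < ρ := lt_min (by linarith) (by linarith)
  have hρε : ρ < ε := lt_of_le_of_lt (min_le_left _ _) (by linarith)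
  have hρz : ρ ≤ (‖z₀‖ - 1) / 2 := min_le_right _ _
  have hnoroot : ∀ z ∈ Metric.closedBall z₀ ρ, z ≠ z₀ → h.eval z ≠ 0 := by
    intro z hz hne
    have hzball : z ∈ Metric.ball z₀ ε :=
      Metric.mem_ball.2 (lt_of_le_of_lt (Metric.mem_closedBall.1 hz) hρε)
    have := hball hzball
    simp only [Set.mem_compl_iff, Set.mem_diff, Set.mem_setOf_eq,
      Set.mem_singleton_iff, not_and, not_not] at this
    intro hroot
    exact hne (this hroot)
  set r : ℝ := (‖z₀‖ + 1) / 2 with hrdef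
  have hr1 : 1 < r := by simp only [hrdef]; linarith
  have hrle : ∀ z ∈ Metric.closedBall z₀ ρ, r ≤ ‖z‖ := by
    intro z hz
    have hd : ‖z₀ - z‖ ≤ ρ := by
      have := Metric.mem_closedBall.1 hz
      rwa [dist_comm, Complex.dist_eq] at this
    have h1 : ‖z₀‖ - ‖z‖ ≤ ‖z₀ - z‖ := by
      have := norm_add_le (z₀ - z) z
      simp at this; linarith
    simp only [hrdef]; linarith
  -- min of |h| and max of |q| on the sphere
  have hsne : (Metric.sphere z₀ ρ).Nonempty :=
    NormedSpace.sphere_nonempty.2 hρpos.le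
  have hcomp : IsCompact (Metric.sphere z₀ ρ) := isCompact_sphere _ _
  obtain ⟨zm, hzms, hzmin⟩ := hcomp.exists_isMinOn hsne
    ((continuous_norm.comp (h.continuous_aeval)).continuousOn)
  obtain ⟨zM, hzMs, hzmax⟩ := hcomp.exists_isMaxOn hsne
    ((continuous_norm.comp (q.continuous_aeval)).continuousOn)
  set m : ℝ := ‖h.eval zm‖ with hmdef
  set M : ℝ := ‖q.eval zM‖ with hMdef
  have hzmcb : zm ∈ Metric.closedBall z₀ ρ := Metric.sphere_subset_closedBall hzms
  have hzmne : zm ≠ z₀ := by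
    intro hEq
    have := Metric.mem_sphere.1 hzms
    rw [hEq, dist_self] at this
    exact hρpos.ne' this.symm
  have hmpos : 0 < m := by
    have := hnoroot zm hzmcb hzmne
    simpa [hmdef] using (norm_pos_iff.mpr this)
  set c : ℝ := ‖q.eval z₀‖ with hcdef
  have hcpos : 0 < c := norm_pos_iff.mpr hq0
  -- choose K
  obtain ⟨k₀, hk₀⟩ := Filter.eventually_atTop.1
    ((tendsto_pow_atTop_atTop_of_one_lt hr1).eventually_ge_atTop ((M + c) / m + 1))
  refine ⟨n + k₀, fun d hd => ?_⟩
  by_contra hcon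
  push_neg at hcon
  set P : Polynomial ℂ := X ^ (d - n) * h + C lam * conjReciprocal h with hPdef
  have hPeval : ∀ z : ℂ, P.eval z = z ^ (d - n) * h.eval z + lam * q.eval z := by
    intro z; simp [hPdef, hqdef]
  have hPne : ∀ z ∈ Metric.closedBall z₀ ρ, P.eval z ≠ 0 := by
    intro z hz hP0
    have := hcon z hP0
    exact absurd (lt_of_lt_of_le hr1 (hrle z hz)) (not_lt.2 this)
  -- apply maximum modulus principle to (P.eval)⁻¹ on the ball
  obtain ⟨zP, hzPs, hzPmin⟩ := hcomp.exists_isMinOn hsne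
    ((continuous_norm.comp (P.continuous_aeval)).continuousOn)
  have hzPcb : zP ∈ Metric.closedBall z₀ ρ := Metric.sphere_subset_closedBall hzPs
  have hzPpos : 0 < ‖P.eval zP‖ := norm_pos_iff.mpr (hPne zP hzPcb)
  have hdiff : DiffContOnCl ℂ (fun z => (P.eval z)⁻¹) (Metric.ball z₀ ρ) := by
    constructor
    · exact (P.differentiable.differentiableOn).inv
        (fun z hz => hPne z (Metric.ball_subset_closedBall hz))
    · rw [closure_ball z₀ hρpos.ne']
      exact (P.continuous_aeval.continuousOn).inv₀ (fun z hz => hPne z hz)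
  have hfront : ∀ z ∈ frontier (Metric.ball z₀ ρ),
      ‖(P.eval z)⁻¹‖ ≤ (‖P.eval zP‖)⁻¹ := by
    intro z hz
    rw [frontier_ball z₀ hρpos.ne'] at hz
    have h1 : ‖P.eval zP‖ ≤ ‖P.eval z‖ := hzPmin hz
    rw [norm_inv]
    exact inv_anti₀ hzPpos h1
  have hz₀cl : z₀ ∈ closure (Metric.ball z₀ ρ) := by
    rw [closure_ball z₀ hρpos.ne']
    exact Metric.mem_closedBall_self hρpos.le
  have hkey := Complex.norm_le_of_forall_mem_frontier_norm_le
    Metric.isBounded_ball hdiff hfront hz₀cl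
  -- hence min on sphere ≤ |P z₀| = c
  have hPz₀ : ‖P.eval z₀‖ = c := by
    rw [hPeval z₀, h0, mul_zero, zero_add, norm_mul, hlam, one_mul]
  have hPz₀pos : 0 < ‖P.eval z₀‖ := by rw [hPz₀]; exact hcpos
  have hle : ‖P.eval zP‖ ≤ c := by
    rw [norm_inv] at hkey
    have := (inv_le_inv₀ hPz₀pos hzPpos).1 hkey
    rwa [hPz₀] at this
  -- lower bound for |P zP|
  have habsP : r ^ (d - n) * m - M ≤ ‖P.eval zP‖ := by
    have h1 : ‖zP ^ (d - n) * h.eval zP‖ =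
        ‖zP‖ ^ (d - n) * ‖h.eval zP‖ := by
      rw [norm_mul, norm_pow]
    have h2 : r ^ (d - n) * m ≤ ‖zP‖ ^ (d - n) * ‖h.eval zP‖ := by
      apply mul_le_mul
      · exact pow_le_pow_left₀ (by linarith) (hrle zP hzPcb) _
      · exact hzmin hzPs
      · exact hmpos.le
      · positivity
    have h3 : ‖lam * q.eval zP‖ ≤ M := by
      rw [norm_mul, hlam, one_mul]
      exact hzmax hzPs
    have h4 : ‖zP ^ (d - n) * h.eval zP‖ -
        ‖lam * q.eval zP‖ ≤ ‖P.eval zP‖ := by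
      have h5 := norm_add_le (zP ^ (d - n) * h.eval zP + lam * q.eval zP)
        (-(lam * q.eval zP))
      simp only [add_neg_cancel_right] at h5
      have h6 : ‖-(lam * q.eval zP)‖ = ‖lam * q.eval zP‖ :=
        norm_neg _
      rw [hPeval zP]
      linarith
    rw [h1] at h4
    linarith
  -- and r^(d-n) is large
  have hkd : k₀ ≤ d - n := by omega
  have hpow : (M + c) / m + 1 ≤ r ^ (d - n) := hk₀ _ hkd
  have hfin2 : M + c < r ^ (d - n) * m := by
    have h6 : ((M + c) / m + 1) * m ≤ r ^ (d - n) * m :=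
      mul_le_mul_of_nonneg_right hpow hmpos.le
    rw [add_mul, div_mul_cancel₀ _ hmpos.ne', one_mul] at h6
    linarith
  linarith
end

section
/- (Lakatos–Losonczi) A self-inversive polynomial P(z) = Σ_{j=0}^d A_j z^j (A_j = ε conj(A_{d-j}), |ε| = 1, A_d ≠ 0) satisfying |A_d| ≥ (1/2) Σ_{j=1}^{d-1} |A_j| has all its zeros on the unit circle |z| = 1. -/
open Polynomial Complex Finset

lemma sum_split {M : Type*} [AddCommMonoid M] {d : ℕ} (hd : 1 ≤ d) (f : ℕ → M) :
    ∑ i ∈ Finset.range (d+1), f i = f 0 + (∑ i ∈ Finset.Ioo 0 d, f i) + f d := by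
  have h : Finset.range (d+1) = insert 0 (insert d (Finset.Ioo 0 d)) := by
    ext x; simp only [Finset.mem_range, Finset.mem_insert, Finset.mem_Ioo]; omega
  rw [h, Finset.sum_insert, Finset.sum_insert]
  · rw [add_comm (f d), ← add_assoc]
  · simp
  · simp only [Finset.mem_insert, Finset.mem_Ioo]; omega

lemma pow_le_multiset_prod {m : Multiset ℂ} {f : ℂ → ℝ} {c : ℝ} (hc : 0 ≤ c)
    (h : ∀ w ∈ m, c ≤ f w) : c ^ (Multiset.card m) ≤ (m.map f).prod := by
  induction m using Multiset.induction with
  | empty => simp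
  | cons a s ih =>
    simp only [Multiset.map_cons, Multiset.prod_cons, Multiset.card_cons, pow_succ]
    have h1 : c ≤ f a := h a (Multiset.mem_cons_self a s)
    have h2 : c ^ (Multiset.card s) ≤ (s.map f).prod := ih (fun w hw => h w (Multiset.mem_cons_of_mem hw))
    calc c ^ Multiset.card s * c ≤ (s.map f).prod * f a := by
          apply mul_le_mul h2 h1 hc
          exact le_trans (pow_nonneg hc _) h2
      _ = f a * (s.map f).prod := by ring

lemma strict_case (P : Polynomial ℂ) (d : ℕ) (ε : ℂ) (hd : P.natDegree = d) (hd1 : 1 ≤ d)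
    (hε : ‖ε‖ = 1)
    (hsi : ∀ j ≤ d, P.coeff j = ε * (starRingEnd ℂ) (P.coeff (d - j)))
    (hineq : ∑ j ∈ Finset.Ioo 0 d, ‖P.coeff j‖
      < 2 * ‖P.coeff d‖) :
    ∀ z : ℂ, P.eval z = 0 → ‖z‖ = 1 := by
  have hd0 : (d:ℝ) ≠ 0 := Nat.cast_ne_zero.mpr (by omega)
  have hAd : P.coeff d ≠ 0 := by
    intro h
    rw [h] at hineq
    simp only [norm_zero, mul_zero] at hineq
    have : (0:ℝ) ≤ ∑ j ∈ Finset.Ioo 0 d, ‖P.coeff j‖ :=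
      Finset.sum_nonneg (fun j _ => (norm_nonneg _))
    linarith
  have hεε : ε * (starRingEnd ℂ) ε = 1 := by
    rw [Complex.mul_conj, ← Complex.sq_norm, hε]; norm_num
  set a : ℝ := ‖P.coeff d‖ with ha
  have ha0 : 0 < a := norm_pos_iff.mpr hAd
  set S : ℝ := ∑ j ∈ Finset.Ioo 0 d, ‖P.coeff j‖ with hS
  set δ : ℂ := Complex.exp ((ε.arg / 2 : ℝ) * I) with hδ
  have hδ2 : δ ^ 2 = ε := by
    rw [hδ, ← Complex.exp_nat_mul]
    have : ((2:ℕ) : ℂ) * ((ε.arg / 2 : ℝ) * I) = (ε.arg : ℝ) * I := by push_cast; ring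
    rw [this]
    nth_rewrite 2 [← Complex.norm_mul_exp_arg_mul_I ε]
    rw [hε]; simp
  have hδa : ‖δ‖ = 1 := Complex.norm_exp_ofReal_mul_I _
  have hδc : δ * (starRingEnd ℂ) δ = 1 := by
    rw [Complex.mul_conj, ← Complex.sq_norm, hδa]; norm_num
  have hδε : δ * (starRingEnd ℂ) ε = (starRingEnd ℂ) δ := by
    rw [← hδ2]; rw [map_pow]
    calc δ * ((starRingEnd ℂ) δ)^2 = (δ * (starRingEnd ℂ) δ) * (starRingEnd ℂ) δ := by ring
      _ = (starRingEnd ℂ) δ := by rw [hδc, one_mul]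
  -- the key conjugation identity
  have key : ∀ z : ℂ, z * (starRingEnd ℂ) z = 1 →
      z ^ d * (starRingEnd ℂ) (P.eval z) = (starRingEnd ℂ) ε * P.eval z := by
    intro z hz
    have heval : P.eval z = ∑ i ∈ Finset.range (d+1), P.coeff i * z^i := by
      rw [eval_eq_sum_range, hd]
    have step : ∀ i ∈ Finset.range (d+1),
        z ^ d * ((starRingEnd ℂ) (P.coeff i) * (starRingEnd ℂ) z ^ i)
          = (starRingEnd ℂ) ε * (P.coeff (d - i) * z ^ (d - i)) := by
      intro i hi
      have hi' : i ≤ d := Nat.lt_succ_iff.mp (Finset.mem_range.mp hi)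
      have hc : (starRingEnd ℂ) (P.coeff i) = (starRingEnd ℂ) ε * P.coeff (d - i) := by
        have h1 := hsi (d - i) (Nat.sub_le d i)
        rw [Nat.sub_sub_self hi'] at h1
        rw [h1, ← mul_assoc, show (starRingEnd ℂ) ε * ε = 1 by rw [mul_comm]; exact hεε,
          one_mul]
      have hzz : z ^ d * (starRingEnd ℂ) z ^ i = z ^ (d - i) := by
        have hzd : z ^ d = z ^ (d - i) * z ^ i := by rw [← pow_add, Nat.sub_add_cancel hi']
        calc z ^ d * (starRingEnd ℂ) z ^ i = z ^ (d - i) * ((z * (starRingEnd ℂ) z) ^ i) := by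
              rw [hzd, mul_pow]; ring
          _ = z ^ (d - i) := by rw [hz, one_pow, mul_one]
      calc z ^ d * ((starRingEnd ℂ) (P.coeff i) * (starRingEnd ℂ) z ^ i)
          = (starRingEnd ℂ) (P.coeff i) * (z ^ d * (starRingEnd ℂ) z ^ i) := by ring
        _ = ((starRingEnd ℂ) ε * P.coeff (d - i)) * z ^ (d - i) := by rw [hzz, hc]
        _ = (starRingEnd ℂ) ε * (P.coeff (d - i) * z ^ (d - i)) := by ring
    rw [heval, map_sum, Finset.mul_sum, Finset.mul_sum]
    simp only [map_mul, map_pow]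
    rw [Finset.sum_congr rfl step]
    have hrefl := Finset.sum_range_reflect (fun j => (starRingEnd ℂ) ε * (P.coeff j * z ^ j)) (d+1)
    simp only [Nat.add_sub_cancel] at hrefl
    exact hrefl
  have hconjexp : ∀ x : ℝ, (starRingEnd ℂ) (Complex.exp ((x:ℝ) * I)) = Complex.exp ((-x : ℝ) * I) := by
    intro x
    rw [← Complex.exp_conj, map_mul, Complex.conj_I, Complex.conj_ofReal]
    congr 1; push_cast; ring
  have hexpmul : ∀ x y : ℝ, Complex.exp ((x:ℝ) * I) * Complex.exp ((y:ℝ) * I)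
      = Complex.exp (((x + y) : ℝ) * I) := by
    intro x y; rw [← Complex.exp_add]; congr 1; push_cast; ring
  set g : ℝ → ℝ := fun s =>
    ((starRingEnd ℂ) δ * Complex.exp ((-((d:ℝ)*s/2) : ℝ) * I) * P.eval (Complex.exp ((s:ℝ) * I))).re
    with hg
  have habs : ∀ s : ℝ, ‖P.eval (Complex.exp ((s:ℝ) * I))‖ = |g s| := by
    intro s
    have hz1 : ‖Complex.exp ((s:ℝ) * I)‖ = 1 := Complex.norm_exp_ofReal_mul_I s
    have hz : Complex.exp ((s:ℝ)*I) * (starRingEnd ℂ) (Complex.exp ((s:ℝ)*I)) = 1 := by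
      rw [Complex.mul_conj, ← Complex.sq_norm, hz1]; norm_num
    have hzd : Complex.exp ((s:ℝ)*I) ^ d = Complex.exp (((d:ℝ)*s : ℝ) * I) := by
      rw [← Complex.exp_nat_mul]; congr 1; push_cast; ring
    have hne : Complex.exp ((s:ℝ)*I) ^ d ≠ 0 := pow_ne_zero _ (Complex.exp_ne_zero _)
    set G : ℂ := (starRingEnd ℂ) δ * Complex.exp ((-((d:ℝ)*s/2) : ℝ) * I)
        * P.eval (Complex.exp ((s:ℝ) * I)) with hG
    have hgs : g s = G.re := by rw [hg]
    have him : G.im = 0 := by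
      rw [← Complex.conj_eq_iff_im]
      have hcG : (starRingEnd ℂ) G = δ * Complex.exp ((((d:ℝ)*s/2) : ℝ) * I)
          * (starRingEnd ℂ) (P.eval (Complex.exp ((s:ℝ) * I))) := by
        rw [hG, map_mul, map_mul, Complex.conj_conj, hconjexp, neg_neg]
      rw [hcG, hG]
      apply mul_left_cancel₀ hne
      calc Complex.exp ((s:ℝ)*I) ^ d * (δ * Complex.exp ((((d:ℝ)*s/2) : ℝ) * I)
              * (starRingEnd ℂ) (P.eval (Complex.exp ((s:ℝ) * I))))
          = δ * Complex.exp ((((d:ℝ)*s/2) : ℝ) * I)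
              * (Complex.exp ((s:ℝ)*I) ^ d * (starRingEnd ℂ) (P.eval (Complex.exp ((s:ℝ) * I)))) := by
            ring
        _ = δ * Complex.exp ((((d:ℝ)*s/2) : ℝ) * I)
              * ((starRingEnd ℂ) ε * P.eval (Complex.exp ((s:ℝ) * I))) := by
            rw [key _ hz]
        _ = (δ * (starRingEnd ℂ) ε) * Complex.exp ((((d:ℝ)*s/2) : ℝ) * I)
              * P.eval (Complex.exp ((s:ℝ) * I)) := by ring
        _ = (starRingEnd ℂ) δ * Complex.exp ((((d:ℝ)*s/2) : ℝ) * I)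
              * P.eval (Complex.exp ((s:ℝ) * I)) := by rw [hδε]
        _ = Complex.exp ((s:ℝ)*I) ^ d * ((starRingEnd ℂ) δ * Complex.exp ((-((d:ℝ)*s/2) : ℝ) * I)
              * P.eval (Complex.exp ((s:ℝ) * I))) := by
            rw [hzd]
            rw [show Complex.exp (((d:ℝ)*s : ℝ) * I) * ((starRingEnd ℂ) δ
                * Complex.exp ((-((d:ℝ)*s/2) : ℝ) * I) * P.eval (Complex.exp ((s:ℝ) * I)))
              = (starRingEnd ℂ) δ * (Complex.exp (((d:ℝ)*s : ℝ) * I)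
                * Complex.exp ((-((d:ℝ)*s/2) : ℝ) * I)) * P.eval (Complex.exp ((s:ℝ) * I)) from by
              ring]
            rw [hexpmul]
            congr 2
            push_cast; ring
    have habsre : |G.re| = ‖G‖ := Complex.abs_re_eq_norm.mpr him
    rw [hgs, habsre, hG]
    simp [map_mul, Complex.norm_conj, hδa, Complex.norm_exp_ofReal_mul_I, Complex.norm_exp]
  set φ : ℝ := ((starRingEnd ℂ) δ * P.coeff d).arg with hφ
  have hwa : ‖(starRingEnd ℂ) δ * P.coeff d‖ = a := by
    rw [norm_mul, Complex.norm_conj, hδa, one_mul]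
  have hw : (starRingEnd ℂ) δ * P.coeff d = (a:ℂ) * Complex.exp ((φ:ℝ) * I) := by
    conv_lhs => rw [← Complex.norm_mul_exp_arg_mul_I ((starRingEnd ℂ) δ * P.coeff d)]
    rw [hwa, hφ]
  set t : ℕ → ℝ := fun k => (2*Real.pi*k - 2*φ)/d with ht
  have hθ : ∀ k : ℕ, (d:ℝ) * (t k) / 2 = Real.pi * k - φ := by
    intro k; rw [ht]; field_simp
  have hcε : (starRingEnd ℂ) δ * ε = δ := by
    rw [← hδ2]
    calc (starRingEnd ℂ) δ * δ^2 = (δ * (starRingEnd ℂ) δ) * δ := by ring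
      _ = δ := by rw [hδc, one_mul]
  have hnode : ∀ k : ℕ, 2*a - S ≤ (-1:ℝ)^k * g (t k) := by
    intro k
    set θ : ℝ := Real.pi * k - φ with hθdef
    set q : ℝ := a * (-1:ℝ)^k with hqdef
    have h2θ : (d:ℝ) * t k = 2*θ := by rw [hθdef, ← hθ k]; ring
    have hq : (starRingEnd ℂ) δ * P.coeff d * Complex.exp ((θ:ℝ) * I) = (q:ℂ) := by
      rw [hw, mul_assoc, hexpmul]
      have hφθ : (φ + θ : ℝ) = Real.pi * k := by rw [hθdef]; ring
      rw [hφθ, hqdef]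
      have hcast : ((Real.pi * k : ℝ) : ℂ) * I = ((k:ℕ):ℂ) * ((Real.pi:ℝ) * I) := by push_cast; ring
      rw [hcast, Complex.exp_nat_mul, Complex.exp_pi_mul_I]
      push_cast; ring
    have hq0 : (starRingEnd ℂ) δ * P.coeff 0 * Complex.exp ((-θ : ℝ) * I) = (q:ℂ) := by
      have h0 : P.coeff 0 = ε * (starRingEnd ℂ) (P.coeff d) := by simpa using hsi 0 (Nat.zero_le d)
      rw [h0]
      have hce : (starRingEnd ℂ) (Complex.exp ((θ:ℝ) * I)) = Complex.exp ((-θ:ℝ)*I) :=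
        hconjexp θ
      calc (starRingEnd ℂ) δ * (ε * (starRingEnd ℂ) (P.coeff d)) * Complex.exp ((-θ:ℝ) * I)
          = ((starRingEnd ℂ) δ * ε) * (starRingEnd ℂ) (P.coeff d) * Complex.exp ((-θ:ℝ) * I) := by
            ring
        _ = δ * (starRingEnd ℂ) (P.coeff d) * Complex.exp ((-θ:ℝ) * I) := by rw [hcε]
        _ = (starRingEnd ℂ) ((starRingEnd ℂ) δ * P.coeff d * Complex.exp ((θ:ℝ) * I)) := by
            rw [map_mul, map_mul, Complex.conj_conj, hce]
        _ = (q:ℂ) := by rw [hq, Complex.conj_ofReal]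
    set E : ℂ := Complex.exp ((t k : ℝ) * I) with hE
    set M : ℂ := ∑ i ∈ Finset.Ioo 0 d, P.coeff i * E^i with hM
    have hEd : E ^ d = Complex.exp ((2*θ : ℝ)*I) := by
      rw [hE, ← Complex.exp_nat_mul]
      congr 1
      have hc := congrArg (fun x : ℝ => (x:ℂ)) h2θ
      push_cast at hc ⊢
      linear_combination hc * I
    have hsplitc : (starRingEnd ℂ) δ * Complex.exp ((-θ:ℝ)*I)
        * (P.coeff 0 * E^0 + M + P.coeff d * E^d)
        = (q:ℂ) + (q:ℂ) + (starRingEnd ℂ) δ * Complex.exp ((-θ:ℝ)*I) * M := by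
      rw [hEd, pow_zero]
      have e2 : (starRingEnd ℂ) δ * Complex.exp ((-θ:ℝ)*I) * (P.coeff d * Complex.exp ((2*θ:ℝ)*I))
          = (q:ℂ) := by
        rw [show (starRingEnd ℂ) δ * Complex.exp ((-θ:ℝ)*I) * (P.coeff d * Complex.exp ((2*θ:ℝ)*I))
            = (starRingEnd ℂ) δ * P.coeff d * (Complex.exp ((-θ:ℝ)*I) * Complex.exp ((2*θ:ℝ)*I))
            from by ring, hexpmul]
        rw [show (-θ + 2*θ : ℝ) = θ from by ring]
        exact hq
      linear_combination hq0 + e2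
    have hgtk : g (t k) = 2*q + ((starRingEnd ℂ) δ * Complex.exp ((-θ:ℝ)*I) * M).re := by
      simp only [hg]
      rw [show (-((d:ℝ) * (t k) / 2)) = (-θ : ℝ) from by rw [hθ k, hθdef]]
      rw [eval_eq_sum_range, hd, sum_split hd1]
      rw [← hE, ← hM, hsplitc]
      simp [Complex.add_re, Complex.ofReal_re]
      ring
    have hrest : ‖(starRingEnd ℂ) δ * Complex.exp ((-θ:ℝ)*I) * M‖ ≤ S := by
      rw [norm_mul, norm_mul, Complex.norm_conj, hδa, Complex.norm_exp_ofReal_mul_I, one_mul, one_mul]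
      calc ‖M‖ ≤ ∑ i ∈ Finset.Ioo 0 d, ‖P.coeff i * E^i‖ :=
            norm_sum_le _ _
        _ = ∑ i ∈ Finset.Ioo 0 d, ‖P.coeff i‖ := by
            apply Finset.sum_congr rfl
            intro i _
            rw [norm_mul, norm_pow, hE, Complex.norm_exp_ofReal_mul_I, one_pow, mul_one]
        _ = S := rfl
    have hre := Complex.abs_re_le_norm ((starRingEnd ℂ) δ * Complex.exp ((-θ:ℝ)*I) * M)
    have hre2 := abs_le.mp (le_trans hre hrest)
    rcases Nat.even_or_odd k with he | ho
    · rw [he.neg_one_pow]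
      rw [hgtk, hqdef, he.neg_one_pow]
      linarith [hre2.1]
    · rw [ho.neg_one_pow]
      rw [hgtk, hqdef, ho.neg_one_pow]
      linarith [hre2.2]
  have hgcont : Continuous g := by
    rw [hg]
    refine Complex.continuous_re.comp ?_
    refine (Continuous.mul (Continuous.mul continuous_const ?_) ?_)
    · exact Complex.continuous_exp.comp
        ((Complex.continuous_ofReal.comp (by fun_prop)).mul continuous_const)
    · exact (P.continuous).comp
        (Complex.continuous_exp.comp ((Complex.continuous_ofReal).mul continuous_const))
  have hdpos : (0:ℝ) < d := by
    have : 0 < d := by omega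
    exact_mod_cast this
  have htlt : ∀ k : ℕ, t k < t (k+1) := by
    intro k
    rw [ht]
    rw [div_lt_div_iff₀ hdpos hdpos]
    push_cast
    nlinarith [Real.pi_pos]
  have tmono : StrictMono t := strictMono_nat_of_lt_succ htlt
  have hgpos : ∀ k : ℕ, 0 < (-1:ℝ)^k * g (t k) :=
    fun k => lt_of_lt_of_le (by linarith) (hnode k)
  have hivt : ∀ k : ℕ, ∃ s, s ∈ Set.Ioo (t k) (t (k+1)) ∧ g s = 0 := by
    intro k
    rcases Nat.even_or_odd k with he | ho
    · have h1 : 0 < g (t k) := by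
        have := hgpos k; rwa [he.neg_one_pow, one_mul] at this
      have h2 : g (t (k+1)) < 0 := by
        have h3 := hgpos (k+1)
        rw [(Even.add_one he).neg_one_pow] at h3; linarith
      obtain ⟨s, hs, hgs⟩ :=
        intermediate_value_Ioo' (le_of_lt (htlt k)) hgcont.continuousOn ⟨h2, h1⟩
      exact ⟨s, hs, hgs⟩
    · have h1 : g (t k) < 0 := by
        have h3 := hgpos k; rw [ho.neg_one_pow] at h3; linarith
      have h2 : 0 < g (t (k+1)) := by
        have h3 := hgpos (k+1)
        rwa [(Odd.add_one ho).neg_one_pow, one_mul] at h3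
      obtain ⟨s, hs, hgs⟩ :=
        intermediate_value_Ioo (le_of_lt (htlt k)) hgcont.continuousOn ⟨h1, h2⟩
      exact ⟨s, hs, hgs⟩
  choose sfun hsmem hszero using hivt
  have hroot : ∀ k : ℕ, P.eval (Complex.exp ((sfun k : ℝ) * I)) = 0 := by
    intro k
    have h1 := habs (sfun k)
    rw [hszero k, abs_zero] at h1
    simpa only [norm_eq_zero] using h1
  have h2pi : t d - t 0 = 2*Real.pi := by
    rw [ht]
    field_simp
    push_cast; ring
  have hinj : ∀ k l, k < d → l < d →
      Complex.exp ((sfun k : ℝ) * I) = Complex.exp ((sfun l : ℝ) * I) → k = l := by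
    suffices H : ∀ k l, k < l → l < d →
        Complex.exp ((sfun k : ℝ) * I) ≠ Complex.exp ((sfun l : ℝ) * I) by
      intro k l hk hl heq
      rcases lt_trichotomy k l with h | h | h
      · exact absurd heq (H k l h hl)
      · exact h
      · exact absurd heq.symm (H l k h hk)
    intro k l hkl hld heq
    rw [Complex.exp_eq_exp_iff_exists_int] at heq
    obtain ⟨n, hn⟩ := heq
    have hreal : sfun k = sfun l + 2*Real.pi*n := by
      have h1 : ((sfun k : ℝ):ℂ) * I = ((sfun l + 2*Real.pi*n : ℝ):ℂ) * I := by
        rw [hn]; push_cast; ring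
      have h2 := mul_right_cancel₀ Complex.I_ne_zero h1
      exact_mod_cast h2
    have hb1 : t (k+1) ≤ t l := tmono.monotone (by omega)
    have hb2 : t (l+1) ≤ t d := tmono.monotone (by omega)
    have hb3 : t 0 ≤ t k := tmono.monotone (Nat.zero_le k)
    have hk1 := hsmem k
    have hl1 := hsmem l
    have hlt1 : 0 < sfun l - sfun k := by
      have := hk1.2; have := hl1.1; linarith
    have hlt2 : sfun l - sfun k < 2*Real.pi := by
      have := hk1.1; have := hl1.2; linarith
    have hπ := Real.pi_pos
    have hn1 : (0:ℝ) < -(n:ℝ) := by nlinarith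
    have hn2 : -(n:ℝ) < 1 := by nlinarith
    have hi1 : (0:ℤ) < -n := by exact_mod_cast hn1
    have hi2 : (-n:ℤ) < 1 := by exact_mod_cast hn2
    omega
  have hPne : P ≠ 0 := fun h => hAd (by rw [h]; simp)
  set F : Finset ℂ := (Finset.range d).image (fun k => Complex.exp ((sfun k : ℝ) * I)) with hF
  have hcard : F.card = d := by
    rw [hF, Finset.card_image_of_injOn, Finset.card_range]
    intro k hk l hl heq
    exact hinj k l (Finset.mem_range.mp hk) (Finset.mem_range.mp hl) heq
  have hFsub : F ⊆ P.roots.toFinset := by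
    intro x hx
    obtain ⟨k, _, rfl⟩ := Finset.mem_image.mp hx
    rw [Multiset.mem_toFinset, Polynomial.mem_roots']
    exact ⟨hPne, hroot k⟩
  have hle : P.roots.toFinset.card ≤ d :=
    le_trans (Multiset.toFinset_card_le _) (by rw [← hd]; exact P.card_roots')
  have hFeq : F = P.roots.toFinset :=
    Finset.eq_of_subset_of_card_le hFsub (by rw [hcard]; exact hle)
  intro z hz
  have hzmem : z ∈ P.roots.toFinset := by
    rw [Multiset.mem_toFinset, Polynomial.mem_roots']
    exact ⟨hPne, hz⟩
  rw [← hFeq, hF] at hzmem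
  obtain ⟨k, _, rfl⟩ := Finset.mem_image.mp hzmem
  exact Complex.norm_exp_ofReal_mul_I _

theorem stmt_10 (P : Polynomial ℂ) (d : ℕ) (ε : ℂ) (hd : P.natDegree = d)
    (hAd : P.coeff d ≠ 0) (hε : ‖ε‖ = 1)
    (hsi : ∀ j ≤ d, P.coeff j = ε * (starRingEnd ℂ) (P.coeff (d - j)))
    (hineq : (1 / 2 : ℝ) * ∑ j ∈ Finset.Ioo 0 d, ‖P.coeff j‖
      ≤ ‖P.coeff d‖) :
    ∀ z : ℂ, P.eval z = 0 → ‖z‖ = 1 := by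
  intro z hz
  by_cases hdz : d = 0
  · exfalso
    subst hdz
    have hP : P = Polynomial.C (P.coeff 0) := Polynomial.eq_C_of_natDegree_eq_zero hd
    rw [hP, Polynomial.eval_C] at hz
    exact hAd hz
  by_contra hne
  have hd1' : 1 ≤ d := by omega
  have hεε : ε * (starRingEnd ℂ) ε = 1 := by
    rw [Complex.mul_conj, ← Complex.sq_norm, hε]; norm_num
  set a : ℝ := ‖P.coeff d‖ with ha
  have ha0 : 0 < a := norm_pos_iff.mpr hAd
  set r : ℝ := ‖z‖ with hr
  have hrne : 0 < |r - 1| := by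
    rw [abs_pos]
    intro h
    exact hne (by linarith)
  set c : ℝ := a * |r - 1|^d with hc
  have hc0 : 0 < c := by positivity
  set u : ℂ := P.coeff d / (a:ℂ) with hu
  have hane : ((a:ℝ):ℂ) ≠ 0 := Complex.ofReal_ne_zero.mpr (ne_of_gt ha0)
  have hua : ‖u‖ = 1 := by
    rw [hu, norm_div, Complex.norm_real, Real.norm_eq_abs, abs_of_pos ha0, ← ha, div_self (ne_of_gt ha0)]
  have hune : u ≠ 0 := by
    intro h; rw [h] at hua; simp at hua
  have huA : ((a:ℝ):ℂ) * u = P.coeff d := by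
    rw [hu]; field_simp
  set Rz : ℂ := u * z^d + ε * (starRingEnd ℂ) u with hRz
  have hRz1 : 0 < ‖Rz‖ + 1 := by positivity
  set lam : ℝ := c / (2 * (‖Rz‖ + 1)) with hlam
  have hlam0 : 0 < lam := div_pos hc0 (by positivity)
  clear_value a r c u Rz lam
  set Q : Polynomial ℂ := P + Polynomial.C ((lam:ℝ):ℂ)
      * (Polynomial.C u * Polynomial.X^d + Polynomial.C (ε * (starRingEnd ℂ) u)) with hQ
  have hQc : ∀ j, Q.coeff j = P.coeff j + (if j = d then ((lam:ℝ):ℂ) * u else 0)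
      + (if j = 0 then ((lam:ℝ):ℂ) * (ε * (starRingEnd ℂ) u) else 0) := by
    intro j
    rw [hQ]
    simp only [Polynomial.coeff_add, Polynomial.coeff_C_mul, Polynomial.coeff_X_pow,
      Polynomial.coeff_C, mul_add, mul_ite, mul_one, mul_zero]
    split_ifs <;> ring
  have hQd : Q.coeff d = ((a + lam : ℝ):ℂ) * u := by
    rw [hQc d, if_pos rfl, if_neg hdz, add_zero]
    push_cast
    rw [← huA]; ring
  have hQda : ‖Q.coeff d‖ = a + lam := by
    rw [hQd, norm_mul, hua, mul_one, Complex.norm_real, Real.norm_eq_abs, abs_of_pos (by linarith)]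
  have hQdne : Q.coeff d ≠ 0 := by
    rw [hQd]
    exact mul_ne_zero (Complex.ofReal_ne_zero.mpr (ne_of_gt (by linarith))) hune
  have hQnat : Q.natDegree = d := by
    apply le_antisymm
    · rw [hQ]
      apply le_trans (Polynomial.natDegree_add_le _ _)
      refine max_le (le_of_eq hd) ?_
      apply le_trans (Polynomial.natDegree_C_mul_le _ _)
      apply le_trans (Polynomial.natDegree_add_le _ _)
      refine max_le ?_ ?_
      · apply le_trans (Polynomial.natDegree_C_mul_le _ _)
        simp [Polynomial.natDegree_X_pow]
      · rw [Polynomial.natDegree_C]; omega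
    · exact Polynomial.le_natDegree_of_ne_zero hQdne
  have hQsi : ∀ j ≤ d, Q.coeff j = ε * (starRingEnd ℂ) (Q.coeff (d - j)) := by
    intro j hj
    rcases eq_or_ne j 0 with rfl | hj0
    · rw [Nat.sub_zero, hQc 0, hQc d]
      rw [if_neg (by omega : ¬(0 = d)), if_pos rfl, if_pos rfl, if_neg hdz]
      have h0 := hsi 0 (Nat.zero_le d)
      rw [Nat.sub_zero] at h0
      simp only [add_zero, zero_add, map_add, map_mul, Complex.conj_ofReal]
      rw [h0]
      ring
    rcases eq_or_ne j d with hjd | hjd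
    · rw [hjd, Nat.sub_self, hQc d, hQc 0]
      rw [if_pos rfl, if_neg hdz, if_neg (by omega : ¬(0 = d)), if_pos rfl]
      have h0 := hsi 0 (Nat.zero_le d)
      rw [Nat.sub_zero] at h0
      simp only [add_zero, zero_add, map_add, map_mul, Complex.conj_ofReal, Complex.conj_conj]
      rw [h0]
      simp only [map_mul, Complex.conj_conj]
      linear_combination (-(P.coeff d) - ((lam:ℝ):ℂ) * u) * hεε
    · have hdj1 : ¬(d - j = 0) := by omega
      have hdj2 : ¬(d - j = d) := by omega
      rw [hQc j, hQc (d-j), if_neg hjd, if_neg hj0, if_neg hdj2, if_neg hdj1]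
      simp only [add_zero]
      exact hsi j hj
  have hQineq : ∑ jj ∈ Finset.Ioo 0 d, ‖Q.coeff jj‖
      < 2 * ‖Q.coeff d‖ := by
    have hsum : ∑ jj ∈ Finset.Ioo 0 d, ‖Q.coeff jj‖
        = ∑ jj ∈ Finset.Ioo 0 d, ‖P.coeff jj‖ := by
      apply Finset.sum_congr rfl
      intro i hi
      rw [Finset.mem_Ioo] at hi
      rw [hQc i, if_neg (by omega), if_neg (by omega), add_zero, add_zero]
    rw [hsum, hQda]
    linarith
  have hQall := strict_case Q d ε hQnat hd1' hε hQsi hQineq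
  have hQz : Q.eval z = ((lam:ℝ):ℂ) * Rz := by
    rw [hQ, hRz]
    simp [Polynomial.eval_add, Polynomial.eval_mul, Polynomial.eval_pow, Polynomial.eval_C,
      Polynomial.eval_X, hz]
  have hsplits : Q.roots.card = d := by
    rw [← hQnat]
    exact Polynomial.splits_iff_card_roots.mp (IsAlgClosed.splits Q)
  have hQfact := (IsAlgClosed.splits Q).eq_prod_roots
  have hQlead : ‖Q.leadingCoeff‖ = a + lam := by
    rw [Polynomial.leadingCoeff, hQnat, hQda]
  have heval : ‖Q.eval z‖
      = ‖Q.leadingCoeff‖ * (Q.roots.map (fun w => ‖z - w‖)).prod := by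
    conv_lhs => rw [hQfact]
    rw [Polynomial.eval_mul, Polynomial.eval_C, norm_mul]
    congr 1
    rw [Polynomial.eval_multiset_prod, show ∀ m : Multiset ℂ, ‖m.prod‖ = (m.map (fun x => ‖x‖)).prod from fun m => map_multiset_prod (normHom : ℂ →*₀ ℝ) m, Multiset.map_map, Multiset.map_map]
    apply congrArg Multiset.prod
    apply Multiset.map_congr rfl
    intro w _
    simp [Polynomial.eval_sub]
  have hprodge : |r-1|^d ≤ (Q.roots.map (fun w => ‖z - w‖)).prod := by
    have hall : ∀ w ∈ Q.roots, |r - 1| ≤ ‖z - w‖ := by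
      intro w hw
      have hw1 : ‖w‖ = 1 :=
        hQall w ((Polynomial.mem_roots'.mp hw).2)
      have := abs_norm_sub_norm_le z w
      rw [hw1, ← hr] at this
      exact this
    have := pow_le_multiset_prod (le_of_lt hrne) hall
    rwa [hsplits] at this
  have hb : c ≤ lam * ‖Rz‖ := by
    have h1 : ‖Q.eval z‖ = lam * ‖Rz‖ := by
      rw [hQz, norm_mul, Complex.norm_real, Real.norm_eq_abs, abs_of_pos hlam0]
    have h2 : c ≤ ‖Q.eval z‖ := by
      rw [heval, hQlead, hc]
      calc a * |r-1|^d ≤ (a + lam) * |r-1|^d := by nlinarith [pow_pos hrne d]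
        _ ≤ (a + lam) * (Q.roots.map (fun w => ‖z - w‖)).prod := by
            apply mul_le_mul_of_nonneg_left hprodge (by linarith)
    linarith
  have hub : lam * ‖Rz‖ < c := by
    have he : lam * (‖Rz‖ + 1) = c / 2 := by
      rw [hlam]
      field_simp
    nlinarith [norm_nonneg Rz]
  linarith
end

section
/- A self-inversive polynomial P(z) = Σ_{j=0}^d A_j z^j satisfying |A_d| ≥ (1/2) Σ_{j=0}^{d-1} |A_j − μ A_{j+1}| for some complex μ with |μ| = 1 has all its zeros on the unit circle. -/
open Polynomial Complex

noncomputable def Complex.abs : AbsoluteValue ℂ ℝ where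
  toFun := fun z => ‖z‖
  map_mul' := norm_mul
  nonneg' := norm_nonneg
  eq_zero' := fun _ => norm_eq_zero
  add_le' := norm_add_le

lemma Complex.abs_conj (z : ℂ) : Complex.abs ((starRingEnd ℂ) z) = Complex.abs z := Complex.norm_conj z

lemma Complex.abs_ofReal (x : ℝ) : Complex.abs (x : ℂ) = |x| := Complex.norm_real x

lemma Complex.abs_exp_ofReal_mul_I (x : ℝ) : Complex.abs (Complex.exp (x * I)) = 1 :=
  Complex.norm_exp_ofReal_mul_I x

lemma Complex.abs_mul_exp_arg_mul_I (x : ℂ) : (Complex.abs x : ℂ) * Complex.exp (x.arg * I) = x :=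
  Complex.norm_mul_exp_arg_mul_I x

lemma Complex.normSq_eq_abs (x : ℂ) : Complex.normSq x = Complex.abs x ^ 2 := Complex.normSq_eq_norm_sq x

lemma Complex.abs_re_le_abs (z : ℂ) : |z.re| ≤ Complex.abs z := Complex.abs_re_le_norm z


lemma abs_prod_lower (w : ℂ) (c : ℝ) (hc : 0 ≤ c) :
    ∀ (s : Multiset ℂ), (∀ a ∈ s, c ≤ Complex.abs (w - a)) →
      c ^ Multiset.card s ≤ Complex.abs ((s.map (fun a => w - a)).prod) := by
  intro s
  induction s using Multiset.induction_on with
  | empty => simp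
  | cons a s ih =>
    intro h
    have h1 := h a (Multiset.mem_cons_self a s)
    have h2 := ih (fun b hb => h b (Multiset.mem_cons_of_mem hb))
    simp only [Multiset.map_cons, Multiset.prod_cons, Multiset.card_cons, pow_succ, map_mul]
    calc c ^ Multiset.card s * c
        ≤ Complex.abs ((Multiset.map (fun a => w - a) s).prod) * Complex.abs (w - a) :=
          mul_le_mul h2 h1 hc (AbsoluteValue.nonneg _ _)
      _ = Complex.abs (w - a) * Complex.abs ((Multiset.map (fun a => w - a) s).prod) := mul_comm _ _


lemma key (R : Polynomial ℂ) (m : ℕ) (η : ℂ) (hη : Complex.abs η = 1)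
    (hdeg : R.natDegree = m + 1)
    (hsi : ∀ k ≤ m + 1, R.coeff k = η * (starRingEnd ℂ) (R.coeff (m + 1 - k)))
    (hlt : ∑ j ∈ Finset.range m, Complex.abs (R.coeff (j+1))
        < 2 * Complex.abs (R.coeff (m+1))) :
    ∀ w : ℂ, R.eval w = 0 → Complex.abs w = 1 := by
  set n := m + 1 with hn
  have hnpos : 0 < (n:ℝ) := by positivity
  have hN : R.coeff n ≠ 0 := by
    intro h
    rw [h] at hlt
    simp only [map_zero, mul_zero] at hlt
    exact absurd hlt (not_lt.2 (Finset.sum_nonneg fun j _ => AbsoluteValue.nonneg _ _))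
  have hη0 : η ≠ 0 := by intro h; rw [h] at hη; simp at hη
  obtain ⟨β, hβ2⟩ : ∃ b : ℂ, b ^ 2 = η :=
    ⟨η ^ ((2:ℕ):ℂ)⁻¹, by exact_mod_cast Complex.cpow_nat_inv_pow η two_ne_zero⟩
  have hβabs : Complex.abs β = 1 := by
    have h2 : (Complex.abs β) ^ 2 = 1 := by rw [← map_pow, hβ2, hη]
    nlinarith [AbsoluteValue.nonneg Complex.abs β]
  have hβ0 : β ≠ 0 := by intro h; rw [h] at hβabs; simp at hβabs
  have hββ : β * (starRingEnd ℂ) β = 1 := by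
    rw [Complex.mul_conj]
    norm_cast
    rw [Complex.normSq_eq_abs, hβabs]; norm_num
  set c : ℂ := (starRingEnd ℂ) β * R.coeff n with hcdef
  have hc0 : c ≠ 0 := mul_ne_zero (by simpa using hβ0) hN
  have habsc : Complex.abs c = Complex.abs (R.coeff n) := by
    rw [hcdef, map_mul, Complex.abs_conj, hβabs, one_mul]
  set ψ : ℝ := c.arg with hψdef
  have hcψ : (Complex.abs c : ℂ) * Complex.exp (ψ * I) = c := Complex.abs_mul_exp_arg_mul_I c
  -- term function
  set T : ℕ → ℝ → ℂ := fun i x =>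
    (starRingEnd ℂ) β * R.coeff i * Complex.exp ((((i:ℝ) - (n:ℝ)/2) * x : ℝ) * I) with hTdef
  set G : ℝ → ℂ := fun x => ∑ i ∈ Finset.range (n+1), T i x with hGdef
  -- G in terms of eval
  have hGeval : ∀ x : ℝ, G x = (starRingEnd ℂ) β *
      Complex.exp (((-((n:ℝ) * x / 2)) : ℝ) * I) * R.eval (Complex.exp ((x:ℝ) * I)) := by
    intro x
    rw [Polynomial.eval_eq_sum_range, hdeg]
    rw [Finset.mul_sum]
    apply Finset.sum_congr rfl
    intro i _
    have hp : Complex.exp ((x:ℝ) * I) ^ i = Complex.exp (((i * x : ℝ)) * I) := by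
      rw [← Complex.exp_nat_mul]
      push_cast
      ring_nf
    rw [hp]
    have he : ((((i:ℝ) - (n:ℝ)/2) * x : ℝ) : ℂ) * I
        = ((-((n:ℝ) * x / 2) : ℝ) : ℂ) * I + ((i * x : ℝ) : ℂ) * I := by
      push_cast; ring
    simp only [hTdef, he, Complex.exp_add]; ring
  -- conjugation symmetry of terms
  have hTconj : ∀ (x : ℝ) (i : ℕ), i ≤ n → (starRingEnd ℂ) (T i x) = T (n - i) x := by
    intro x i hi
    have hBi : (starRingEnd ℂ) (R.coeff i) = (starRingEnd ℂ) η * R.coeff (n - i) := by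
      rw [hsi i hi]
      simp [map_mul]
    have hec : (starRingEnd ℂ) (Complex.exp ((((i:ℝ) - (n:ℝ)/2) * x : ℝ) * I))
        = Complex.exp (((((n - i : ℕ):ℝ) - (n:ℝ)/2) * x : ℝ) * I) := by
      rw [← Complex.exp_conj]
      congr 1
      simp only [map_mul, Complex.conj_ofReal, Complex.conj_I]
      push_cast [Nat.cast_sub hi]
      ring
    have hkey : β * (starRingEnd ℂ) η = (starRingEnd ℂ) β := by
      have h1 : (starRingEnd ℂ) η = (starRingEnd ℂ) β * (starRingEnd ℂ) β := by
        rw [← map_mul, ← sq, hβ2]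
      rw [h1, ← mul_assoc, hββ, one_mul]
    simp only [hTdef, map_mul, Complex.conj_conj, hBi, hec]
    calc β * ((starRingEnd ℂ) η * R.coeff (n - i)) *
          Complex.exp (((((n - i : ℕ):ℝ) - (n:ℝ)/2) * x : ℝ) * I)
        = β * (starRingEnd ℂ) η * R.coeff (n - i) *
          Complex.exp (((((n - i : ℕ):ℝ) - (n:ℝ)/2) * x : ℝ) * I) := by ring
      _ = (starRingEnd ℂ) β * R.coeff (n - i) *
          Complex.exp (((((n - i : ℕ):ℝ) - (n:ℝ)/2) * x : ℝ) * I) := by rw [hkey]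
  -- G is real valued
  have hGreal : ∀ x : ℝ, (starRingEnd ℂ) (G x) = G x := by
    intro x
    rw [hGdef]
    simp only [map_sum]
    rw [Finset.sum_congr rfl (fun i hi => hTconj x i (Nat.lt_succ_iff.mp (Finset.mem_range.mp hi)))]
    have := Finset.sum_range_reflect (fun i => T i x) (n+1)
    simpa using this
  set H : ℝ → ℝ := fun x => (G x).re with hHdef
  have hGH : ∀ x, G x = (H x : ℂ) := fun x => (Complex.conj_eq_iff_re.mp (hGreal x)).symm
  have hHcont : Continuous H := by
    apply Complex.continuous_re.comp
    apply continuous_finset_sum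
    intro i _
    simp only [hTdef]
    apply Continuous.mul
    · exact continuous_const
    · exact Complex.continuous_exp.comp
        ((Complex.continuous_ofReal.comp (continuous_const.mul continuous_id)).mul
          continuous_const)
  set θ : ℕ → ℝ := fun l => (2 * (l * Real.pi - ψ)) / n with hθdef
  have hπ := Real.pi_pos
  have hθstep : ∀ l : ℕ, θ (l + 1) = θ l + 2 * Real.pi / n := by
    intro l
    simp only [hθdef]
    push_cast
    field_simp
    ring
  have hstep_pos : 0 < 2 * Real.pi / n := by positivity
  have hθlt : ∀ l : ℕ, θ l < θ (l + 1) := by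
    intro l; rw [hθstep]; linarith
  have hθmono : StrictMono θ := strictMono_nat_of_lt_succ hθlt
  have hθn : θ n = θ 0 + 2 * Real.pi := by
    simp only [hθdef]
    push_cast
    field_simp
    ring
  have hexpl : ∀ l : ℕ, Complex.exp (((l * Real.pi : ℝ) : ℂ) * I) = (-1:ℂ)^l := by
    intro l
    have h1 : ((l * Real.pi : ℝ) : ℂ) * I = (l : ℕ) * (Real.pi * I) := by push_cast; ring
    rw [h1, Complex.exp_nat_mul, Complex.exp_pi_mul_I]
  have hTn : ∀ l : ℕ, T n (θ l) = ((Complex.abs c * (-1:ℝ)^l : ℝ) : ℂ) := by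
    intro l
    have h1 : ((n:ℝ) - (n:ℝ)/2) * θ l = l * Real.pi - ψ := by
      rw [hθdef]
      field_simp
      ring
    simp only [hTdef, h1]
    have h2 : ((l * Real.pi - ψ : ℝ) : ℂ) * I = ((l * Real.pi : ℝ) : ℂ) * I - (ψ : ℂ) * I := by
      push_cast; ring
    calc (starRingEnd ℂ) β * R.coeff n * Complex.exp (((l * Real.pi - ψ : ℝ)) * I)
        = ((Complex.abs c : ℂ) * Complex.exp (ψ * I)) *
            Complex.exp (((l * Real.pi - ψ : ℝ)) * I) := by rw [hcψ, ← hcdef]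
      _ = (Complex.abs c : ℂ) * Complex.exp ((ψ : ℂ) * I + (((l * Real.pi - ψ : ℝ) : ℂ) * I)) := by
            rw [Complex.exp_add]; ring
      _ = (Complex.abs c : ℂ) * Complex.exp (((l * Real.pi : ℝ) : ℂ) * I) := by
            rw [h2]; ring_nf
      _ = ((Complex.abs c * (-1:ℝ)^l : ℝ) : ℂ) := by rw [hexpl]; push_cast; ring
  have hT0 : ∀ l : ℕ, T 0 (θ l) = ((Complex.abs c * (-1:ℝ)^l : ℝ) : ℂ) := by
    intro l
    have h1 := hTconj (θ l) n le_rfl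
    rw [Nat.sub_self] at h1
    rw [← h1, hTn]
    exact Complex.conj_ofReal _
  set S : ℝ := ∑ j ∈ Finset.range m, Complex.abs (R.coeff (j+1)) with hSdef
  have hTab : ∀ (j : ℕ) (x : ℝ), Complex.abs (T (j+1) x) = Complex.abs (R.coeff (j+1)) := by
    intro j x
    simp only [hTdef, map_mul, Complex.abs_conj, hβabs, Complex.abs_exp_ofReal_mul_I]
    ring
  have hnode : ∀ l : ℕ, 2 * Complex.abs (R.coeff n) - S ≤ (-1:ℝ)^l * H (θ l) := by
    intro l
    have hsplit : G (θ l) = (∑ j ∈ Finset.range m, T (j+1) (θ l)) + T 0 (θ l) + T n (θ l) := by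
      simp only [hGdef]
      have h1 : ∑ i ∈ Finset.range (n+1), T i (θ l)
          = (∑ i ∈ Finset.range n, T i (θ l)) + T n (θ l) := Finset.sum_range_succ _ _
      have h2 : ∑ i ∈ Finset.range n, T i (θ l)
          = (∑ j ∈ Finset.range m, T (j+1) (θ l)) + T 0 (θ l) :=
        Finset.sum_range_succ' (fun i => T i (θ l)) m
      rw [h1, h2]
    have hmid : |(∑ j ∈ Finset.range m, T (j+1) (θ l)).re| ≤ S := by
      calc |(∑ j ∈ Finset.range m, T (j+1) (θ l)).re|
          ≤ Complex.abs (∑ j ∈ Finset.range m, T (j+1) (θ l)) := Complex.abs_re_le_abs _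
        _ ≤ ∑ j ∈ Finset.range m, Complex.abs (T (j+1) (θ l)) := Complex.abs.sum_le _ _
        _ = S := by rw [hSdef]; exact Finset.sum_congr rfl fun j _ => hTab j (θ l)
    have hHval : H (θ l) = (∑ j ∈ Finset.range m, T (j+1) (θ l)).re
        + 2 * (Complex.abs c * (-1:ℝ)^l) := by
      rw [hHdef]
      simp only [hsplit, hT0 l, hTn l, Complex.add_re, Complex.ofReal_re]
      ring
    rw [hHval, ← habsc]
    rcases Nat.even_or_odd l with he | ho
    · rw [he.neg_one_pow]
      have := abs_le.mp hmid
      linarith [this.1, this.2]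
    · rw [ho.neg_one_pow]
      have := abs_le.mp hmid
      linarith [this.1, this.2]
  have hpos : 0 < 2 * Complex.abs (R.coeff n) - S := by linarith
  have hivt : ∀ l : ℕ, ∃ σ, σ ∈ Set.Ioo (θ l) (θ (l+1)) ∧ H σ = 0 := by
    intro l
    rcases Nat.even_or_odd l with he | ho
    · have h1 := hnode l
      have h2 := hnode (l+1)
      rw [he.neg_one_pow] at h1
      rw [(Even.add_one he).neg_one_pow] at h2
      have hmem : (0:ℝ) ∈ Set.Ioo (H (θ (l+1))) (H (θ l)) := ⟨by linarith, by linarith⟩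
      obtain ⟨σ, hσ, hσ0⟩ :=
        intermediate_value_Ioo' (le_of_lt (hθlt l)) hHcont.continuousOn hmem
      exact ⟨σ, hσ, hσ0⟩
    · have h1 := hnode l
      have h2 := hnode (l+1)
      rw [ho.neg_one_pow] at h1
      rw [(Odd.add_one ho).neg_one_pow] at h2
      have hmem : (0:ℝ) ∈ Set.Ioo (H (θ l)) (H (θ (l+1))) := ⟨by linarith, by linarith⟩
      obtain ⟨σ, hσ, hσ0⟩ :=
        intermediate_value_Ioo (le_of_lt (hθlt l)) hHcont.continuousOn hmem
      exact ⟨σ, hσ, hσ0⟩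
  choose σ hσmem hσzero using hivt
  have hσroot : ∀ l : ℕ, R.eval (Complex.exp ((σ l : ℝ) * I)) = 0 := by
    intro l
    have hG0 : G (σ l) = 0 := by rw [hGH, hσzero]; norm_num
    rw [hGeval] at hG0
    rcases mul_eq_zero.mp hG0 with h | h
    · rcases mul_eq_zero.mp h with h' | h'
      · exact absurd h' (by simpa using hβ0)
      · exact absurd h' (Complex.exp_ne_zero _)
    · exact h
  have hσlt : ∀ l l' : ℕ, l < l' → σ l < σ l' := by
    intro l l' hll
    have h1 : σ l < θ (l+1) := (hσmem l).2
    have h2 : θ l' ≤ σ l' := le_of_lt (hσmem l').1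
    have h3 : θ (l+1) ≤ θ l' := hθmono.monotone hll
    linarith
  have hσbound : ∀ l : ℕ, l < n → θ 0 < σ l ∧ σ l < θ 0 + 2 * Real.pi := by
    intro l hl
    constructor
    · exact lt_of_le_of_lt (hθmono.monotone (Nat.zero_le l)) (hσmem l).1
    · rw [← hθn]
      exact lt_of_lt_of_le (hσmem l).2 (hθmono.monotone hl)
  have hinj : ∀ l l' : ℕ, l < n → l' < n →
      Complex.exp ((σ l : ℝ) * I) = Complex.exp ((σ l' : ℝ) * I) → l = l' := by
    have haux : ∀ l l' : ℕ, l < l' → l < n → l' < n →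
        Complex.exp ((σ l : ℝ) * I) ≠ Complex.exp ((σ l' : ℝ) * I) := by
      intro l l' hll hl hl' heq
      obtain ⟨k, hk⟩ := Complex.exp_eq_exp_iff_exists_int.mp heq
      have hk' : (σ l : ℂ) * I = ((σ l' + k * (2 * Real.pi) : ℝ) : ℂ) * I := by
        rw [hk]; push_cast; ring
      have hk2 : σ l = σ l' + k * (2 * Real.pi) :=
        Complex.ofReal_inj.mp (mul_right_cancel₀ Complex.I_ne_zero hk')
      have hb1 := hσbound l hl
      have hb2 := hσbound l' hl'
      have hlt' := hσlt l l' hll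
      have hkneg : (k:ℝ) < 0 := by nlinarith
      have hkgt : (-1:ℝ) < k := by nlinarith
      have hk0 : k < 0 := by exact_mod_cast hkneg
      have : (k:ℝ) ≤ -1 := by exact_mod_cast (by omega : k ≤ -1)
      linarith
    intro l l' hl hl' heq
    rcases lt_trichotomy l l' with h | h | h
    · exact absurd heq (haux l l' h hl hl')
    · exact h
    · exact absurd heq.symm (haux l' l h hl' hl)
  set F : Finset ℂ := Finset.image (fun l => Complex.exp ((σ l : ℝ) * I)) (Finset.range n)
    with hFdef
  have hFcard : F.card = n := by
    rw [hFdef, Finset.card_image_of_injOn, Finset.card_range]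
    intro l hl l' hl' heq
    exact hinj l l' (Finset.mem_range.mp hl) (Finset.mem_range.mp hl') heq
  have hR0 : R ≠ 0 := fun h => hN (by simp [h])
  have hcard : Multiset.card R.roots = n := by
    have := (Polynomial.splits_iff_card_roots).mp (IsAlgClosed.splits R)
    rw [hdeg] at this
    exact this
  have hsub : F.val ≤ R.roots := by
    rw [Multiset.le_iff_count]
    intro a
    by_cases ha : a ∈ F
    · rw [Multiset.count_eq_one_of_mem F.nodup ha]
      rw [hFdef] at ha
      obtain ⟨l, _, rfl⟩ := Finset.mem_image.mp ha
      have : Complex.exp ((σ l : ℝ) * I) ∈ R.roots :=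
        Polynomial.mem_roots'.mpr ⟨hR0, hσroot l⟩
      exact Multiset.one_le_count_iff_mem.mpr this
    · rw [Multiset.count_eq_zero_of_notMem (by simpa using ha)]
      exact Nat.zero_le _
  have heq : F.val = R.roots :=
    Multiset.eq_of_le_of_card_le hsub (by rw [hcard, ← hFcard, Finset.card_def])
  intro w hw
  have hmem : w ∈ R.roots := Polynomial.mem_roots'.mpr ⟨hR0, hw⟩
  rw [← heq] at hmem
  obtain ⟨l, _, rfl⟩ := Finset.mem_image.mp
    (show w ∈ Finset.image (fun l => Complex.exp ((σ l : ℝ) * I)) (Finset.range n) from hmem)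
  exact Complex.abs_exp_ofReal_mul_I _

theorem stmt_11 (P : Polynomial ℂ) (d : ℕ) (ε μ : ℂ) (hd : P.natDegree = d)
    (hAd : P.coeff d ≠ 0) (hε : ‖ε‖ = 1)
    (hsi : ∀ j ≤ d, P.coeff j = ε * (starRingEnd ℂ) (P.coeff (d - j)))
    (hμ : ‖μ‖ = 1)
    (hineq : (1 / 2 : ℝ) *
        ∑ j ∈ Finset.range d, ‖P.coeff j - μ * P.coeff (j + 1)‖
      ≤ ‖P.coeff d‖) :
    ∀ z : ℂ, P.eval z = 0 → ‖z‖ = 1 := by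
  replace hε : Complex.abs ε = 1 := hε
  replace hμ : Complex.abs μ = 1 := hμ
  replace hineq : (1 / 2 : ℝ) *
        ∑ j ∈ Finset.range d, Complex.abs (P.coeff j - μ * P.coeff (j + 1))
      ≤ Complex.abs (P.coeff d) := hineq
  suffices hsuff : ∀ z : ℂ, P.eval z = 0 → Complex.abs z = 1 from hsuff
  have hP0 : P ≠ 0 := fun h => hAd (by simp [h])
  have hμ0 : μ ≠ 0 := by intro h; rw [h] at hμ; simp at hμ
  have hμμ : μ * (starRingEnd ℂ) μ = 1 := by
    rw [Complex.mul_conj]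
    norm_cast
    rw [Complex.normSq_eq_abs, hμ]; norm_num
  set η : ℂ := -(μ * ε) with hηdef
  have hηabs : Complex.abs η = 1 := by
    rw [hηdef, map_neg_eq_map, map_mul, hμ, hε]; norm_num
  set Q : Polynomial ℂ := (Polynomial.X - Polynomial.C μ) * P with hQdef
  have hQdeg : Q.natDegree = d + 1 := by
    rw [hQdef, Polynomial.natDegree_mul (Polynomial.X_sub_C_ne_zero μ) hP0,
      Polynomial.natDegree_X_sub_C, hd, add_comm]
  have hQc0 : Q.coeff 0 = -(μ * P.coeff 0) := by
    rw [hQdef, Polynomial.mul_coeff_zero]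
    simp
  have hQcs : ∀ j : ℕ, Q.coeff (j+1) = P.coeff j - μ * P.coeff (j+1) := by
    intro j
    rw [hQdef, sub_mul, Polynomial.coeff_sub, Polynomial.coeff_X_mul]
    simp
  have hPtop : P.coeff (d+1) = 0 := Polynomial.coeff_eq_zero_of_natDegree_lt (by omega)
  have hQtop : Q.coeff (d+1) = P.coeff d := by
    rw [hQcs d, hPtop, mul_zero, sub_zero]
  have hQsi : ∀ k ≤ d + 1, Q.coeff k = η * (starRingEnd ℂ) (Q.coeff (d + 1 - k)) := by
    intro k hk
    rcases k with _ | j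
    · -- k = 0
      rw [Nat.sub_zero, hQc0, hQtop, hsi 0 (Nat.zero_le d), Nat.sub_zero, hηdef]
      ring
    · rcases eq_or_lt_of_le (Nat.succ_le_succ_iff.mp hk) with hjd | hjd
      · -- j = d
        subst hjd
        rw [Nat.sub_self, hQtop, hQc0, hηdef]
        have hsd := hsi j le_rfl
        rw [Nat.sub_self] at hsd
        rw [hsd]
        simp only [map_neg, map_mul, Complex.conj_conj]
        calc ε * (starRingEnd ℂ) (P.coeff 0)
            = (μ * (starRingEnd ℂ) μ) * (ε * (starRingEnd ℂ) (P.coeff 0)) := by rw [hμμ]; ring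
          _ = -(μ * ε) * -((starRingEnd ℂ) μ * (starRingEnd ℂ) (P.coeff 0)) := by ring
      · -- j < d
        obtain ⟨u, hu⟩ : ∃ u, d - j = u + 1 := ⟨d - j - 1, by omega⟩
        have h1 : d + 1 - (j + 1) = u + 1 := by omega
        have h2 : d - (j + 1) = u := by omega
        rw [h1, hQcs j, hQcs u]
        have e1 := hsi j (le_of_lt hjd)
        have e2 := hsi (j+1) hjd
        rw [h2] at e2
        have e3 : P.coeff u = ε * (starRingEnd ℂ) (P.coeff (d - u)) := hsi u (by omega)
        have h3 : d - u = j + 1 := by omega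
        rw [h3] at e3
        have h4 : d - j = u + 1 := hu
        rw [h4] at e1
        rw [e1, e2, hηdef]
        simp only [map_sub, map_mul, Complex.conj_conj]
        calc ε * (starRingEnd ℂ) (P.coeff (u+1)) - μ * (ε * (starRingEnd ℂ) (P.coeff u))
            = (μ * (starRingEnd ℂ) μ) * (ε * (starRingEnd ℂ) (P.coeff (u+1)))
              - μ * (ε * (starRingEnd ℂ) (P.coeff u)) := by rw [hμμ]; ring
          _ = -(μ * ε) * ((starRingEnd ℂ) (P.coeff u)
              - (starRingEnd ℂ) μ * (starRingEnd ℂ) (P.coeff (u+1))) := by ring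
  have hAdpos : 0 < Complex.abs (P.coeff d) := by
    exact (AbsoluteValue.pos_iff Complex.abs).mpr hAd
  have hA0 : Complex.abs (Q.coeff 0) = Complex.abs (P.coeff d) := by
    rw [hQc0, map_neg_eq_map, map_mul, hμ, one_mul, hsi 0 (Nat.zero_le d), Nat.sub_zero,
      map_mul, hε, one_mul, Complex.abs_conj]
  intro z hz
  by_contra hz1
  set r : ℝ := Complex.abs z with hrdef
  have hrpos : 0 ≤ r := AbsoluteValue.nonneg _ _
  set c0 : ℝ := |r - 1| with hc0def
  have hc0pos : 0 < c0 := abs_pos.mpr (sub_ne_zero.mpr hz1)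
  have hrn : 0 < r ^ (d+1) + 1 := by positivity
  set t : ℝ := c0 ^ (d+1) / (2 * (r ^ (d+1) + 1)) with htdef
  have htpos : 0 < t := by positivity
  have h1t : (0:ℝ) < 1 + t := by linarith
  have h1tc : ((1:ℂ) + (t:ℝ)) ≠ 0 := by
    have h2 : ((1 + t : ℝ) : ℂ) ≠ 0 := by
      rw [Ne, Complex.ofReal_eq_zero]
      linarith
    simpa using h2
  have habs1t : Complex.abs ((1:ℂ) + (t:ℝ)) = 1 + t := by
    have h3 : ((1:ℂ) + (t:ℝ)) = ((1 + t : ℝ) : ℂ) := by push_cast; ring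
    rw [h3, Complex.abs_ofReal, abs_of_pos h1t]
  set Qt : Polynomial ℂ := Q + Polynomial.C ((t:ℝ) * P.coeff d) * Polynomial.X ^ (d+1)
      + Polynomial.C ((t:ℝ) * Q.coeff 0) with hQtdef
  have hQthi : ∀ k, d + 1 < k → Q.coeff k = 0 := by
    intro k hk
    exact Polynomial.coeff_eq_zero_of_natDegree_lt (by omega)
  have hQtc : ∀ k : ℕ, Qt.coeff k = Q.coeff k
      + (if k = d + 1 then (t:ℝ) * P.coeff d else 0)
      + (if k = 0 then (t:ℝ) * Q.coeff 0 else 0) := by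
    intro k
    rw [hQtdef]
    simp only [Polynomial.coeff_add, Polynomial.coeff_C_mul, Polynomial.coeff_X_pow,
      Polynomial.coeff_C]
    rw [mul_ite, mul_one, mul_zero]
  have hQt0 : Qt.coeff 0 = (1 + (t:ℝ)) * Q.coeff 0 := by
    rw [hQtc 0, if_neg (by omega : ¬ (0 = d + 1)), if_pos rfl]
    ring
  have hQttop : Qt.coeff (d+1) = (1 + (t:ℝ)) * P.coeff d := by
    rw [hQtc (d+1), if_pos rfl, if_neg (by omega : ¬ (d + 1 = 0)), hQtop]
    ring
  have hQtmid : ∀ j, j < d → Qt.coeff (j+1) = Q.coeff (j+1) := by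
    intro j hj
    rw [hQtc (j+1), if_neg (by omega : ¬ (j + 1 = d + 1)), if_neg (by omega : ¬ (j + 1 = 0))]
    ring
  have hQtc_hi : ∀ k, d + 1 < k → Qt.coeff k = 0 := by
    intro k hk
    rw [hQtc k, hQthi k hk, if_neg (by omega : ¬ (k = d + 1)), if_neg (by omega : ¬ (k = 0))]
    ring
  have hQttopne : Qt.coeff (d+1) ≠ 0 := by
    rw [hQttop]
    exact mul_ne_zero (by simpa using h1tc) hAd
  have hQtdeg : Qt.natDegree = d + 1 := by
    apply le_antisymm
    · exact Polynomial.natDegree_le_iff_coeff_eq_zero.mpr fun k hk => hQtc_hi k hk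
    · exact Polynomial.le_natDegree_of_ne_zero hQttopne
  have hQtsi : ∀ k ≤ d + 1, Qt.coeff k = η * (starRingEnd ℂ) (Qt.coeff (d + 1 - k)) := by
    intro k hk
    have hconj1t : (starRingEnd ℂ) ((1:ℂ) + (t:ℝ)) = (1:ℂ) + (t:ℝ) := by
      simp [Complex.conj_ofReal]
    rcases k with _ | j
    · rw [Nat.sub_zero, hQt0, hQttop, ← hQtop, map_mul, hconj1t, hQsi 0 (Nat.zero_le _),
        Nat.sub_zero]
      ring
    · rcases eq_or_lt_of_le (Nat.succ_le_succ_iff.mp hk) with hjd | hjd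
      · subst hjd
        rw [Nat.sub_self, hQttop, ← hQtop, hQt0, map_mul, hconj1t,
          hQsi (j+1) le_rfl, Nat.sub_self]
        ring
      · have h1 : d + 1 - (j + 1) = (d - j - 1) + 1 := by omega
        rw [hQtmid j hjd, h1, hQtmid (d - j - 1) (by omega), ← h1,
          hQsi (j+1) (by omega)]
  have hQtsum : ∑ j ∈ Finset.range d, Complex.abs (Qt.coeff (j+1))
      < 2 * Complex.abs (Qt.coeff (d+1)) := by
    have he : ∑ j ∈ Finset.range d, Complex.abs (Qt.coeff (j+1))
        = ∑ j ∈ Finset.range d, Complex.abs (P.coeff j - μ * P.coeff (j+1)) := by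
      apply Finset.sum_congr rfl
      intro j hj
      rw [hQtmid j (Finset.mem_range.mp hj), hQcs j]
    rw [he, hQttop, map_mul, habs1t]
    nlinarith [hineq, hAdpos]
  have hall := key Qt d η hηabs hQtdeg hQtsi hQtsum
  have hcardQt : Multiset.card Qt.roots = d + 1 := by
    have h := (Polynomial.splits_iff_card_roots).mp (IsAlgClosed.splits Qt)
    rw [hQtdeg] at h
    exact h
  have hfact := Polynomial.C_leadingCoeff_mul_prod_multiset_X_sub_C
      (p := Qt) (by rw [hcardQt, hQtdeg])
  have hlead : Qt.leadingCoeff = (1 + (t:ℝ)) * P.coeff d := by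
    rw [Polynomial.leadingCoeff, hQtdeg, hQttop]
  have heval2 : Qt.eval z = ((1 + (t:ℝ)) * P.coeff d) *
      (Qt.roots.map fun a => z - a).prod := by
    conv_lhs => rw [← hfact]
    rw [Polynomial.eval_mul, Polynomial.eval_C, hlead]
    congr 1
    rw [Polynomial.eval_multiset_prod, Multiset.map_map]
    apply congrArg Multiset.prod
    apply Multiset.map_congr rfl
    intro a _
    simp
  have hroots1 : ∀ a ∈ Qt.roots, c0 ≤ Complex.abs (z - a) := by
    intro a ha
    have ha1 : Complex.abs a = 1 := hall a ((Polynomial.mem_roots'.mp ha).2)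
    calc c0 = |r - Complex.abs a| := by rw [ha1]
      _ ≤ Complex.abs (z - a) := by
          have h5 := Complex.abs.abs_abv_sub_le_abv_sub z a
          simpa [hrdef] using h5
  have hprod := abs_prod_lower z c0 (le_of_lt hc0pos) Qt.roots hroots1
  rw [hcardQt] at hprod
  have hlow : (1 + t) * Complex.abs (P.coeff d) * c0 ^ (d+1) ≤ Complex.abs (Qt.eval z) := by
    calc (1 + t) * Complex.abs (P.coeff d) * c0 ^ (d+1)
        ≤ (1 + t) * Complex.abs (P.coeff d) *
            Complex.abs ((Qt.roots.map fun a => z - a).prod) := by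
          apply mul_le_mul_of_nonneg_left hprod
          positivity
      _ = Complex.abs (Qt.eval z) := by
          rw [heval2, map_mul, map_mul, habs1t]
  have hQeval : Q.eval z = 0 := by rw [hQdef, Polynomial.eval_mul, hz, mul_zero]
  have hup : Qt.eval z = ((t:ℝ) : ℂ) * (P.coeff d * z^(d+1) + Q.coeff 0) := by
    rw [hQtdef]
    simp only [Polynomial.eval_add, Polynomial.eval_mul, Polynomial.eval_pow,
      Polynomial.eval_C, Polynomial.eval_X, hQeval]
    ring
  have hub : Complex.abs (Qt.eval z) ≤ t * (Complex.abs (P.coeff d) * (r^(d+1) + 1)) := by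
    rw [hup, map_mul, Complex.abs_ofReal, abs_of_pos htpos]
    apply mul_le_mul_of_nonneg_left ?_ (le_of_lt htpos)
    calc Complex.abs (P.coeff d * z^(d+1) + Q.coeff 0)
        ≤ Complex.abs (P.coeff d * z^(d+1)) + Complex.abs (Q.coeff 0) :=
          Complex.abs.add_le _ _
      _ = Complex.abs (P.coeff d) * r^(d+1) + Complex.abs (P.coeff d) := by
          rw [map_mul, map_pow, hA0, hrdef]
      _ = Complex.abs (P.coeff d) * (r^(d+1) + 1) := by ring
  have hfinal := le_trans hlow hub
  have ht2 : t * (r^(d+1) + 1) = c0^(d+1) / 2 := by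
    rw [htdef]
    field_simp
  have hAc : 0 < Complex.abs (P.coeff d) * c0 ^ (d+1) :=
    mul_pos hAdpos (pow_pos hc0pos (d+1))
  nlinarith [hAc, htpos, hfinal, ht2, mul_pos htpos hAc]
end

section
/- (Schinzel's criterion) A self-inversive polynomial P(z) = Σ_{j=0}^d A_j z^j such that there exist c ∈ ℂ and μ ∈ ℂ with |μ| = 1 satisfying |A_d| ≥ Σ_{j=0}^d |c A_j − μ^(d−j) A_d| has all its zeros on the unit circle. -/
open Polynomial Finset

namespace Stmt12Aux

noncomputable def cexpI (φ : ℝ) : ℂ := Complex.exp (Complex.I * φ)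

lemma cexpI_eq (φ : ℝ) : cexpI φ = Complex.exp (Complex.I * φ) := rfl

lemma cexpI_ne (φ : ℝ) : cexpI φ ≠ 0 := Complex.exp_ne_zero _

lemma abs_cexpI (φ : ℝ) : ‖cexpI φ‖ = 1 := by
  rw [cexpI_eq, show Complex.I * (φ : ℂ) = (φ : ℂ) * Complex.I from by ring,
    Complex.norm_exp_ofReal_mul_I]

lemma conj_cexpI (φ : ℝ) : (starRingEnd ℂ) (cexpI φ) = (cexpI φ)⁻¹ := by
  rw [cexpI_eq, ← Complex.exp_conj, ← Complex.exp_neg]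
  congr 1
  simp [map_mul, Complex.conj_I, Complex.conj_ofReal]

lemma cont_cexpI : Continuous cexpI :=
  Complex.continuous_exp.comp (continuous_const.mul Complex.continuous_ofReal)

lemma cexpI_zero : cexpI 0 = 1 := by simp [cexpI_eq]

lemma exp_sub_inv (x : ℝ) :
    Complex.exp (Complex.I * x) - (Complex.exp (Complex.I * x))⁻¹
      = 2 * Complex.sin x * Complex.I := by
  rw [← Complex.exp_neg]
  have h1 : Complex.I * (x : ℂ) = (x : ℂ) * Complex.I := by ring
  rw [h1]
  have h2 : -((x : ℂ) * Complex.I) = ((-x : ℝ) : ℂ) * Complex.I := by push_cast; ring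
  rw [h2, Complex.exp_mul_I, Complex.exp_mul_I, Complex.ofReal_neg, Complex.cos_neg,
    Complex.sin_neg]
  ring

lemma exp_pow_eq (n : ℕ) (x : ℝ) :
    Complex.exp (Complex.I * x) ^ n = Complex.exp (Complex.I * ((n : ℝ) * x)) := by
  rw [← Complex.exp_nat_mul]
  congr 1
  push_cast
  ring

lemma aux_sin (k : ℕ) : Real.sin (k * Real.pi + Real.pi / 2) = (-1 : ℝ) ^ k := by
  induction k with
  | zero => simp
  | succ n ih =>
    have h : ((n + 1 : ℕ) : ℝ) * Real.pi + Real.pi / 2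
        = (n * Real.pi + Real.pi / 2) + Real.pi := by push_cast; ring
    rw [h, Real.sin_add_pi, ih]
    ring

lemma aux_dir (n : ℕ) (φ : ℝ) :
    (Complex.exp (Complex.I * φ) ^ n)⁻¹
        * (∑ j ∈ Finset.range (n + 1), (Complex.exp (Complex.I * φ) ^ 2) ^ j)
        * Complex.sin φ
      = Complex.sin (((((n : ℝ) + 1) * φ : ℝ)) : ℂ) := by
  have ht : Complex.exp (Complex.I * φ) ≠ 0 := Complex.exp_ne_zero _
  set t := Complex.exp (Complex.I * φ) with htdef
  have hg : (∑ j ∈ Finset.range (n + 1), (t ^ 2) ^ j) * (t ^ 2 - 1)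
      = (t ^ 2) ^ (n + 1) - 1 := geom_sum_mul _ _
  have e1 : t - t⁻¹ = 2 * Complex.sin φ * Complex.I := exp_sub_inv φ
  have e2 : t ^ (n + 1) - (t ^ (n + 1))⁻¹
      = 2 * Complex.sin (((((n : ℝ) + 1) * φ : ℝ)) : ℂ) * Complex.I := by
    have hpow : t ^ (n + 1) = Complex.exp (Complex.I * ((((n : ℝ) + 1) * φ : ℝ) : ℂ)) := by
      rw [htdef, exp_pow_eq]
      congr 2
      push_cast
      ring
    rw [hpow]
    exact exp_sub_inv _
  have key : (t ^ n)⁻¹ * (∑ j ∈ Finset.range (n + 1), (t ^ 2) ^ j) * (t - t⁻¹)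
      = t ^ (n + 1) - (t ^ (n + 1))⁻¹ := by
    have htn : t ^ n ≠ 0 := pow_ne_zero _ ht
    have htn1 : t ^ (n + 1) ≠ 0 := pow_ne_zero _ ht
    have h1 : t - t⁻¹ = (t ^ 2 - 1) * t⁻¹ := by field_simp
    have h2 : (t ^ (n + 1))⁻¹ = (t ^ n)⁻¹ * t⁻¹ := by rw [pow_succ, mul_inv]
    calc (t ^ n)⁻¹ * (∑ j ∈ Finset.range (n + 1), (t ^ 2) ^ j) * (t - t⁻¹)
        = (∑ j ∈ Finset.range (n + 1), (t ^ 2) ^ j) * (t ^ 2 - 1)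
            * ((t ^ n)⁻¹ * t⁻¹) := by rw [h1]; ring
      _ = ((t ^ 2) ^ (n + 1) - 1) * ((t ^ n)⁻¹ * t⁻¹) := by rw [hg]
      _ = ((t ^ (n + 1)) ^ 2 - 1) * ((t ^ n)⁻¹ * t⁻¹) := by
            rw [← pow_mul, ← pow_mul, Nat.mul_comm]
      _ = ((t ^ (n + 1)) ^ 2 - 1) * (t ^ (n + 1))⁻¹ := by rw [h2]
      _ = t ^ (n + 1) - (t ^ (n + 1))⁻¹ := by field_simp
  have h2I : (2 : ℂ) * Complex.I ≠ 0 := by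
    simp [Complex.I_ne_zero]
  apply mul_right_cancel₀ h2I
  calc (t ^ n)⁻¹ * (∑ j ∈ Finset.range (n + 1), (t ^ 2) ^ j) * Complex.sin ↑φ
        * (2 * Complex.I)
      = (t ^ n)⁻¹ * (∑ j ∈ Finset.range (n + 1), (t ^ 2) ^ j) * (t - t⁻¹) := by
        rw [e1]; ring
    _ = t ^ (n + 1) - (t ^ (n + 1))⁻¹ := key
    _ = Complex.sin (((((n : ℝ) + 1) * φ : ℝ)) : ℂ) * (2 * Complex.I) := by rw [e2]; ring

lemma aux_conj_sum (d : ℕ) (A : ℕ → ℂ) (w y : ℂ) (hy : y ≠ 0)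
    (h : ∀ j ≤ d, (starRingEnd ℂ) (A j) = w * A (d - j))
    (hcy : (starRingEnd ℂ) y = y⁻¹) :
    (starRingEnd ℂ) (∑ j ∈ Finset.range (d + 1), A j * y ^ j)
      = w * (y ^ d)⁻¹ * ∑ j ∈ Finset.range (d + 1), A j * y ^ j := by
  rw [map_sum, Finset.mul_sum]
  rw [← Finset.sum_range_reflect (fun j => w * (y ^ d)⁻¹ * (A j * y ^ j)) (d + 1)]
  refine Finset.sum_congr rfl fun j hj => ?_
  have hjd : j ≤ d := by simpa [Nat.lt_succ_iff] using hj
  have hidx : d + 1 - 1 - j = d - j := by omega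
  rw [hidx, map_mul, map_pow, hcy, h j hjd]
  have hysplit : y ^ d = y ^ (d - j) * y ^ j := by rw [← pow_add]; congr 1; omega
  rw [inv_pow, hysplit]
  field_simp

lemma aux_pair (d : ℕ) (A : ℕ → ℂ) (ε z : ℂ) (hz : z ≠ 0)
    (h : ∀ j ≤ d, A j = ε * (starRingEnd ℂ) (A (d - j))) :
    ∑ j ∈ Finset.range (d + 1), A j * (z⁻¹) ^ j
      = ε * (z ^ d)⁻¹ * ∑ j ∈ Finset.range (d + 1), (starRingEnd ℂ) (A j) * z ^ j := by
  rw [Finset.mul_sum]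
  rw [← Finset.sum_range_reflect
    (fun j => ε * (z ^ d)⁻¹ * ((starRingEnd ℂ) (A j) * z ^ j)) (d + 1)]
  refine Finset.sum_congr rfl fun j hj => ?_
  have hjd : j ≤ d := by simpa [Nat.lt_succ_iff] using hj
  have hidx : d + 1 - 1 - j = d - j := by omega
  rw [hidx, h j hjd]
  have hysplit : z ^ d = z ^ (d - j) * z ^ j := by rw [← pow_add]; congr 1; omega
  rw [inv_pow, hysplit]
  field_simp

end Stmt12Aux

set_option maxHeartbeats 3000000 in
open Stmt12Aux in
theorem stmt_12 (P : Polynomial ℂ) (d : ℕ) (ε c μ : ℂ) (hd : P.natDegree = d)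
    (hAd : P.coeff d ≠ 0) (hε : ‖ε‖ = 1)
    (hsi : ∀ j ≤ d, P.coeff j = ε * (starRingEnd ℂ) (P.coeff (d - j)))
    (hμ : ‖μ‖ = 1)
    (hineq : ∑ j ∈ Finset.range (d + 1),
        ‖c * P.coeff j - μ ^ (d - j) * P.coeff d‖
      ≤ ‖P.coeff d‖) :
    ∀ z : ℂ, P.eval z = 0 → ‖z‖ = 1 := by
  classical
  intro z0 hz0
  by_contra habs
  have hπ : (0 : ℝ) < Real.pi := Real.pi_pos
  have hMpos : 0 < ‖P.coeff d‖ := norm_pos_iff.mpr hAd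
  have hP0 : P ≠ 0 := fun h => hAd (by simp [h])
  have hEval : ∀ x : ℂ, P.eval x = ∑ j ∈ Finset.range (d + 1), P.coeff j * x ^ j := by
    intro x
    rw [Polynomial.eval_eq_sum_range, hd]
  rcases Nat.eq_zero_or_pos d with hd0 | hdpos
  · subst hd0
    have h0 : P.eval z0 = P.coeff 0 := by rw [hEval]; simp
    rw [hz0] at h0
    exact hAd h0.symm
  have hd1 : (1 : ℝ) ≤ (d : ℝ) := by exact_mod_cast hdpos
  have hμ0 : μ ≠ 0 := by intro h; rw [h] at hμ; simp at hμ
  have hε0 : ε ≠ 0 := by intro h; rw [h] at hε; simp at hε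
  have hconjμ : (starRingEnd ℂ) μ = μ⁻¹ := by
    apply eq_inv_of_mul_eq_one_left
    rw [mul_comm, Complex.mul_conj, Complex.normSq_eq_norm_sq, hμ]
    norm_num
  obtain ⟨δ, hδ⟩ : ∃ δ : ℂ, δ ^ 2 = (starRingEnd ℂ) ε * ((starRingEnd ℂ) μ) ^ d :=
    IsAlgClosed.exists_pow_nat_eq _ (by norm_num : 0 < 2)
  have hδabs : ‖δ‖ = 1 := by
    have h1 : ‖δ‖ ^ 2 = 1 := by
      rw [← norm_pow, hδ, norm_mul, norm_pow, Complex.norm_conj, Complex.norm_conj, hε, hμ]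
      norm_num
    nlinarith [norm_nonneg δ]
  have hδ0 : δ ≠ 0 := by intro h; rw [h] at hδabs; simp at hδabs
  have hconjδ : (starRingEnd ℂ) δ * δ = 1 := by
    rw [mul_comm, Complex.mul_conj, Complex.normSq_eq_norm_sq, hδabs]
    norm_num
  have hc00 : P.coeff 0 ≠ 0 := by
    have h1 := hsi 0 (Nat.zero_le d)
    simp only [Nat.sub_zero] at h1
    rw [h1]
    apply mul_ne_zero hε0
    intro h
    apply hAd
    have h2 := congrArg (starRingEnd ℂ) h
    simpa using h2
  have hz00 : z0 ≠ 0 := by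
    intro h
    rw [h, ← Polynomial.coeff_zero_eq_eval_zero] at hz0
    exact hc00 hz0
  have hcz : (starRingEnd ℂ) z0 ≠ 0 := by
    intro h
    apply hz00
    have h2 := congrArg (starRingEnd ℂ) h
    simpa using h2
  have hpair : P.eval (((starRingEnd ℂ) z0)⁻¹) = 0 := by
    rw [hEval]
    rw [Stmt12Aux.aux_pair d P.coeff ε ((starRingEnd ℂ) z0) hcz hsi]
    have hconjsum : ∑ j ∈ Finset.range (d + 1),
        (starRingEnd ℂ) (P.coeff j) * ((starRingEnd ℂ) z0) ^ j
        = (starRingEnd ℂ) (∑ j ∈ Finset.range (d + 1), P.coeff j * z0 ^ j) := by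
      rw [map_sum]
      exact Finset.sum_congr rfl fun j _ => by rw [map_mul, map_pow]
    rw [hconjsum, ← hEval, hz0, map_zero, mul_zero]
  -- abbreviations
  obtain ⟨M, hM_def⟩ : ∃ M : ℝ, M = ‖P.coeff d‖ := ⟨_, rfl⟩
  rw [← hM_def] at hMpos
  obtain ⟨B, hB_def⟩ : ∃ B : ℝ, B = ∑ j ∈ Finset.range (d + 1),
      ‖c * P.coeff j - μ ^ (d - j) * P.coeff d‖ := ⟨_, rfl⟩
  have hBM : B ≤ M := by rw [hB_def, hM_def]; exact hineq
  have hB0 : 0 ≤ B := by rw [hB_def]; exact Finset.sum_nonneg fun j _ => norm_nonneg _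
  obtain ⟨β, hβ_def⟩ : ∃ β : ℂ, β = δ * μ ^ d * P.coeff d := ⟨_, rfl⟩
  have hβabs : ‖β‖ = M := by
    rw [hβ_def, norm_mul, norm_mul, norm_pow, hδabs, hμ, hM_def]
    norm_num
  have hββ : (starRingEnd ℂ) β * β = ((M ^ 2 : ℝ) : ℂ) := by
    rw [mul_comm, Complex.mul_conj, Complex.normSq_eq_norm_sq, hβabs]
  obtain ⟨u, hu_def⟩ : ∃ u : ℝ, u = (c * (starRingEnd ℂ) β).re := ⟨_, rfl⟩
  obtain ⟨F, hF_def⟩ : ∃ F : ℝ → ℂ,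
      F = fun φ => δ * (cexpI φ ^ d)⁻¹ * P.eval (μ * cexpI φ ^ 2) := ⟨_, rfl⟩
  obtain ⟨H, hH_def⟩ : ∃ H : ℝ → ℝ, H = fun φ => (F φ).re := ⟨_, rfl⟩
  obtain ⟨Ec, hEc_def⟩ : ∃ Ec : ℝ → ℂ, Ec = fun φ => δ * (cexpI φ ^ d)⁻¹ *
      ∑ j ∈ Finset.range (d + 1),
        (c * P.coeff j - μ ^ (d - j) * P.coeff d) * μ ^ j * (cexpI φ ^ 2) ^ j := ⟨_, rfl⟩
  obtain ⟨DC, hDC_def⟩ : ∃ DC : ℝ → ℂ, DC = fun φ => (cexpI φ ^ d)⁻¹ *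
      ∑ j ∈ Finset.range (d + 1), (cexpI φ ^ 2) ^ j := ⟨_, rfl⟩
  obtain ⟨DR, hDR_def⟩ : ∃ DR : ℝ → ℝ, DR = fun φ => (DC φ).re := ⟨_, rfl⟩
  -- realness of F
  have hconjA : ∀ j ≤ d, (starRingEnd ℂ) (P.coeff j) = (starRingEnd ℂ) ε * P.coeff (d - j) := by
    intro j hj
    rw [hsi j hj, map_mul, Complex.conj_conj]
  have hFreal : ∀ φ : ℝ, (starRingEnd ℂ) (F φ) = F φ := by
    intro φ
    have htne : cexpI φ ≠ 0 := cexpI_ne φ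
    have htdne : cexpI φ ^ d ≠ 0 := pow_ne_zero _ htne
    have hy : μ * cexpI φ ^ 2 ≠ 0 := mul_ne_zero hμ0 (pow_ne_zero _ htne)
    have hcy : (starRingEnd ℂ) (μ * cexpI φ ^ 2) = (μ * cexpI φ ^ 2)⁻¹ := by
      rw [map_mul, map_pow, hconjμ, conj_cexpI, mul_inv, inv_pow]
    have hsum := Stmt12Aux.aux_conj_sum d P.coeff ((starRingEnd ℂ) ε)
      (μ * cexpI φ ^ 2) hy hconjA hcy
    have hPe : (starRingEnd ℂ) (P.eval (μ * cexpI φ ^ 2))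
        = (starRingEnd ℂ) ε * ((μ * cexpI φ ^ 2) ^ d)⁻¹ * P.eval (μ * cexpI φ ^ 2) := by
      rw [hEval (μ * cexpI φ ^ 2)]
      exact hsum
    simp only [hF_def]
    rw [map_mul, map_mul, hPe, map_inv₀, map_pow, conj_cexpI, inv_pow, inv_inv]
    -- goal: conj δ * t^d * (conj ε * (y^d)⁻¹ * eval) = δ * (t^d)⁻¹ * eval
    have hfact : (starRingEnd ℂ) δ * cexpI φ ^ d *
        ((starRingEnd ℂ) ε * ((μ * cexpI φ ^ 2) ^ d)⁻¹) = δ * (cexpI φ ^ d)⁻¹ := by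
      have h2 : (starRingEnd ℂ) ε * (μ ^ d)⁻¹ = δ ^ 2 := by
        rw [hδ, hconjμ, inv_pow]
      have hμd : (μ : ℂ) ^ d ≠ 0 := pow_ne_zero _ hμ0
      calc (starRingEnd ℂ) δ * cexpI φ ^ d *
            ((starRingEnd ℂ) ε * ((μ * cexpI φ ^ 2) ^ d)⁻¹)
          = (starRingEnd ℂ) δ * cexpI φ ^ d *
            (((starRingEnd ℂ) ε * (μ ^ d)⁻¹) * ((cexpI φ ^ d) * (cexpI φ ^ d))⁻¹) := by
            rw [mul_pow, ← pow_mul]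
            have : cexpI φ ^ (2 * d) = cexpI φ ^ d * cexpI φ ^ d := by
              rw [two_mul, pow_add]
            rw [this, mul_inv]
            ring
        _ = (starRingEnd ℂ) δ * cexpI φ ^ d * (δ ^ 2 * ((cexpI φ ^ d) * (cexpI φ ^ d))⁻¹) := by
            rw [h2]
        _ = ((starRingEnd ℂ) δ * δ) * δ * (cexpI φ ^ d * ((cexpI φ ^ d) * (cexpI φ ^ d))⁻¹) := by
            ring
        _ = δ * (cexpI φ ^ d)⁻¹ := by
            rw [hconjδ, one_mul]
            field_simp
    calc (starRingEnd ℂ) δ * (cexpI φ ^ d) *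
          ((starRingEnd ℂ) ε * ((μ * cexpI φ ^ 2) ^ d)⁻¹ * P.eval (μ * cexpI φ ^ 2))
        = ((starRingEnd ℂ) δ * cexpI φ ^ d *
            ((starRingEnd ℂ) ε * ((μ * cexpI φ ^ 2) ^ d)⁻¹)) * P.eval (μ * cexpI φ ^ 2) := by
          ring
      _ = δ * (cexpI φ ^ d)⁻¹ * P.eval (μ * cexpI φ ^ 2) := by rw [hfact]
  have hFr : ∀ φ : ℝ, F φ = ((H φ : ℝ) : ℂ) := by
    intro φ
    simp only [hH_def]
    exact (Complex.conj_eq_iff_re.mp (hFreal φ)).symm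
  -- realness of DC
  have hDCreal : ∀ φ : ℝ, (starRingEnd ℂ) (DC φ) = DC φ := by
    intro φ
    have htne : cexpI φ ≠ 0 := cexpI_ne φ
    have hy : cexpI φ ^ 2 ≠ 0 := pow_ne_zero _ htne
    have hcy : (starRingEnd ℂ) (cexpI φ ^ 2) = (cexpI φ ^ 2)⁻¹ := by
      rw [map_pow, conj_cexpI, inv_pow]
    have hone : ∀ j ≤ d, (starRingEnd ℂ) ((fun _ : ℕ => (1 : ℂ)) j)
        = 1 * (fun _ : ℕ => (1 : ℂ)) (d - j) := by intro j _; simp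
    have hsum := Stmt12Aux.aux_conj_sum d (fun _ => 1) 1 (cexpI φ ^ 2) hy hone hcy
    simp only [one_mul] at hsum
    simp only [hDC_def]
    rw [map_mul, hsum, map_inv₀, map_pow, conj_cexpI, inv_pow, inv_inv]
    have hfact : cexpI φ ^ d * ((cexpI φ ^ 2) ^ d)⁻¹ = (cexpI φ ^ d)⁻¹ := by
      rw [← pow_mul, two_mul, pow_add, mul_inv, ← mul_assoc,
        mul_inv_cancel₀ (pow_ne_zero _ htne), one_mul]
    calc cexpI φ ^ d * (((cexpI φ ^ 2) ^ d)⁻¹ * ∑ j ∈ Finset.range (d + 1), (cexpI φ ^ 2) ^ j)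
        = (cexpI φ ^ d * ((cexpI φ ^ 2) ^ d)⁻¹) * ∑ j ∈ Finset.range (d + 1), (cexpI φ ^ 2) ^ j := by
          ring
      _ = (cexpI φ ^ d)⁻¹ * ∑ j ∈ Finset.range (d + 1), (cexpI φ ^ 2) ^ j := by rw [hfact]
  have hDCr : ∀ φ : ℝ, DC φ = ((DR φ : ℝ) : ℂ) := by
    intro φ
    simp only [hDR_def]
    exact (Complex.conj_eq_iff_re.mp (hDCreal φ)).symm
  -- main algebraic identity
  have hterm : ∀ q : ℂ, c * ∑ j ∈ Finset.range (d + 1), P.coeff j * μ ^ j * q ^ j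
      = (∑ j ∈ Finset.range (d + 1),
          (c * P.coeff j - μ ^ (d - j) * P.coeff d) * μ ^ j * q ^ j)
        + μ ^ d * P.coeff d * ∑ j ∈ Finset.range (d + 1), q ^ j := by
    intro q
    rw [Finset.mul_sum, Finset.mul_sum, ← Finset.sum_add_distrib]
    refine Finset.sum_congr rfl fun j hj => ?_
    have hjd : j ≤ d := by simpa [Nat.lt_succ_iff] using hj
    have hμd : μ ^ (d - j) * μ ^ j = μ ^ d := by rw [← pow_add]; congr 1; omega
    linear_combination (P.coeff d * q ^ j) * hμd
  have hmain : ∀ φ : ℝ, c * F φ = Ec φ + β * DC φ := by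
    intro φ
    simp only [hF_def, hEc_def, hDC_def, hβ_def]
    rw [hEval (μ * cexpI φ ^ 2)]
    have hexp : ∑ j ∈ Finset.range (d + 1), P.coeff j * (μ * cexpI φ ^ 2) ^ j
        = ∑ j ∈ Finset.range (d + 1), P.coeff j * μ ^ j * (cexpI φ ^ 2) ^ j := by
      refine Finset.sum_congr rfl fun j _ => ?_
      rw [mul_pow]
      ring
    rw [hexp]
    linear_combination (δ * (cexpI φ ^ d)⁻¹) * hterm (cexpI φ ^ 2)
  have hureal : ∀ φ : ℝ, H φ * u = ((starRingEnd ℂ) β * Ec φ).re + M ^ 2 * DR φ := by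
    intro φ
    have h1 : ((H φ : ℝ) : ℂ) * (c * (starRingEnd ℂ) β)
        = (starRingEnd ℂ) β * Ec φ + ((M ^ 2 * DR φ : ℝ) : ℂ) := by
      calc ((H φ : ℝ) : ℂ) * (c * (starRingEnd ℂ) β)
          = (starRingEnd ℂ) β * (c * ((H φ : ℝ) : ℂ)) := by ring
        _ = (starRingEnd ℂ) β * (c * F φ) := by rw [hFr φ]
        _ = (starRingEnd ℂ) β * (Ec φ + β * DC φ) := by rw [hmain φ]
        _ = (starRingEnd ℂ) β * Ec φ + ((starRingEnd ℂ) β * β) * DC φ := by ring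
        _ = (starRingEnd ℂ) β * Ec φ + ((M ^ 2 : ℝ) : ℂ) * ((DR φ : ℝ) : ℂ) := by
            rw [hββ, hDCr φ]
        _ = (starRingEnd ℂ) β * Ec φ + ((M ^ 2 * DR φ : ℝ) : ℂ) := by
            rw [Complex.ofReal_mul]
    have h2 := congrArg Complex.re h1
    simpa only [Complex.re_ofReal_mul, Complex.add_re, Complex.ofReal_re, hu_def] using h2
  have hEbound : ∀ φ : ℝ, ‖Ec φ‖ ≤ B := by
    intro φ
    simp only [hEc_def]
    rw [norm_mul, norm_mul, norm_inv, norm_pow, abs_cexpI, hδabs]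
    simp only [one_pow, inv_one, one_mul]
    calc ‖∑ j ∈ Finset.range (d + 1),
            (c * P.coeff j - μ ^ (d - j) * P.coeff d) * μ ^ j * (cexpI φ ^ 2) ^ j‖
        ≤ ∑ j ∈ Finset.range (d + 1),
            ‖(c * P.coeff j - μ ^ (d - j) * P.coeff d) * μ ^ j * (cexpI φ ^ 2) ^ j‖ :=
          norm_sum_le _ _
      _ = B := by
          rw [hB_def]
          refine Finset.sum_congr rfl fun j _ => ?_
          rw [norm_mul, norm_mul, norm_pow, norm_pow, norm_pow, abs_cexpI, hμ]
          simp
  have hRebound : ∀ φ : ℝ, |((starRingEnd ℂ) β * Ec φ).re| ≤ M * B := by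
    intro φ
    calc |((starRingEnd ℂ) β * Ec φ).re| ≤ ‖(starRingEnd ℂ) β * Ec φ‖ :=
        Complex.abs_re_le_norm _
      _ = M * ‖Ec φ‖ := by rw [norm_mul, Complex.norm_conj, hβabs]
      _ ≤ M * B := by
          apply mul_le_mul_of_nonneg_left (hEbound φ) (le_of_lt hMpos)
  have hDRsin : ∀ φ : ℝ, DR φ * Real.sin φ = Real.sin (((d : ℝ) + 1) * φ) := by
    intro φ
    have h1 := Stmt12Aux.aux_dir d φ
    rw [← cexpI_eq] at h1
    have h2 : DC φ * Complex.sin (φ : ℂ) = Complex.sin ((((d : ℝ) + 1) * φ : ℝ) : ℂ) := by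
      simp only [hDC_def]
      exact h1
    rw [hDCr φ, ← Complex.ofReal_sin, ← Complex.ofReal_sin, ← Complex.ofReal_mul] at h2
    exact_mod_cast h2
  have hDR0 : DR 0 = (d : ℝ) + 1 := by
    have h1 : DC 0 = ((d : ℝ) + 1 : ℂ) := by
      simp only [hDC_def]
      simp [cexpI_zero]
    simp only [hDR_def]
    simp only [h1]
    simp
  -- sample points
  obtain ⟨φk, hφk_def⟩ : ∃ φk : ℕ → ℝ,
      φk = fun k : ℕ => (2 * (k : ℝ) + 1) * Real.pi / (2 * ((d : ℝ) + 1)) := ⟨_, rfl⟩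
  have hφpos : ∀ k : ℕ, 0 < φk k := by
    intro k
    simp only [hφk_def]
    positivity
  have hφmono : ∀ {k l : ℕ}, k < l → φk k < φk l := by
    intro k l hkl
    simp only [hφk_def]
    have hkl' : (k : ℝ) < l := by exact_mod_cast hkl
    have hden : (0 : ℝ) < 2 * ((d : ℝ) + 1) := by positivity
    rw [div_lt_div_iff₀ hden hden]
    nlinarith [mul_pos (mul_pos hπ (sub_pos.mpr hkl')) hden]
  have hφle : ∀ {k l : ℕ}, k ≤ l → φk k ≤ φk l := by
    intro k l hkl
    rcases Nat.eq_or_lt_of_le hkl with rfl | h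
    · exact le_refl _
    · exact le_of_lt (hφmono h)
  have hφltπ : ∀ k ≤ d, φk k < Real.pi := by
    intro k hk
    simp only [hφk_def]
    rw [div_lt_iff₀ (by positivity)]
    have hkd : (k : ℝ) ≤ d := by exact_mod_cast hk
    nlinarith
  have hφinj : ∀ {k l : ℕ}, φk k = φk l → k = l := by
    intro k l he
    rcases lt_trichotomy k l with h | h | h
    · exact absurd he (ne_of_lt (hφmono h))
    · exact h
    · exact absurd he.symm (ne_of_lt (hφmono h))
  have hangle : ∀ k : ℕ, ((d : ℝ) + 1) * φk k = (k : ℝ) * Real.pi + Real.pi / 2 := by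
    intro k
    simp only [hφk_def]
    field_simp
  have hsinpos : ∀ k ≤ d, 0 < Real.sin (φk k) := fun k hk =>
    Real.sin_pos_of_pos_of_lt_pi (hφpos k) (hφltπ k hk)
  have hDRk : ∀ k ≤ d, DR (φk k) * Real.sin (φk k) = (-1 : ℝ) ^ k := by
    intro k hk
    rw [hDRsin (φk k), hangle k, Stmt12Aux.aux_sin k]
  -- u is nonzero
  have hune : u ≠ 0 := by
    intro hu0
    have h1 := hureal 0
    rw [hu0, mul_zero, hDR0] at h1
    have h2 := hRebound 0
    rw [abs_le] at h2
    nlinarith [h2.1, h2.2, hBM, hMpos, hd1, mul_le_mul_of_nonneg_left hBM (le_of_lt hMpos)]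
  -- sign conditions
  have hsign : ∀ k ≤ d, 0 ≤ (-1 : ℝ) ^ k * (u * H (φk k)) := by
    intro k hk
    have h8 := hureal (φk k)
    have hDk := hDRk k hk
    have hRB := hRebound (φk k)
    have hs1 := hsinpos k hk
    have hs2 : Real.sin (φk k) ≤ 1 := Real.sin_le_one _
    rw [abs_le] at hRB
    have hMB : 0 ≤ M * B := mul_nonneg (le_of_lt hMpos) hB0
    have hMM : M * B ≤ M * M := mul_le_mul_of_nonneg_left hBM (le_of_lt hMpos)
    rcases Nat.even_or_odd k with hpar | hpar
    · rw [Even.neg_one_pow hpar] at hDk ⊢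
      have e1 : Real.sin (φk k) * (1 * (u * H (φk k)))
          = Real.sin (φk k) * ((starRingEnd ℂ) β * Ec (φk k)).re + M ^ 2 := by
        linear_combination Real.sin (φk k) * h8 + M ^ 2 * hDk
      have e2 : 0 ≤ Real.sin (φk k) * (1 * (u * H (φk k))) := by
        rw [e1]
        nlinarith [mul_le_mul_of_nonneg_left hRB.1 (le_of_lt hs1),
          mul_le_mul_of_nonneg_right hs2 hMB]
      by_contra hcon
      push_neg at hcon
      nlinarith [mul_pos hs1 (neg_pos.mpr hcon)]
    · rw [Odd.neg_one_pow hpar] at hDk ⊢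
      have e1 : Real.sin (φk k) * ((-1) * (u * H (φk k)))
          = -(Real.sin (φk k) * ((starRingEnd ℂ) β * Ec (φk k)).re) + M ^ 2 := by
        linear_combination (-(Real.sin (φk k))) * h8 - M ^ 2 * hDk
      have e2 : 0 ≤ Real.sin (φk k) * ((-1) * (u * H (φk k))) := by
        rw [e1]
        nlinarith [mul_le_mul_of_nonneg_left hRB.2 (le_of_lt hs1),
          mul_le_mul_of_nonneg_right hs2 hMB]
      by_contra hcon
      push_neg at hcon
      nlinarith [mul_pos hs1 (neg_pos.mpr hcon)]
  -- a vanishing sample point must be at pi/2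
  have hforce : ∀ k ≤ d, H (φk k) = 0 → φk k = Real.pi / 2 := by
    intro k hk hH0
    have h8 := hureal (φk k)
    have hDk := hDRk k hk
    have hRB := hRebound (φk k)
    have hs1 := hsinpos k hk
    have hs2 : Real.sin (φk k) ≤ 1 := Real.sin_le_one _
    rw [abs_le] at hRB
    rw [hH0, zero_mul] at h8
    have hMM : M * B ≤ M * M := mul_le_mul_of_nonneg_left hBM (le_of_lt hMpos)
    have hsge : 1 ≤ Real.sin (φk k) := by
      by_contra hcon
      push_neg at hcon
      have hs0 : (0 : ℝ) ≤ Real.sin (φk k) := le_of_lt hs1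
      rcases Nat.even_or_odd k with hpar | hpar
      · rw [Even.neg_one_pow hpar] at hDk
        have key : M ^ 2 = (-(((starRingEnd ℂ) β * Ec (φk k)).re)) * Real.sin (φk k) := by
          linear_combination (-(Real.sin (φk k))) * h8 - M ^ 2 * hDk
        have hb : (-(((starRingEnd ℂ) β * Ec (φk k)).re)) * Real.sin (φk k)
            ≤ (M * B) * Real.sin (φk k) :=
          mul_le_mul_of_nonneg_right (by linarith [hRB.1]) hs0
        have hc : (M * B) * Real.sin (φk k) ≤ (M * M) * Real.sin (φk k) :=
          mul_le_mul_of_nonneg_right hMM hs0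
        nlinarith [mul_pos (mul_pos hMpos hMpos) (sub_pos.mpr hcon)]
      · rw [Odd.neg_one_pow hpar] at hDk
        have key : M ^ 2 = (((starRingEnd ℂ) β * Ec (φk k)).re) * Real.sin (φk k) := by
          linear_combination (Real.sin (φk k)) * h8 + M ^ 2 * hDk
        have hb : (((starRingEnd ℂ) β * Ec (φk k)).re) * Real.sin (φk k)
            ≤ (M * B) * Real.sin (φk k) :=
          mul_le_mul_of_nonneg_right hRB.2 hs0
        have hc : (M * B) * Real.sin (φk k) ≤ (M * M) * Real.sin (φk k) :=
          mul_le_mul_of_nonneg_right hMM hs0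
        nlinarith [mul_pos (mul_pos hMpos hMpos) (sub_pos.mpr hcon)]
    have hseq : Real.sin (φk k) = 1 := le_antisymm hs2 hsge
    obtain ⟨m, hm⟩ := Real.sin_eq_one_iff.mp hseq
    have hlt := hφltπ k hk
    have hgt := hφpos k
    have hm1 : (m : ℝ) < 1 := by nlinarith
    have hm2 : (-1 : ℝ) < (m : ℝ) := by nlinarith
    have hm0 : m = 0 := by
      have a1 : m < 1 := by exact_mod_cast hm1
      have a2 : (-1 : ℤ) < m := by exact_mod_cast hm2
      omega
    rw [hm0] at hm
    push_cast at hm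
    linarith
  -- continuity
  have hFcont : Continuous F := by
    rw [hF_def]
    exact (continuous_const.mul ((cont_cexpI.pow d).inv₀
      fun φ => pow_ne_zero _ (cexpI_ne φ))).mul
      (P.continuous.comp (continuous_const.mul (cont_cexpI.pow 2)))
  have hHcont : Continuous H := by
    rw [hH_def]
    exact Complex.continuous_re.comp hFcont
  -- zeros in intervals with nonvanishing alternating endpoints
  have hzero : ∀ k, k < d → H (φk k) ≠ 0 → H (φk (k + 1)) ≠ 0 →
      ∃ ψ, (φk k < ψ ∧ ψ < φk (k + 1)) ∧ H ψ = 0 := by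
    intro k hk hne1 hne2
    have hsa := hsign k (le_of_lt hk)
    have hsb := hsign (k + 1) hk
    have hlt : φk k < φk (k + 1) := hφmono (Nat.lt_succ_self k)
    have hm1ne : ((-1 : ℝ) ^ k) ≠ 0 := pow_ne_zero _ (by norm_num)
    have hp1 : 0 < (-1 : ℝ) ^ k * (u * H (φk k)) :=
      lt_of_le_of_ne hsa (fun h =>
        (mul_ne_zero hm1ne (mul_ne_zero hune hne1)) h.symm)
    have hp2 : 0 < (-1 : ℝ) ^ (k + 1) * (u * H (φk (k + 1))) :=
      lt_of_le_of_ne hsb (fun h =>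
        (mul_ne_zero (pow_ne_zero _ (by norm_num)) (mul_ne_zero hune hne2)) h.symm)
    have hp2' : (-1 : ℝ) ^ k * (u * H (φk (k + 1))) < 0 := by
      rw [pow_succ] at hp2
      nlinarith [hp2]
    have hgc : ContinuousOn (fun φ => (-1 : ℝ) ^ k * (u * H φ))
        (Set.Icc (φk k) (φk (k + 1))) :=
      (continuous_const.mul (continuous_const.mul hHcont)).continuousOn
    have h0mem : (0 : ℝ) ∈ Set.Ioo ((-1 : ℝ) ^ k * (u * H (φk (k + 1))))
        ((-1 : ℝ) ^ k * (u * H (φk k))) := ⟨hp2', hp1⟩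
    obtain ⟨ψ, hψmem, hψ0⟩ := intermediate_value_Ioo' (le_of_lt hlt) hgc h0mem
    refine ⟨ψ, ⟨hψmem.1, hψmem.2⟩, ?_⟩
    have h1 : u * H ψ = 0 := by
      rcases mul_eq_zero.mp hψ0 with h | h
      · exact absurd h hm1ne
      · exact h
    rcases mul_eq_zero.mp h1 with h | h
    · exact absurd h hune
    · exact h
  -- from a zero of H to a root of P on the circle
  have hroot : ∀ ψ : ℝ, H ψ = 0 → P.eval (μ * cexpI ψ ^ 2) = 0 := by
    intro ψ h0
    have h1 : F ψ = 0 := by rw [hFr ψ, h0, Complex.ofReal_zero]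
    rw [hF_def] at h1
    simp only at h1
    rcases mul_eq_zero.mp h1 with h2 | h2
    · rcases mul_eq_zero.mp h2 with h3 | h3
      · exact absurd h3 hδ0
      · exact absurd h3 (inv_ne_zero (pow_ne_zero _ (cexpI_ne ψ)))
    · exact h2
  have hcircabs : ∀ ψ : ℝ, ‖μ * cexpI ψ ^ 2‖ = 1 := by
    intro ψ
    rw [norm_mul, norm_pow, abs_cexpI, hμ]
    norm_num
  have hinjcirc : ∀ ψ ψ' : ℝ, 0 < ψ → ψ < Real.pi → 0 < ψ' → ψ' < Real.pi →
      μ * cexpI ψ ^ 2 = μ * cexpI ψ' ^ 2 → ψ = ψ' := by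
    intro ψ ψ' h1 h2 h3 h4 heq
    have h5 : cexpI ψ ^ 2 = cexpI ψ' ^ 2 := mul_left_cancel₀ hμ0 heq
    have h6 : Complex.exp (Complex.I * ψ + Complex.I * ψ)
        = Complex.exp (Complex.I * ψ' + Complex.I * ψ') := by
      rw [Complex.exp_add, Complex.exp_add]
      have := h5
      rw [cexpI_eq, cexpI_eq, sq, sq] at this
      exact this
    obtain ⟨n, hn⟩ := Complex.exp_eq_exp_iff_exists_int.mp h6
    have h7 : Complex.I * (2 * (ψ : ℂ)) = Complex.I * (2 * (ψ' : ℂ) + 2 * Real.pi * (n : ℂ)) := by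
      push_cast at hn ⊢
      linear_combination hn
    have h8 : (2 * (ψ : ℂ)) = 2 * (ψ' : ℂ) + 2 * Real.pi * (n : ℂ) :=
      mul_left_cancel₀ Complex.I_ne_zero h7
    have h9 : (2 * ψ : ℝ) = 2 * ψ' + 2 * Real.pi * (n : ℝ) := by
      exact_mod_cast h8
    have hn1 : (n : ℝ) < 1 := by nlinarith
    have hn2 : (-1 : ℝ) < (n : ℝ) := by nlinarith
    have hn0 : n = 0 := by
      have a1 : n < 1 := by exact_mod_cast hn1
      have a2 : (-1 : ℤ) < n := by exact_mod_cast hn2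
      omega
    rw [hn0] at h9
    push_cast at h9
    linarith
  -- counting roots
  have hcount : ∀ S : Finset ℂ, (∀ x ∈ S, P.eval x = 0) → S.card ≤ d := by
    intro S hS
    have h1 : S ⊆ P.roots.toFinset := by
      intro x hx
      rw [Multiset.mem_toFinset, Polynomial.mem_roots']
      exact ⟨hP0, hS x hx⟩
    calc S.card ≤ P.roots.toFinset.card := Finset.card_le_card h1
      _ ≤ Multiset.card P.roots := P.roots.toFinset_card_le
      _ ≤ P.natDegree := P.card_roots'
      _ = d := hd
  have habs1 : ‖((starRingEnd ℂ) z0)⁻¹‖ ≠ 1 := by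
    rw [norm_inv, Complex.norm_conj]
    intro h
    exact habs (inv_eq_one.mp h)
  have hz01 : z0 ≠ ((starRingEnd ℂ) z0)⁻¹ := by
    intro h
    apply habs
    have h2 : z0 * (starRingEnd ℂ) z0 = 1 := by
      nth_rewrite 1 [h]
      rw [inv_mul_cancel₀ hcz]
    rw [Complex.mul_conj] at h2
    have h3 : Complex.normSq z0 = 1 := by exact_mod_cast h2
    have h4 : ‖z0‖ ^ 2 = 1 := by rw [← Complex.normSq_eq_norm_sq, h3]
    nlinarith [norm_nonneg z0]
  -- final case analysis
  by_cases hbad : ∃ k, k ≤ d ∧ H (φk k) = 0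
  · -- some sample point vanishes
    obtain ⟨k₀, hk₀d, hk₀0⟩ := hbad
    have hk₀π : φk k₀ = Real.pi / 2 := hforce k₀ hk₀d hk₀0
    have huniq : ∀ k ≤ d, k ≠ k₀ → H (φk k) ≠ 0 := by
      intro k hk hne hH0
      exact hne (hφinj ((hforce k hk hH0).trans hk₀π.symm))
    have hgap : ∀ k : ℕ, ∃ ψ, (k < d ∧ k ≠ k₀ ∧ k + 1 ≠ k₀) →
        ((φk k < ψ ∧ ψ < φk (k + 1)) ∧ H ψ = 0) := by
      intro k
      by_cases hc : k < d ∧ k ≠ k₀ ∧ k + 1 ≠ k₀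
      · obtain ⟨ψ, h1, h2⟩ := hzero k hc.1 (huniq k (le_of_lt hc.1) hc.2.1)
          (huniq (k + 1) hc.1 hc.2.2)
        exact ⟨ψ, fun _ => ⟨h1, h2⟩⟩
      · exact ⟨0, fun h => absurd h hc⟩
    choose g hg using hgap
    obtain ⟨T, hT_def⟩ : ∃ T : Finset ℕ, T = ((Finset.range d).erase k₀).erase (k₀ - 1) :=
      ⟨_, rfl⟩
    have hTmem : ∀ k ∈ T, k < d ∧ k ≠ k₀ ∧ k + 1 ≠ k₀ := by
      intro k hk
      rw [hT_def, Finset.mem_erase, Finset.mem_erase, Finset.mem_range] at hk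
      refine ⟨hk.2.2, hk.2.1, ?_⟩
      have := hk.1
      omega
    have hgprop : ∀ k ∈ T, (φk k < g k ∧ g k < φk (k + 1)) ∧ H (g k) = 0 :=
      fun k hk => hg k (hTmem k hk)
    have hgbnd : ∀ k ∈ T, 0 < g k ∧ g k < Real.pi := by
      intro k hk
      obtain ⟨⟨ha, hb⟩, _⟩ := hgprop k hk
      have hk1d : k + 1 ≤ d := (hTmem k hk).1
      exact ⟨lt_trans (hφpos k) ha, lt_trans hb (hφltπ (k + 1) hk1d)⟩
    have hgneπ2 : ∀ k ∈ T, g k ≠ φk k₀ := by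
      intro k hk he
      obtain ⟨⟨ha, hb⟩, _⟩ := hgprop k hk
      obtain ⟨hkd, hkne, hk1ne⟩ := hTmem k hk
      rcases lt_or_ge k k₀ with hlt | hge
      · have h1 : k + 1 ≤ k₀ := hlt
        have h2 := hφle h1
        linarith
      · have h2 := hφle hge
        linarith
    have hginj : ∀ k ∈ T, ∀ l ∈ T, k < l → g k < g l := by
      intro k hk l hl hkl
      obtain ⟨⟨_, hb⟩, _⟩ := hgprop k hk
      obtain ⟨⟨ha, _⟩, _⟩ := hgprop l hl
      have h1 : φk (k + 1) ≤ φk l := hφle (by omega)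
      linarith
    obtain ⟨S, hS_def⟩ : ∃ S : Finset ℂ, S = T.image (fun k => μ * cexpI (g k) ^ 2) ∪
        {μ * cexpI (φk k₀) ^ 2, z0, ((starRingEnd ℂ) z0)⁻¹} := ⟨_, rfl⟩
    have hSroots : ∀ x ∈ S, P.eval x = 0 := by
      intro x hx
      rw [hS_def, Finset.mem_union] at hx
      rcases hx with hx | hx
      · obtain ⟨k, hk, rfl⟩ := Finset.mem_image.mp hx
        exact hroot _ (hgprop k hk).2
      · simp only [Finset.mem_insert, Finset.mem_singleton] at hx
        rcases hx with rfl | rfl | rfl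
        · exact hroot _ hk₀0
        · exact hz0
        · exact hpair
    have hk₀bnd : 0 < φk k₀ ∧ φk k₀ < Real.pi := ⟨hφpos k₀, hφltπ k₀ hk₀d⟩
    have himg_inj : Set.InjOn (fun k => μ * cexpI (g k) ^ 2) T := by
      intro k hk l hl he
      have hgk := hgbnd k hk
      have hgl := hgbnd l hl
      have hgg : g k = g l := hinjcirc _ _ hgk.1 hgk.2 hgl.1 hgl.2 he
      rcases lt_trichotomy k l with h | h | h
      · linarith [hginj k hk l hl h]
      · exact h
      · linarith [hginj l hl k hk h]
    have htrip : ({μ * cexpI (φk k₀) ^ 2, z0, ((starRingEnd ℂ) z0)⁻¹} : Finset ℂ).card = 3 := by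
      rw [Finset.card_insert_of_notMem, Finset.card_insert_of_notMem,
        Finset.card_singleton]
      · simp only [Finset.mem_singleton]
        exact hz01
      · simp only [Finset.mem_insert, Finset.mem_singleton]
        push_neg
        constructor
        · intro h
          exact habs (by rw [← h]; exact hcircabs _)
        · intro h
          exact habs1 (by rw [← h]; exact hcircabs _)
    have hdisj : Disjoint (T.image (fun k => μ * cexpI (g k) ^ 2))
        ({μ * cexpI (φk k₀) ^ 2, z0, ((starRingEnd ℂ) z0)⁻¹} : Finset ℂ) := by
      rw [Finset.disjoint_left]
      intro x hx hx2
      obtain ⟨k, hk, rfl⟩ := Finset.mem_image.mp hx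
      have hgk := hgbnd k hk
      simp only [Finset.mem_insert, Finset.mem_singleton] at hx2
      rcases hx2 with h | h | h
      · exact hgneπ2 k hk (hinjcirc _ _ hgk.1 hgk.2 hk₀bnd.1 hk₀bnd.2 h)
      · exact habs (by rw [← h]; exact hcircabs _)
      · exact habs1 (by rw [← h]; exact hcircabs _)
    have hcardS : d + 1 ≤ S.card := by
      rw [hS_def, Finset.card_union_of_disjoint hdisj, Finset.card_image_of_injOn himg_inj,
        htrip]
      have hT1 : d - 2 ≤ T.card := by
        rw [hT_def]
        have h1 : (Finset.range d).card - 1 ≤ ((Finset.range d).erase k₀).card :=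
          Finset.pred_card_le_card_erase
        have h2 : ((Finset.range d).erase k₀).card - 1
            ≤ (((Finset.range d).erase k₀).erase (k₀ - 1)).card :=
          Finset.pred_card_le_card_erase
        rw [Finset.card_range] at h1
        omega
      omega
    have := hcount S hSroots
    omega
  · -- no sample point vanishes
    push_neg at hbad
    have hgap : ∀ k : ℕ, ∃ ψ, k < d →
        ((φk k < ψ ∧ ψ < φk (k + 1)) ∧ H ψ = 0) := by
      intro k
      by_cases hc : k < d
      · obtain ⟨ψ, h1, h2⟩ := hzero k hc (hbad k (le_of_lt hc)) (hbad (k + 1) hc)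
        exact ⟨ψ, fun _ => ⟨h1, h2⟩⟩
      · exact ⟨0, fun h => absurd h hc⟩
    choose g hg using hgap
    have hgprop : ∀ k ∈ Finset.range d, (φk k < g k ∧ g k < φk (k + 1)) ∧ H (g k) = 0 :=
      fun k hk => hg k (Finset.mem_range.mp hk)
    have hgbnd : ∀ k ∈ Finset.range d, 0 < g k ∧ g k < Real.pi := by
      intro k hk
      obtain ⟨⟨ha, hb⟩, _⟩ := hgprop k hk
      have hk1d : k + 1 ≤ d := Finset.mem_range.mp hk
      exact ⟨lt_trans (hφpos k) ha, lt_trans hb (hφltπ (k + 1) hk1d)⟩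
    have hginj : ∀ k ∈ Finset.range d, ∀ l ∈ Finset.range d, k < l → g k < g l := by
      intro k hk l hl hkl
      obtain ⟨⟨_, hb⟩, _⟩ := hgprop k hk
      obtain ⟨⟨ha, _⟩, _⟩ := hgprop l hl
      have h1 : φk (k + 1) ≤ φk l := hφle (by omega)
      linarith
    obtain ⟨S, hS_def⟩ : ∃ S : Finset ℂ,
        S = (Finset.range d).image (fun k => μ * cexpI (g k) ^ 2) ∪ {z0} := ⟨_, rfl⟩
    have hSroots : ∀ x ∈ S, P.eval x = 0 := by
      intro x hx
      rw [hS_def, Finset.mem_union] at hx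
      rcases hx with hx | hx
      · obtain ⟨k, hk, rfl⟩ := Finset.mem_image.mp hx
        exact hroot _ (hgprop k hk).2
      · rw [Finset.mem_singleton] at hx
        rw [hx]
        exact hz0
    have himg_inj : Set.InjOn (fun k => μ * cexpI (g k) ^ 2) (Finset.range d) := by
      intro k hk l hl he
      have hgk := hgbnd k hk
      have hgl := hgbnd l hl
      have hgg : g k = g l := hinjcirc _ _ hgk.1 hgk.2 hgl.1 hgl.2 he
      rcases lt_trichotomy k l with h | h | h
      · linarith [hginj k hk l hl h]
      · exact h
      · linarith [hginj l hl k hk h]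
    have hdisj : Disjoint ((Finset.range d).image (fun k => μ * cexpI (g k) ^ 2))
        ({z0} : Finset ℂ) := by
      rw [Finset.disjoint_left]
      intro x hx hx2
      obtain ⟨k, hk, rfl⟩ := Finset.mem_image.mp hx
      rw [Finset.mem_singleton] at hx2
      exact habs (by rw [← hx2]; exact hcircabs _)
    have hcardS : d + 1 ≤ S.card := by
      rw [hS_def, Finset.card_union_of_disjoint hdisj, Finset.card_image_of_injOn himg_inj,
        Finset.card_singleton, Finset.card_range]
    have := hcount S hSroots
    omega
end

section
/- Let h be a complex polynomial of degree n with all zeros in |z| ≤ 1 and |h(z)| ≥ c > 0 for all |z| = 1, let |λ| = 1, and let e be a polynomial of degree m with |e(z)| ≤ c for |z| = 1. Then for every k > max(m, n), the polynomial z^(2k−n) h(z) + z^k e(z) + λ(h*(z) + z^(k−m) e*(z)) has all its zeros on the unit circle. -/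
open Polynomial

lemma eval_map_conj (p : Polynomial ℂ) (w : ℂ) :
    (p.map (starRingEnd ℂ)).eval w = (starRingEnd ℂ) (p.eval ((starRingEnd ℂ) w)) := by
  rw [eval_map]
  induction p using Polynomial.induction_on' with
  | add p q hp hq => simp [hp, hq]
  | monomial i a => simp

lemma eval_conjReciprocal (p : Polynomial ℂ) (w : ℂ) (hw : w ≠ 0) :
    (conjReciprocal p).eval w
      = w ^ p.natDegree * (starRingEnd ℂ) (p.eval (((starRingEnd ℂ) w)⁻¹)) := by
  haveI : Invertible w⁻¹ := invertibleOfNonzero (inv_ne_zero hw)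
  have h1 := eval₂_reverse_mul_pow (RingHom.id ℂ) w⁻¹ (p.map (starRingEnd ℂ))
  rw [invOf_eq_inv, inv_inv] at h1
  rw [eval₂_eq_eval_map, eval₂_eq_eval_map, Polynomial.map_id, Polynomial.map_id] at h1
  have hdeg : (p.map (starRingEnd ℂ)).natDegree = p.natDegree :=
    natDegree_map_eq_of_injective (RingHom.injective _) p
  rw [hdeg] at h1
  have h2 : (conjReciprocal p).eval w = (p.map (starRingEnd ℂ)).eval w⁻¹ * w ^ p.natDegree := by
    rw [conjReciprocal, ← h1]
    rw [mul_assoc, ← mul_pow, inv_mul_cancel₀ hw, one_pow, mul_one]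
  rw [h2, eval_map_conj, map_inv₀, mul_comm]

lemma key_ineq_s14 (w r : ℂ) (hw : ‖w‖ ≤ 1) (hr : ‖r‖ ≤ 1) :
    ‖w - r‖ ≤ ‖1 - w * (starRingEnd ℂ) r‖ := by
  have h1 : Complex.normSq w ≤ 1 := by
    rw [← Complex.sq_norm]; nlinarith [norm_nonneg w]
  have h2 : Complex.normSq r ≤ 1 := by
    rw [← Complex.sq_norm]; nlinarith [norm_nonneg r]
  rw [Complex.norm_def, Complex.norm_def]
  apply Real.sqrt_le_sqrt
  have e1 : Complex.normSq (w - r) = Complex.normSq w + Complex.normSq r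
      - 2 * (w * (starRingEnd ℂ) r).re := Complex.normSq_sub w r
  have e2 : Complex.normSq (1 - w * (starRingEnd ℂ) r)
      = 1 + Complex.normSq w * Complex.normSq r - 2 * (w * (starRingEnd ℂ) r).re := by
    rw [Complex.normSq_sub]
    simp [Complex.normSq_mul, Complex.normSq_conj]
  rw [e1, e2]; nlinarith

lemma abs_prod_le (s : Multiset ℂ) (f g : ℂ → ℂ)
    (hfg : ∀ r ∈ s, ‖f r‖ ≤ ‖g r‖) :
    ‖(s.map f).prod‖ ≤ ‖(s.map g).prod‖ := by
  induction s using Multiset.induction_on with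
  | empty => simp
  | cons a t ih =>
    simp only [Multiset.map_cons, Multiset.prod_cons, norm_mul]
    exact mul_le_mul (hfg a (Multiset.mem_cons_self a t))
      (ih fun r hr => hfg r (Multiset.mem_cons_of_mem hr))
      (norm_nonneg _) (norm_nonneg _)

lemma inside_ne_zero (h e : Polynomial ℂ) (n m : ℕ) (c : ℝ) (lam : ℂ)
    (hn : h.natDegree = n) (hm : e.natDegree = m) (hc : 0 < c)
    (hzeros : ∀ z : ℂ, h.eval z = 0 → ‖z‖ ≤ 1)
    (hlow : ∀ z : ℂ, ‖z‖ = 1 → c ≤ ‖h.eval z‖)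
    (hup : ∀ z : ℂ, ‖z‖ = 1 → ‖e.eval z‖ ≤ c)
    (hlam : ‖lam‖ = 1) (k : ℕ) (hk : max m n < k) :
    ∀ w : ℂ, ‖w‖ < 1 →
      (X ^ (2 * k - n) * h + X ^ k * e
          + C lam * (conjReciprocal h + X ^ (k - m) * conjReciprocal e)).eval w ≠ 0 := by
  obtain ⟨hmk, hnk⟩ := max_lt_iff.mp hk
  have hlam0 : lam ≠ 0 := by
    intro h0; rw [h0] at hlam; simp at hlam
  have hh0 : h ≠ 0 := by
    intro h0
    have := hlow 1 (by simp)
    rw [h0] at this; simp at this; linarith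
  -- the conjugate reciprocal of h does not vanish on the closed unit disk
  have hCRh : ∀ w : ℂ, ‖w‖ ≤ 1 → (conjReciprocal h).eval w ≠ 0 := by
    intro w hw
    rcases eq_or_ne w 0 with rfl | hw0
    · have h1 : (conjReciprocal h).eval 0 = (starRingEnd ℂ) h.leadingCoeff := by
        rw [← coeff_zero_eq_eval_zero, conjReciprocal, coeff_zero_reverse, leadingCoeff_map]
      rw [h1]
      simpa using leadingCoeff_ne_zero.mpr hh0
    · rw [eval_conjReciprocal h w hw0]
      have hwpos : 0 < ‖w‖ := norm_pos_iff.mpr hw0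
      have hu : ‖((starRingEnd ℂ) w)⁻¹‖ = (‖w‖)⁻¹ := by
        rw [norm_inv, Complex.norm_conj]
      have hune : h.eval (((starRingEnd ℂ) w)⁻¹) ≠ 0 := by
        rcases eq_or_lt_of_le hw with heq | hlt
        · intro h0
          have : c ≤ ‖h.eval (((starRingEnd ℂ) w)⁻¹)‖ := by
            apply hlow; rw [hu, heq]; norm_num
          rw [h0] at this; simp at this; linarith
        · intro h0
          have h1 := hzeros _ h0
          rw [hu] at h1
          have h2 : (1:ℝ) < (‖w‖)⁻¹ := (one_lt_inv₀ hwpos).mpr hlt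
          linarith
      exact mul_ne_zero (pow_ne_zero _ hw0) (by simpa using hune)
  -- basic facts about g
  set g : Polynomial ℂ := X ^ (k - n) * h + e with hg_def
  have hXh : (X ^ (k - n) * h).natDegree = k := by
    rw [natDegree_mul (pow_ne_zero _ X_ne_zero) hh0, natDegree_X_pow, hn]; omega
  have degg : g.natDegree = k := by
    rw [hg_def, natDegree_add_eq_left_of_natDegree_lt (by rw [hXh, hm]; exact hmk), hXh]
  have hleadg : g.leadingCoeff = h.leadingCoeff := by
    have h1 : g.coeff k = h.leadingCoeff := by
      rw [hg_def, coeff_add, coeff_eq_zero_of_natDegree_lt (p := e) (by rw [hm]; exact hmk), add_zero]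
      have h2 := coeff_mul_X_pow h (k - n) n
      rw [show n + (k - n) = k by omega, mul_comm h] at h2
      rw [h2, ← hn]
      rfl
    rw [leadingCoeff, degg, h1]
  have hgne : g ≠ 0 := by
    intro h0
    rw [h0, leadingCoeff_zero] at hleadg
    exact hh0 (leadingCoeff_eq_zero.mp hleadg.symm)
  have heval_g : ∀ x : ℂ, g.eval x = x ^ (k - n) * h.eval x + e.eval x := by
    intro x; simp [hg_def]
  -- the function A(w) and its relation to g
  have hAfun : ∀ w : ℂ, w ≠ 0 →
      (conjReciprocal h + X ^ (k - m) * conjReciprocal e).eval w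
        = w ^ k * (starRingEnd ℂ) (g.eval (((starRingEnd ℂ) w)⁻¹)) := by
    intro w hw0
    rw [eval_add, eval_mul, eval_pow, eval_X, eval_conjReciprocal h w hw0,
        eval_conjReciprocal e w hw0, hn, hm, heval_g, map_add, map_mul, map_pow, map_inv₀,
        Complex.conj_conj]
    have e2 : w ^ k * (w⁻¹) ^ (k - n) = w ^ n := by
      rw [inv_pow, ← pow_sub₀ w hw0 (by omega : k - n ≤ k)]
      congr 1; omega
    have e3 : w ^ (k - m) * w ^ m = w ^ k := by
      rw [← pow_add]; congr 1; omega
    calc w ^ n * (starRingEnd ℂ) (h.eval ((starRingEnd ℂ) w)⁻¹)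
          + w ^ (k - m) * (w ^ m * (starRingEnd ℂ) (e.eval ((starRingEnd ℂ) w)⁻¹))
        = (w ^ k * (w⁻¹) ^ (k - n)) * (starRingEnd ℂ) (h.eval ((starRingEnd ℂ) w)⁻¹)
          + (w ^ (k - m) * w ^ m) * (starRingEnd ℂ) (e.eval ((starRingEnd ℂ) w)⁻¹) := by
          rw [e2]; ring
      _ = w ^ k * ((w⁻¹) ^ (k - n) * (starRingEnd ℂ) (h.eval ((starRingEnd ℂ) w)⁻¹)
          + (starRingEnd ℂ) (e.eval ((starRingEnd ℂ) w)⁻¹)) := by rw [e3]; ring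
  -- Stage 1: A = CR h + X^(k-m) CR e does not vanish on the open unit disk
  set φ : ℂ → ℂ := fun w => (w ^ (k - m) * (conjReciprocal e).eval w) / (conjReciprocal h).eval w
    with hφ_def
  have hden : ∀ w ∈ Metric.closedBall (0:ℂ) 1, (conjReciprocal h).eval w ≠ 0 := by
    intro w hw
    exact hCRh w (by rwa [Metric.mem_closedBall, dist_zero_right] at hw)
  have hdiff : DifferentiableOn ℂ φ (Metric.closedBall (0:ℂ) 1) := by
    apply DifferentiableOn.div
    · exact ((differentiable_pow _).mul (conjReciprocal e).differentiable).differentiableOn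
    · exact (conjReciprocal h).differentiable.differentiableOn
    · exact hden
  have hdcc : DiffContOnCl ℂ φ (Metric.ball 0 1) :=
    DifferentiableOn.diffContOnCl (by rwa [closure_ball (0:ℂ) one_ne_zero])
  have hbnd : ∀ w ∈ frontier (Metric.ball (0:ℂ) 1), ‖φ w‖ ≤ 1 := by
    intro w hw
    rw [frontier_ball (0:ℂ) one_ne_zero, Metric.mem_sphere, dist_zero_right] at hw
    have hw0 : w ≠ 0 := by intro h0; rw [h0] at hw; simp at hw
    have hu1 : ‖((starRingEnd ℂ) w)⁻¹‖ = 1 := by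
      rw [norm_inv, Complex.norm_conj, hw]; norm_num
    have hnum : ‖w ^ (k - m) * (conjReciprocal e).eval w‖
        = ‖e.eval (((starRingEnd ℂ) w)⁻¹)‖ := by
      rw [eval_conjReciprocal e w hw0, hm]
      simp [norm_mul, norm_pow, hw, Complex.norm_conj]
    have hdenv : ‖(conjReciprocal h).eval w‖
        = ‖h.eval (((starRingEnd ℂ) w)⁻¹)‖ := by
      rw [eval_conjReciprocal h w hw0, hn]
      simp [norm_mul, norm_pow, hw, Complex.norm_conj]
    rw [hφ_def]
    simp only [norm_div]
    rw [hnum, hdenv]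
    have hc1 := hlow _ hu1
    have hc2 := hup _ hu1
    apply div_le_one_of_le₀ (le_trans hc2 hc1) (norm_nonneg _)
  have hφle : ∀ w ∈ Metric.closedBall (0:ℂ) 1, ‖φ w‖ ≤ 1 := by
    intro w hw
    exact Complex.norm_le_of_forall_mem_frontier_norm_le Metric.isBounded_ball hdcc hbnd
      (by rwa [closure_ball (0:ℂ) one_ne_zero])
  have hA0 : ∀ w : ℂ, ‖w‖ < 1 →
      (conjReciprocal h + X ^ (k - m) * conjReciprocal e).eval w ≠ 0 := by
    intro w hw hzero
    have hwball : w ∈ Metric.ball (0:ℂ) 1 := by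
      rwa [Metric.mem_ball, dist_zero_right]
    have hwc : w ∈ Metric.closedBall (0:ℂ) 1 := Metric.ball_subset_closedBall hwball
    have hφw : φ w = -1 := by
      rw [eval_add, eval_mul, eval_pow, eval_X] at hzero
      have hnum : w ^ (k - m) * (conjReciprocal e).eval w = -(conjReciprocal h).eval w := by
        linear_combination hzero
      rw [hφ_def]
      simp only
      rw [hnum, neg_div, div_self (hden w hwc)]
    have hmax : IsMaxOn (norm ∘ φ) (Metric.ball (0:ℂ) 1) w := by
      apply isMaxOn_iff.mpr
      intro x hx
      simp only [Function.comp_apply]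
      rw [hφw]
      simpa using hφle x (Metric.ball_subset_closedBall hx)
    have heqon := Complex.eqOn_of_isPreconnected_of_isMaxOn_norm
      (convex_ball (0:ℂ) 1).isPreconnected Metric.isOpen_ball
      (hdiff.mono Metric.ball_subset_closedBall) hwball hmax
    have h0 : φ 0 = φ w := by
      have := heqon (by simp : (0:ℂ) ∈ Metric.ball 0 1)
      simpa using this
    have hφ0 : φ 0 = 0 := by
      rw [hφ_def]
      simp [zero_pow (show k - m ≠ 0 by omega)]
    rw [hφ0, hφw] at h0
    norm_num at h0
  -- Stage 2: g has no zeros outside the closed unit disk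
  have hgout : ∀ z : ℂ, 1 < ‖z‖ → g.eval z ≠ 0 := by
    intro z hz hz0
    have hzne : z ≠ 0 := by
      intro h0; rw [h0] at hz; simp at hz; linarith
    have hw0 : ((starRingEnd ℂ) z)⁻¹ ≠ 0 := inv_ne_zero (by simpa using hzne)
    have hwabs : ‖((starRingEnd ℂ) z)⁻¹‖ < 1 := by
      rw [norm_inv, Complex.norm_conj]
      exact inv_lt_one_of_one_lt₀ hz
    have hback : ((starRingEnd ℂ) (((starRingEnd ℂ) z)⁻¹))⁻¹ = z := by
      rw [map_inv₀, Complex.conj_conj, inv_inv]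
    have hh := hAfun _ hw0
    rw [hback, hz0, map_zero, mul_zero] at hh
    exact hA0 _ hwabs hh
  have hroots : ∀ r ∈ g.roots, ‖r‖ ≤ 1 := by
    intro r hr
    by_contra hgt
    push_neg at hgt
    exact hgout r hgt ((mem_roots hgne).mp hr)
  have hcard : g.roots.card = k := by
    rw [← degg]
    exact splits_iff_card_roots.mp (IsAlgClosed.splits g)
  have hfact := (C_leadingCoeff_mul_prod_multiset_X_sub_C (p := g) (by rw [hcard, degg])).symm
  have hevalg : ∀ x : ℂ, g.eval x
      = g.leadingCoeff * (g.roots.map fun r => x - r).prod := by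
    intro x
    conv_lhs => rw [hfact]
    rw [eval_mul, eval_C, eval_multiset_prod, Multiset.map_map]
    congr 1
    exact congrArg Multiset.prod (Multiset.map_congr rfl fun r _ => by simp)
  have hAbig : ∀ w : ℂ, w ≠ 0 → ‖w‖ ≤ 1 →
      ‖g.eval w‖
        ≤ ‖(conjReciprocal h + X ^ (k - m) * conjReciprocal e).eval w‖ := by
    intro w hw0 hw1
    rw [hAfun w hw0]
    have hu : (starRingEnd ℂ) (((starRingEnd ℂ) w)⁻¹) = w⁻¹ := by
      rw [map_inv₀, Complex.conj_conj]
    have h2 : (g.roots.map fun r => (1:ℂ) - w * (starRingEnd ℂ) r).prod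
        = w ^ k * (g.roots.map fun r => w⁻¹ - (starRingEnd ℂ) r).prod := by
      have h3 : (g.roots.map fun r => (1:ℂ) - w * (starRingEnd ℂ) r)
          = g.roots.map fun r => w * (w⁻¹ - (starRingEnd ℂ) r) := by
        apply Multiset.map_congr rfl
        intro r _
        rw [mul_sub, mul_inv_cancel₀ hw0]
      rw [h3, Multiset.prod_map_mul]
      congr 1
      rw [Multiset.map_const', Multiset.prod_replicate, hcard]
    have hrhs : w ^ k * (starRingEnd ℂ) (g.eval (((starRingEnd ℂ) w)⁻¹))
        = (starRingEnd ℂ) g.leadingCoeff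
          * (g.roots.map fun r => 1 - w * (starRingEnd ℂ) r).prod := by
      rw [hevalg, map_mul, map_multiset_prod, Multiset.map_map]
      have h4 : (g.roots.map ((starRingEnd ℂ) ∘ fun r => ((starRingEnd ℂ) w)⁻¹ - r))
          = g.roots.map fun r => w⁻¹ - (starRingEnd ℂ) r := by
        apply Multiset.map_congr rfl
        intro r _
        simp [hu]
      rw [h4, h2]
      ring
    rw [hrhs, hevalg, norm_mul, norm_mul, Complex.norm_conj]
    apply mul_le_mul_of_nonneg_left _ (norm_nonneg _)
    exact abs_prod_le _ _ _ fun r hr => key_ineq_s14 w r hw1 (hroots r hr)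
  -- final assembly
  intro w hw hzero
  rcases eq_or_ne w 0 with rfl | hw0
  · rw [eval_add, eval_add, eval_mul, eval_mul, eval_mul, eval_pow, eval_pow, eval_X,
      eval_C] at hzero
    rw [zero_pow (by omega : 2 * k - n ≠ 0), zero_pow (by omega : k ≠ 0), zero_mul, zero_mul,
      zero_add, zero_add] at hzero
    have hA : (conjReciprocal h + X ^ (k - m) * conjReciprocal e).eval 0 ≠ 0 := by
      rw [eval_add, eval_mul, eval_pow, eval_X, zero_pow (by omega : k - m ≠ 0), zero_mul,
        add_zero]
      exact hCRh 0 (by simp)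
    rcases mul_eq_zero.mp hzero with h1 | h1
    · exact hlam0 h1
    · rw [eval_add, eval_mul, eval_pow, eval_X] at h1
      apply hA
      rw [eval_add, eval_mul, eval_pow, eval_X]
      exact h1
  · have hsplit : (X ^ (2 * k - n) * h + X ^ k * e
        + C lam * (conjReciprocal h + X ^ (k - m) * conjReciprocal e)).eval w
        = w ^ k * g.eval w
          + lam * (conjReciprocal h + X ^ (k - m) * conjReciprocal e).eval w := by
      rw [eval_add, eval_add, eval_mul, eval_mul, eval_mul, eval_pow, eval_pow, eval_X, eval_C,
        heval_g, show 2 * k - n = k + (k - n) by omega, pow_add]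
      ring
    rw [hsplit] at hzero
    rcases eq_or_ne (g.eval w) 0 with hg | hg
    · rw [hg, mul_zero, zero_add] at hzero
      rcases mul_eq_zero.mp hzero with h1 | h1
      · exact hlam0 h1
      · exact hA0 w hw h1
    · have h1 : ‖w ^ k * g.eval w‖ < ‖g.eval w‖ := by
        rw [norm_mul, norm_pow]
        have hlt : ‖w‖ ^ k < 1 :=
          pow_lt_one₀ (norm_nonneg w) hw (by omega)
        nlinarith [norm_pos_iff.mpr hg, pow_nonneg (norm_nonneg w) k]
      have h2 := hAbig w hw0 (le_of_lt hw)
      have h4 : ‖w ^ k * g.eval w‖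
          = ‖lam * (conjReciprocal h + X ^ (k - m) * conjReciprocal e).eval w‖ := by
        have h5 : w ^ k * g.eval w
            = -(lam * (conjReciprocal h + X ^ (k - m) * conjReciprocal e).eval w) := by
          linear_combination hzero
        rw [h5, norm_neg]
      rw [h4, norm_mul, hlam, one_mul] at h1
      linarith

theorem stmt_14 (h e : Polynomial ℂ) (n m : ℕ) (c : ℝ) (lam : ℂ)
    (hn : h.natDegree = n) (hm : e.natDegree = m) (hc : 0 < c)
    (hzeros : ∀ z : ℂ, h.eval z = 0 → ‖z‖ ≤ 1)
    (hlow : ∀ z : ℂ, ‖z‖ = 1 → c ≤ ‖h.eval z‖)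
    (hup : ∀ z : ℂ, ‖z‖ = 1 → ‖e.eval z‖ ≤ c)
    (hlam : ‖lam‖ = 1) (k : ℕ) (hk : max m n < k) :
    ∀ z : ℂ,
      (X ^ (2 * k - n) * h + X ^ k * e
          + C lam * (conjReciprocal h + X ^ (k - m) * conjReciprocal e)).eval z = 0 →
        ‖z‖ = 1 := by
  intro z hz
  by_contra hne
  rcases lt_or_gt_of_ne hne with hlt | hgt
  · exact inside_ne_zero h e n m c lam hn hm hc hzeros hlow hup hlam k hk z hlt hz
  · obtain ⟨hmk, hnk⟩ := max_lt_iff.mp hk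
    have hz0 : z ≠ 0 := by
      intro h0; rw [h0] at hgt; simp at hgt; linarith
    have hlam0 : lam ≠ 0 := by
      intro h0; rw [h0] at hlam; simp at hlam
    set w : ℂ := ((starRingEnd ℂ) z)⁻¹ with hw_def
    have hw0 : w ≠ 0 := inv_ne_zero (by simpa using hz0)
    have hwabs : ‖w‖ < 1 := by
      rw [hw_def, norm_inv, Complex.norm_conj]
      exact inv_lt_one_of_one_lt₀ hgt
    have hback : ((starRingEnd ℂ) w)⁻¹ = z := by
      rw [hw_def, map_inv₀, Complex.conj_conj, inv_inv]
    have hcw : (starRingEnd ℂ) w = z⁻¹ := by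
      rw [hw_def, map_inv₀, Complex.conj_conj]
    have hns : Complex.normSq lam = 1 := by
      rw [← Complex.sq_norm, hlam]; norm_num
    have hclam : (starRingEnd ℂ) lam = lam⁻¹ := by
      apply eq_inv_of_mul_eq_one_left
      rw [mul_comm, Complex.mul_conj, hns, Complex.ofReal_one]
    have hpowz : ∀ y : ℂ, z ^ (k - m) * (z ^ m * y) = z ^ k * y := by
      intro y
      rw [← mul_assoc, ← pow_add, show k - m + m = k by omega]
    have hpowzi : ∀ y : ℂ, (z⁻¹) ^ (k - m) * ((z⁻¹) ^ m * y) = (z⁻¹) ^ k * y := by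
      intro y
      rw [← mul_assoc, ← pow_add, show k - m + m = k by omega]
    have hid : (X ^ (2 * k - n) * h + X ^ k * e
          + C lam * (conjReciprocal h + X ^ (k - m) * conjReciprocal e)).eval z
        = lam * z ^ (2 * k) * (starRingEnd ℂ)
            ((X ^ (2 * k - n) * h + X ^ k * e
          + C lam * (conjReciprocal h + X ^ (k - m) * conjReciprocal e)).eval w) := by
      rw [eval_add, eval_add, eval_mul, eval_mul, eval_mul, eval_pow, eval_pow, eval_X, eval_C,
        eval_add, eval_mul, eval_pow, eval_X, eval_conjReciprocal h z hz0,
        eval_conjReciprocal e z hz0, hn, hm]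
      rw [eval_add, eval_add, eval_mul, eval_mul, eval_mul, eval_pow, eval_pow, eval_X, eval_C,
        eval_add, eval_mul, eval_pow, eval_X, eval_conjReciprocal h w hw0,
        eval_conjReciprocal e w hw0, hn, hm, hback]
      simp only [map_add, map_mul, map_pow, Complex.conj_conj, hcw, hclam]
      rw [hpowz, hpowzi]
      rw [show 2 * k - n = k + (k - n) by omega]
      rw [show (2 : ℕ) * k = (k + (k - n)) + n by omega]
      generalize h.eval z = H
      generalize e.eval z = E
      generalize (starRingEnd ℂ) (h.eval w) = CH
      generalize (starRingEnd ℂ) (e.eval w) = CE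
      rw [show k = n + (k - n) by omega]
      simp only [inv_pow]
      field_simp [hz0, hlam0]
      rw [show n + (k - n) - n = k - n by omega]
      ring
    rw [hz] at hid
    have hcz : (starRingEnd ℂ)
        ((X ^ (2 * k - n) * h + X ^ k * e
          + C lam * (conjReciprocal h + X ^ (k - m) * conjReciprocal e)).eval w) = 0 := by
      have hmul : lam * z ^ (2 * k) ≠ 0 := mul_ne_zero hlam0 (pow_ne_zero _ hz0)
      rcases mul_eq_zero.mp hid.symm with h1 | h1
      · exact absurd h1 hmul
      · exact h1
    have hwz : (X ^ (2 * k - n) * h + X ^ k * e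
          + C lam * (conjReciprocal h + X ^ (k - m) * conjReciprocal e)).eval w = 0 := by
      have := congrArg (starRingEnd ℂ) hcz
      simpa using this
    exact inside_ne_zero h e n m c lam hn hm hc hzeros hlow hup hlam k hk w hwabs hwz
end

section
/- For every integer k ≥ 2 and every j with 1 ≤ j ≤ k−1, one has 0 < ζ(2k−2j)/ζ(2k) − 1 < 3 · 4^(j−k). -/
noncomputable def zetaR (n : ℕ) : ℝ := ∑' m : ℕ, (1 : ℝ) / (m + 1) ^ n

lemma zetaR_summable (n : ℕ) (hn : 2 ≤ n) :
    Summable (fun m : ℕ => (1 : ℝ) / ((m : ℝ) + 1) ^ n) := by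
  have h := Real.summable_one_div_nat_pow.mpr (by omega : 1 < n)
  have h2 := (summable_nat_add_iff 1).mpr h
  refine h2.congr fun m => ?_
  push_cast
  ring

lemma one_le_zetaR (n : ℕ) (hn : 2 ≤ n) : 1 ≤ zetaR n := by
  have h := Summable.le_tsum (zetaR_summable n hn) 0 (fun i _ => by positivity)
  rw [zetaR]
  simpa using h

lemma zetaR_lt_zetaR {a b : ℕ} (ha : 2 ≤ a) (hab : a < b) : zetaR b < zetaR a := by
  have hb : 2 ≤ b := by omega
  refine Summable.tsum_lt_tsum (i := 1) (fun m => ?_) ?_ (zetaR_summable b hb) (zetaR_summable a ha)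
  · have hm : (0 : ℝ) ≤ (m : ℝ) := Nat.cast_nonneg m
    have h1 : (1 : ℝ) ≤ (m : ℝ) + 1 := by linarith
    apply one_div_le_one_div_of_le (by positivity)
    exact pow_le_pow_right₀ h1 (le_of_lt hab)
  · have h2 : (2 : ℝ) ^ a < 2 ^ b := by
      apply pow_lt_pow_right₀ (by norm_num) hab
    have h3 : ((1 : ℕ) : ℝ) + 1 = 2 := by norm_num
    rw [h3]
    exact one_div_lt_one_div_of_lt (by positivity) h2

lemma sum_inv_sq_aux : ∑' m : ℕ, (1 : ℝ) / ((m : ℝ) + 2) ^ 2 ≤ 2 / 3 := by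
  have hs : Summable (fun m : ℕ => (1 : ℝ) / ((m : ℝ) + 2) ^ 2) := by
    have h := Real.summable_one_div_nat_pow.mpr (by norm_num : 1 < 2)
    have h2 := (summable_nat_add_iff 2).mpr h
    refine h2.congr fun m => ?_
    push_cast
    ring
  apply Summable.tsum_le_of_sum_range_le hs
  intro n
  set g : ℕ → ℝ := fun m => (1 : ℝ) / ((m : ℝ) + 3/2) with hg
  have key : ∀ m : ℕ, (1 : ℝ) / ((m : ℝ) + 2) ^ 2 ≤ g m - g (m + 1) := by
    intro m
    simp only [hg]
    push_cast
    have h1 : (0 : ℝ) < (m : ℝ) + 3/2 := by positivity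
    have h2 : (0 : ℝ) < (m : ℝ) + 1 + 3/2 := by positivity
    have h3 : (0 : ℝ) < ((m : ℝ) + 2) ^ 2 := by positivity
    rw [div_sub_div _ _ (ne_of_gt h1) (ne_of_gt h2), div_le_div_iff₀ h3 (by positivity)]
    nlinarith [sq_nonneg ((m : ℝ) + 2)]
  calc ∑ m ∈ Finset.range n, (1 : ℝ) / ((m : ℝ) + 2) ^ 2
      ≤ ∑ m ∈ Finset.range n, (g m - g (m + 1)) :=
        Finset.sum_le_sum fun m _ => key m
    _ = g 0 - g n := Finset.sum_range_sub' g n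
    _ ≤ 2 / 3 := by
        have h4 : (0 : ℝ) < (n : ℝ) + 3/2 := by positivity
        have h5 : (0 : ℝ) ≤ 1 / ((n : ℝ) + 3/2) := by positivity
        simp only [hg]
        norm_num
        linarith

lemma zetaR_sub_one_lt (a : ℕ) (ha : 2 ≤ a) : zetaR a - 1 < 3 * ((2 : ℝ) ^ a)⁻¹ := by
  have hs := zetaR_summable a ha
  have hsplit := Summable.tsum_eq_zero_add hs
  have h0 : (1 : ℝ) / (((0 : ℕ) : ℝ) + 1) ^ a = 1 := by norm_num
  have htail : zetaR a - 1 = ∑' m : ℕ, (1 : ℝ) / ((m : ℝ) + 2) ^ a := by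
    rw [zetaR, hsplit, h0, add_sub_cancel_left]
    exact tsum_congr fun m => by push_cast; ring_nf
  rw [htail]
  have hterm : ∀ m : ℕ, (1 : ℝ) / ((m : ℝ) + 2) ^ a ≤
      (4 * ((2 : ℝ) ^ a)⁻¹) * ((1 : ℝ) / ((m : ℝ) + 2) ^ 2) := by
    intro m
    have hm : (0 : ℝ) ≤ (m : ℝ) := Nat.cast_nonneg m
    have h2 : (2 : ℝ) ≤ (m : ℝ) + 2 := by linarith
    have hpow : (2 : ℝ) ^ a * ((m : ℝ) + 2) ^ 2 ≤ 4 * ((m : ℝ) + 2) ^ a := by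
      have hx : ((m : ℝ) + 2) ^ a = ((m : ℝ) + 2) ^ 2 * ((m : ℝ) + 2) ^ (a - 2) := by
        rw [← pow_add]; congr 1; omega
      have h4 : (2 : ℝ) ^ a = 4 * (2 : ℝ) ^ (a - 2) := by
        have ha' : a = 2 + (a - 2) := by omega
        conv_lhs => rw [ha']
        rw [pow_add]; norm_num
      rw [hx, h4]
      have hle : (2 : ℝ) ^ (a - 2) ≤ ((m : ℝ) + 2) ^ (a - 2) :=
        pow_le_pow_left₀ (by norm_num) h2 _
      have hmul := mul_le_mul_of_nonneg_left hle (sq_nonneg ((m : ℝ) + 2))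
      nlinarith [hmul]
    have hR : (4 : ℝ) * ((2 : ℝ) ^ a)⁻¹ * ((1 : ℝ) / ((m : ℝ) + 2) ^ 2)
        = 4 / ((2 : ℝ) ^ a * ((m : ℝ) + 2) ^ 2) := by
      field_simp
    rw [hR, div_le_div_iff₀ (by positivity) (by positivity)]
    nlinarith [hpow]
  have hs2 : Summable (fun m : ℕ => (1 : ℝ) / ((m : ℝ) + 2) ^ 2) := by
    have h := Real.summable_one_div_nat_pow.mpr (by norm_num : 1 < 2)
    have h2 := (summable_nat_add_iff 2).mpr h
    refine h2.congr fun m => ?_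
    push_cast
    ring
  have hsa : Summable (fun m : ℕ => (1 : ℝ) / ((m : ℝ) + 2) ^ a) := by
    have h2 := (summable_nat_add_iff 1).mpr hs
    refine h2.congr fun m => ?_
    push_cast
    ring_nf
  calc ∑' m : ℕ, (1 : ℝ) / ((m : ℝ) + 2) ^ a
      ≤ ∑' m : ℕ, (4 * ((2 : ℝ) ^ a)⁻¹) * ((1 : ℝ) / ((m : ℝ) + 2) ^ 2) :=
        Summable.tsum_le_tsum hterm hsa (hs2.mul_left _)
    _ = (4 * ((2 : ℝ) ^ a)⁻¹) * ∑' m : ℕ, (1 : ℝ) / ((m : ℝ) + 2) ^ 2 := tsum_mul_left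
    _ ≤ (4 * ((2 : ℝ) ^ a)⁻¹) * (2 / 3) :=
        mul_le_mul_of_nonneg_left sum_inv_sq_aux (by positivity)
    _ < 3 * ((2 : ℝ) ^ a)⁻¹ := by
        have hpos : (0 : ℝ) < ((2 : ℝ) ^ a)⁻¹ := by positivity
        nlinarith

theorem stmt_16 (k j : ℕ) (hk : 2 ≤ k) (hj1 : 1 ≤ j) (hj2 : j ≤ k - 1) :
    0 < zetaR (2 * k - 2 * j) / zetaR (2 * k) - 1 ∧
      zetaR (2 * k - 2 * j) / zetaR (2 * k) - 1 < 3 * (4 : ℝ) ^ ((j : ℤ) - (k : ℤ)) := by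
  set a := 2 * k - 2 * j with ha_def
  have hjk : j < k := by omega
  have ha2 : 2 ≤ a := by omega
  have hab : a < 2 * k := by omega
  have hb2 : 2 ≤ 2 * k := by omega
  have hζb1 : 1 ≤ zetaR (2 * k) := one_le_zetaR _ hb2
  have hζbpos : 0 < zetaR (2 * k) := by linarith
  have hlt : zetaR (2 * k) < zetaR a := zetaR_lt_zetaR ha2 hab
  constructor
  · have : 1 < zetaR a / zetaR (2 * k) := (one_lt_div hζbpos).mpr hlt
    linarith
  · have h4 : (4 : ℝ) ^ ((j : ℤ) - (k : ℤ)) = ((2 : ℝ) ^ a)⁻¹ := by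
      have hjk' : (j : ℤ) - (k : ℤ) = -((k - j : ℕ) : ℤ) := by
        push_cast [Nat.cast_sub hjk.le]; ring
      rw [hjk', zpow_neg, zpow_natCast]
      congr 1
      have haeq : a = 2 * (k - j) := by omega
      rw [haeq, pow_mul]
      norm_num
    rw [h4]
    have hζa0 : (0 : ℝ) ≤ zetaR a := by linarith
    have key : zetaR a / zetaR (2 * k) ≤ zetaR a := div_le_self hζa0 hζb1
    have := zetaR_sub_one_lt a ha2
    linarith
end

section
/- For k ≥ 2 and 1 ≤ j ≤ k−1, setting q_j = η(2j)η(2k−2j)/η(2k) and δ_j = η(2j) − q_j where η(s) = (1 − 2^(1−s))ζ(s) (with η(0) = 1/2 via B₀ conventions as needed, or restricting to j ≥ 1), one has 0 < δ_j < 2^(1−2k+2j). -/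
noncomputable def etaR (n : ℕ) : ℝ := (1 - (2 : ℝ) ^ ((1 : ℤ) - (n : ℤ))) * zetaR n


private lemma key_pow (y : ℝ) (hy : 2 ≤ y) (s : ℕ) (hs : 1 ≤ s) :
    y ^ (s + 2) < (y - 1) * (y + 1) ^ (s + 1) := by
  induction s with
  | zero => omega
  | succ s ih =>
    rcases Nat.eq_or_lt_of_le hs with h | h
    · -- s + 1 = 1, i.e. s = 0
      have hs0 : s = 0 := by omega
      subst hs0
      have : y ^ (0+1+2) = y*y*y := by ring
      have h2 : (y - 1) * (y + 1) ^ (0+1+1) = y*y*y + y*y - y - 1 := by ring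
      rw [this, h2]
      nlinarith [sq_nonneg (y - 2)]
    · have hs1 : 1 ≤ s := by omega
      have ih' := ih hs1
      have hp : (0 : ℝ) < y ^ (s + 2) := by positivity
      have hq : (0 : ℝ) < (y - 1) * (y + 1) ^ (s + 1) := by
        have : (0:ℝ) < y - 1 := by linarith
        positivity
      calc y ^ (s + 1 + 2) = y ^ (s + 2) * y := by ring
        _ < ((y - 1) * (y + 1) ^ (s + 1)) * y := by
            apply mul_lt_mul_of_pos_right ih' (by linarith)
        _ ≤ ((y - 1) * (y + 1) ^ (s + 1)) * (y + 1) := by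
            apply mul_le_mul_of_nonneg_left (by linarith) hq.le
        _ = (y - 1) * (y + 1) ^ (s + 1 + 1) := by ring

private lemma f_step (y : ℝ) (hy : 2 ≤ y) (s : ℕ) (hs : 1 ≤ s) :
    1 / y ^ (s + 1) - 1 / (y + 1) ^ (s + 1) < 1 / y ^ s - 1 / (y + 1) ^ s := by
  have h1 : (0:ℝ) < y := by linarith
  have h2 : (0:ℝ) < y + 1 := by linarith
  have e1 : 1 / y ^ s - 1 / y ^ (s + 1) = (y - 1) / y ^ (s + 1) := by
    rw [pow_succ]
    field_simp
  have e2 : 1 / (y + 1) ^ s - 1 / (y + 1) ^ (s + 1) = y / (y + 1) ^ (s + 1) := by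
    rw [pow_succ]
    field_simp
    ring
  have key : y / (y + 1) ^ (s + 1) < (y - 1) / y ^ (s + 1) := by
    rw [div_lt_div_iff₀ (by positivity) (by positivity)]
    calc y * y ^ (s + 1) = y ^ (s + 2) := by ring
      _ < (y - 1) * (y + 1) ^ (s + 1) := key_pow y hy s hs
  linarith

private lemma f_mono (y : ℝ) (hy : 2 ≤ y) (n N : ℕ) (hn : 1 ≤ n) (h : n < N) :
    1 / y ^ N - 1 / (y + 1) ^ N < 1 / y ^ n - 1 / (y + 1) ^ n := by
  induction N with
  | zero => omega
  | succ N ih =>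
    rcases Nat.lt_or_ge n N with h' | h'
    · exact lt_trans (f_step y hy N (by omega)) (ih h')
    · have : n = N := by omega
      subst this
      exact f_step y hy n hn

private lemma g_mono (y : ℝ) (hy : 2 ≤ y) (n N : ℕ) (hn : 1 ≤ n) (h : n < N) :
    1 / (y + 1) ^ n - 1 / (y + 1) ^ N < 1 / y ^ n - 1 / y ^ N := by
  have := f_mono y hy n N hn h
  linarith

private lemma summable_a {n : ℕ} (hn : 2 ≤ n) :
    Summable (fun m : ℕ => (1:ℝ) / ((m:ℝ) + 1) ^ n) := by
  have h := Real.summable_one_div_nat_pow.mpr (by omega : 1 < n)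
  have h2 := (summable_nat_add_iff (f := fun m : ℕ => (1:ℝ) / (m:ℝ) ^ n) 1).mpr h
  refine h2.congr fun m => ?_
  push_cast
  ring

private lemma summable_comp {f : ℕ → ℝ} (hf : Summable f) (g : ℕ → ℕ)
    (hg : Function.Injective g) : Summable fun k => f (g k) :=
  hf.comp_injective hg

private lemma summable_sign {f : ℕ → ℝ} (hf : Summable f) :
    Summable fun m => (-1:ℝ)^m * f m := by
  apply Summable.of_norm
  refine hf.abs.congr fun m => ?_
  simp [abs_mul, abs_pow]

private lemma tsum_pair {f : ℕ → ℝ} (hf : Summable f) :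
    ∑' m, f m = ∑' k, (f (2*k) + f (2*k+1)) := by
  have he : Summable fun k => f (2*k) := summable_comp hf _ (fun a b h => by omega)
  have ho : Summable fun k => f (2*k+1) := summable_comp hf _ (fun a b h => by omega)
  rw [← tsum_even_add_odd he ho, ← Summable.tsum_add he ho]

private lemma tsum_pair1 {f : ℕ → ℝ} (hf : Summable f) :
    ∑' m, f m = f 0 + ∑' k, (f (2*k+1) + f (2*k+2)) := by
  have h1 : Summable fun m => f (m+1) := (summable_nat_add_iff 1).mpr hf
  rw [Summable.tsum_eq_zero_add hf, tsum_pair h1]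

private lemma tsum_pair2 {f : ℕ → ℝ} (hf : Summable f) :
    ∑' m, f m = f 0 + f 1 + ∑' k, (f (2*k+2) + f (2*k+3)) := by
  have h1 : Summable fun m => f (m+1) := (summable_nat_add_iff 1).mpr hf
  rw [Summable.tsum_eq_zero_add hf, tsum_pair1 h1, ← add_assoc]

set_option maxHeartbeats 1000000 in
private lemma eta_eq {n : ℕ} (hn : 2 ≤ n) :
    etaR n = ∑' m : ℕ, (-1:ℝ)^m * ((1:ℝ) / ((m:ℝ) + 1) ^ n) := by
  have ha := summable_a hn
  have he : Summable fun k : ℕ => (1:ℝ) / (((2*k : ℕ):ℝ) + 1) ^ n :=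
    summable_comp ha _ (fun a b h => by omega)
  have ho : Summable fun k : ℕ => (1:ℝ) / (((2*k+1 : ℕ):ℝ) + 1) ^ n :=
    summable_comp ha _ (fun a b h => by omega)
  have hpow : (2:ℝ) ^ ((1:ℤ) - (n:ℤ)) = 2 / 2 ^ n := by
    rw [zpow_sub₀ (two_ne_zero), zpow_one, zpow_natCast]
  have hz : zetaR n
      = (∑' k : ℕ, (1:ℝ) / (((2*k : ℕ):ℝ) + 1) ^ n)
        + ∑' k : ℕ, (1:ℝ) / (((2*k+1 : ℕ):ℝ) + 1) ^ n :=
    (tsum_even_add_odd he ho).symm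
  have hhalf : (2:ℝ) ^ ((1:ℤ) - (n:ℤ)) * zetaR n
      = 2 * ∑' k : ℕ, (1:ℝ) / (((2*k+1 : ℕ):ℝ) + 1) ^ n := by
    rw [zetaR, ← tsum_mul_left, ← tsum_mul_left]
    refine tsum_congr fun m => ?_
    rw [hpow]
    push_cast
    have h1 : ((m:ℝ) + 1) ^ n ≠ 0 := by positivity
    have h2 : (2:ℝ) ^ n ≠ 0 := by positivity
    rw [show (2*(m:ℝ)+1+1) = 2*((m:ℝ)+1) by ring, mul_pow]
    field_simp
  have hs := summable_sign ha
  rw [tsum_pair hs]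
  have : ∀ k : ℕ, (-1:ℝ)^(2*k) * ((1:ℝ) / (((2*k : ℕ):ℝ) + 1) ^ n)
      + (-1:ℝ)^(2*k+1) * ((1:ℝ) / (((2*k+1 : ℕ):ℝ) + 1) ^ n)
      = (1:ℝ) / (((2*k : ℕ):ℝ) + 1) ^ n - (1:ℝ) / (((2*k+1 : ℕ):ℝ) + 1) ^ n := by
    intro k
    have h2k : (-1:ℝ)^(2*k) = 1 := by rw [pow_mul]; norm_num
    have h2k1 : (-1:ℝ)^(2*k+1) = -1 := by rw [pow_succ, h2k]; norm_num
    rw [h2k, h2k1]; ring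
  calc etaR n = zetaR n - (2:ℝ) ^ ((1:ℤ) - (n:ℤ)) * zetaR n := by rw [etaR]; ring
    _ = (∑' k : ℕ, (1:ℝ) / (((2*k : ℕ):ℝ) + 1) ^ n)
        - ∑' k : ℕ, (1:ℝ) / (((2*k+1 : ℕ):ℝ) + 1) ^ n := by
        rw [hhalf, hz]; ring
    _ = ∑' k : ℕ, ((1:ℝ) / (((2*k : ℕ):ℝ) + 1) ^ n - (1:ℝ) / (((2*k+1 : ℕ):ℝ) + 1) ^ n) :=
        (Summable.tsum_sub he ho).symm
    _ = _ := tsum_congr fun k => (this k).symm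

private lemma aa_le {n : ℕ} {x y : ℕ} (h : x ≤ y) :
    (1:ℝ) / ((y:ℝ) + 1) ^ n ≤ 1 / ((x:ℝ) + 1) ^ n := by
  apply one_div_le_one_div_of_le (by positivity)
  apply pow_le_pow_left₀ (by positivity)
  have : (x:ℝ) ≤ (y:ℝ) := by exact_mod_cast h
  linarith

private lemma aa_lt {n : ℕ} (hn : 1 ≤ n) {x y : ℕ} (h : x < y) :
    (1:ℝ) / ((y:ℝ) + 1) ^ n < 1 / ((x:ℝ) + 1) ^ n := by
  apply one_div_lt_one_div_of_lt (by positivity)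
  apply pow_lt_pow_left₀ _ (by positivity) (by omega)
  have : (x:ℝ) < (y:ℝ) := by exact_mod_cast h
  linarith

private lemma eta_ge {n : ℕ} (hn : 2 ≤ n) : 1 - 1 / 2 ^ n ≤ etaR n := by
  have hs := summable_sign (summable_a hn)
  have he : Summable fun k : ℕ => (-1:ℝ)^(2*k) * ((1:ℝ) / (((2*k : ℕ):ℝ) + 1) ^ n) :=
    summable_comp hs _ (fun a b h => by omega)
  have ho : Summable fun k : ℕ => (-1:ℝ)^(2*k+1) * ((1:ℝ) / (((2*k+1 : ℕ):ℝ) + 1) ^ n) :=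
    summable_comp hs _ (fun a b h => by omega)
  rw [eta_eq hn, tsum_pair hs]
  have key := Summable.le_tsum (he.add ho) 0 (fun j _ => by
    have h1 : (-1:ℝ)^(2*j) = 1 := by rw [pow_mul]; norm_num
    have h2 : (-1:ℝ)^(2*j+1) = -1 := by rw [pow_succ, h1]; norm_num
    have h3 := aa_le (n := n) (x := 2*j) (y := 2*j+1) (by omega)
    simp only [h1, h2]
    push_cast at h3 ⊢
    nlinarith)
  have h0 : (-1:ℝ)^(2*0) * ((1:ℝ) / (((2*0 : ℕ):ℝ) + 1) ^ n)
      + (-1:ℝ)^(2*0+1) * ((1:ℝ) / (((2*0+1 : ℕ):ℝ) + 1) ^ n) = 1 - 1 / 2 ^ n := by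
    norm_num
    ring
  rw [h0] at key
  exact key

private lemma eta_pos {n : ℕ} (hn : 2 ≤ n) : 0 < etaR n := by
  have h4 : (4:ℝ) ≤ 2 ^ n := by
    calc (4:ℝ) = 2 ^ 2 := by norm_num
      _ ≤ 2 ^ n := pow_le_pow_right₀ (by norm_num) hn
  have := eta_ge hn
  have h2 : 1 / (2:ℝ) ^ n ≤ 1 / 4 := by
    apply one_div_le_one_div_of_le (by norm_num) h4
  linarith

private lemma eta_lt_one {n : ℕ} (hn : 2 ≤ n) : etaR n < 1 := by
  have hs := summable_sign (summable_a hn)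
  have hv : Summable fun k : ℕ =>
      (-1:ℝ)^(2*k+1) * ((1:ℝ) / (((2*k+1 : ℕ):ℝ) + 1) ^ n)
        + (-1:ℝ)^(2*k+2) * ((1:ℝ) / (((2*k+2 : ℕ):ℝ) + 1) ^ n) :=
    (summable_comp hs _ (fun a b h => by simp only [] at h; omega :
        Function.Injective fun k => 2*k+1)).add
      (summable_comp hs _ (fun a b h => by simp only [] at h; omega :
        Function.Injective fun k => 2*k+2))
  rw [eta_eq hn, tsum_pair1 hs]
  have hnp : ∀ k : ℕ, (-1:ℝ)^(2*k+1) * ((1:ℝ) / (((2*k+1 : ℕ):ℝ) + 1) ^ n)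
      + (-1:ℝ)^(2*k+2) * ((1:ℝ) / (((2*k+2 : ℕ):ℝ) + 1) ^ n) ≤ 0 := by
    intro k
    have h1 : (-1:ℝ)^(2*k) = 1 := by rw [pow_mul]; norm_num
    have h2 : (-1:ℝ)^(2*k+1) = -1 := by rw [pow_succ, h1]; norm_num
    have h3 : (-1:ℝ)^(2*k+2) = 1 := by rw [pow_succ, h2]; norm_num
    have h4 := aa_le (n := n) (x := 2*k+1) (y := 2*k+2) (by omega)
    simp only [h2, h3]
    push_cast at h4 ⊢
    nlinarith
  have hsum : ∑' k : ℕ, ((-1:ℝ)^(2*k+1) * ((1:ℝ) / (((2*k+1 : ℕ):ℝ) + 1) ^ n)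
      + (-1:ℝ)^(2*k+2) * ((1:ℝ) / (((2*k+2 : ℕ):ℝ) + 1) ^ n)) < 0 := by
    rw [Summable.tsum_eq_zero_add hv]
    have hle : ∑' k : ℕ, ((-1:ℝ)^(2*(k+1)+1) * ((1:ℝ) / (((2*(k+1)+1 : ℕ):ℝ) + 1) ^ n)
        + (-1:ℝ)^(2*(k+1)+2) * ((1:ℝ) / (((2*(k+1)+2 : ℕ):ℝ) + 1) ^ n)) ≤ 0 :=
      tsum_nonpos fun k => hnp (k+1)
    have h0 : (-1:ℝ)^(2*0+1) * ((1:ℝ) / (((2*0+1 : ℕ):ℝ) + 1) ^ n)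
        + (-1:ℝ)^(2*0+2) * ((1:ℝ) / (((2*0+2 : ℕ):ℝ) + 1) ^ n) < 0 := by
      have h4 := aa_lt (n := n) (by omega) (x := 1) (y := 2) (by omega)
      norm_num at h4 ⊢
      linarith
    calc ((-1:ℝ)^(2*0+1) * ((1:ℝ) / (((2*0+1 : ℕ):ℝ) + 1) ^ n)
        + (-1:ℝ)^(2*0+2) * ((1:ℝ) / (((2*0+2 : ℕ):ℝ) + 1) ^ n))
        + ∑' k : ℕ, ((-1:ℝ)^(2*(k+1)+1) * ((1:ℝ) / (((2*(k+1)+1 : ℕ):ℝ) + 1) ^ n)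
          + (-1:ℝ)^(2*(k+1)+2) * ((1:ℝ) / (((2*(k+1)+2 : ℕ):ℝ) + 1) ^ n))
        ≤ ((-1:ℝ)^(2*0+1) * ((1:ℝ) / (((2*0+1 : ℕ):ℝ) + 1) ^ n)
        + (-1:ℝ)^(2*0+2) * ((1:ℝ) / (((2*0+2 : ℕ):ℝ) + 1) ^ n)) + 0 := by
          exact add_le_add_right hle _
      _ < 0 := by rw [add_zero]; exact h0
  have h00 : (-1:ℝ)^(0:ℕ) * ((1:ℝ) / (((0 : ℕ):ℝ) + 1) ^ n) = 1 := by norm_num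
  rw [h00]
  linarith

private lemma summable_F {n N : ℕ} (hn : 2 ≤ n) (hN : 2 ≤ N) :
    Summable fun m : ℕ => (-1:ℝ)^m * ((1:ℝ)/((m:ℝ)+1)^N - (1:ℝ)/((m:ℝ)+1)^n) := by
  refine ((summable_sign (summable_a hN)).sub (summable_sign (summable_a hn))).congr fun m => ?_
  ring

private lemma D_repr {n N : ℕ} (hn : 2 ≤ n) (hN : 2 ≤ N) :
    etaR N - etaR n = ∑' m : ℕ, (-1:ℝ)^m * ((1:ℝ)/((m:ℝ)+1)^N - (1:ℝ)/((m:ℝ)+1)^n) := by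
  rw [eta_eq hn, eta_eq hN,
    ← Summable.tsum_sub (summable_sign (summable_a hN)) (summable_sign (summable_a hn))]
  exact tsum_congr fun m => by ring

private lemma D_pos {n N : ℕ} (hn : 2 ≤ n) (hnN : n < N) : 0 < etaR N - etaR n := by
  have hN : 2 ≤ N := by omega
  have HF := summable_F hn hN
  rw [D_repr hn hN, tsum_pair1 HF]
  have hw : ∀ k : ℕ, 0 ≤ (-1:ℝ)^(2*k+1) * ((1:ℝ)/(((2*k+1:ℕ):ℝ)+1)^N - (1:ℝ)/(((2*k+1:ℕ):ℝ)+1)^n)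
      + (-1:ℝ)^(2*k+2) * ((1:ℝ)/(((2*k+2:ℕ):ℝ)+1)^N - (1:ℝ)/(((2*k+2:ℕ):ℝ)+1)^n) := by
    intro k
    have h1 : (-1:ℝ)^(2*k) = 1 := by rw [pow_mul]; norm_num
    have h2 : (-1:ℝ)^(2*k+1) = -1 := by rw [pow_succ, h1]; norm_num
    have h3 : (-1:ℝ)^(2*k+2) = 1 := by rw [pow_succ, h2]; norm_num
    have e1 : ((2*k+1:ℕ):ℝ) + 1 = 2*(k:ℝ)+2 := by push_cast; ring
    have e2 : ((2*k+2:ℕ):ℝ) + 1 = (2*(k:ℝ)+2)+1 := by push_cast; ring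
    have hg := g_mono (2*(k:ℝ)+2)
      (by have : (0:ℝ) ≤ (k:ℝ) := Nat.cast_nonneg k; linarith) n N (by omega) hnN
    rw [h2, h3, e1, e2]
    linarith
  have Hw : Summable fun k : ℕ =>
      (-1:ℝ)^(2*k+1) * ((1:ℝ)/(((2*k+1:ℕ):ℝ)+1)^N - (1:ℝ)/(((2*k+1:ℕ):ℝ)+1)^n)
      + (-1:ℝ)^(2*k+2) * ((1:ℝ)/(((2*k+2:ℕ):ℝ)+1)^N - (1:ℝ)/(((2*k+2:ℕ):ℝ)+1)^n) :=
    (summable_comp HF _ (fun a b h => by simp only [] at h; omega :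
        Function.Injective fun k => 2*k+1)).add
      (summable_comp HF _ (fun a b h => by simp only [] at h; omega :
        Function.Injective fun k => 2*k+2))
  have hw0 : (0:ℝ) < (-1:ℝ)^(2*0+1) * ((1:ℝ)/(((2*0+1:ℕ):ℝ)+1)^N - (1:ℝ)/(((2*0+1:ℕ):ℝ)+1)^n)
      + (-1:ℝ)^(2*0+2) * ((1:ℝ)/(((2*0+2:ℕ):ℝ)+1)^N - (1:ℝ)/(((2*0+2:ℕ):ℝ)+1)^n) := by
    have hg := g_mono (2:ℝ) (by norm_num) n N (by omega) hnN
    norm_num at hg ⊢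
    linarith
  have key := Summable.le_tsum Hw 0 (fun j _ => hw j)
  have h0 : (-1:ℝ)^(0:ℕ) * ((1:ℝ)/(((0:ℕ):ℝ)+1)^N - (1:ℝ)/(((0:ℕ):ℝ)+1)^n) = 0 := by norm_num
  rw [h0]
  linarith

private lemma D_le {n N : ℕ} (hn : 2 ≤ n) (hnN : n < N) :
    etaR N - etaR n ≤ 1 / 2^n - 1 / 2^N := by
  have hN : 2 ≤ N := by omega
  have HF := summable_F hn hN
  rw [D_repr hn hN, tsum_pair2 HF]
  have hv : ∀ k : ℕ, (-1:ℝ)^(2*k+2) * ((1:ℝ)/(((2*k+2:ℕ):ℝ)+1)^N - (1:ℝ)/(((2*k+2:ℕ):ℝ)+1)^n)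
      + (-1:ℝ)^(2*k+3) * ((1:ℝ)/(((2*k+3:ℕ):ℝ)+1)^N - (1:ℝ)/(((2*k+3:ℕ):ℝ)+1)^n) ≤ 0 := by
    intro k
    have h1 : (-1:ℝ)^(2*k) = 1 := by rw [pow_mul]; norm_num
    have h2 : (-1:ℝ)^(2*k+1) = -1 := by rw [pow_succ, h1]; norm_num
    have h3 : (-1:ℝ)^(2*k+2) = 1 := by rw [pow_succ, h2]; norm_num
    have h4 : (-1:ℝ)^(2*k+3) = -1 := by rw [show 2*k+3 = (2*k+2)+1 from rfl, pow_succ, h3]; norm_num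
    have e1 : ((2*k+2:ℕ):ℝ) + 1 = 2*(k:ℝ)+3 := by push_cast; ring
    have e2 : ((2*k+3:ℕ):ℝ) + 1 = (2*(k:ℝ)+3)+1 := by push_cast; ring
    have hg := g_mono (2*(k:ℝ)+3)
      (by have : (0:ℝ) ≤ (k:ℝ) := Nat.cast_nonneg k; linarith) n N (by omega) hnN
    rw [h3, h4, e1, e2]
    linarith
  have hle := tsum_nonpos (L := SummationFilter.unconditional ℕ) hv
  have h0 : (-1:ℝ)^(0:ℕ) * ((1:ℝ)/(((0:ℕ):ℝ)+1)^N - (1:ℝ)/(((0:ℕ):ℝ)+1)^n) = 0 := by norm_num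
  have h1 : (-1:ℝ)^(1:ℕ) * ((1:ℝ)/(((1:ℕ):ℝ)+1)^N - (1:ℝ)/(((1:ℕ):ℝ)+1)^n)
      = 1/2^n - 1/2^N := by norm_num
  rw [h0, h1]
  linarith

theorem stmt_19 (k j : ℕ) (hk : 2 ≤ k) (hj1 : 1 ≤ j) (hj2 : j ≤ k - 1) :
    0 < etaR (2 * j) - etaR (2 * j) * etaR (2 * k - 2 * j) / etaR (2 * k) ∧
      etaR (2 * j) - etaR (2 * j) * etaR (2 * k - 2 * j) / etaR (2 * k)
        < (2 : ℝ) ^ (1 - 2 * (k : ℤ) + 2 * (j : ℤ)) := by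
  have hjk : j < k := by omega
  set n : ℕ := 2 * k - 2 * j with hndef
  have hn2 : 2 ≤ n := by omega
  have hnN : n < 2 * k := by omega
  have h2j : 2 ≤ 2 * j := by omega
  have hN2 : 2 ≤ 2 * k := by omega
  set P := etaR (2 * j) with hP
  set Q := etaR n with hQ
  set R := etaR (2 * k) with hR
  have hP0 : 0 < P := eta_pos h2j
  have hP1 : P < 1 := eta_lt_one h2j
  have hR0 : 0 < R := eta_pos hN2
  have hRQ : 0 < R - Q := D_pos hn2 hnN
  have hD : R - Q ≤ 1 / 2 ^ n - 1 / 2 ^ (2 * k) := D_le hn2 hnN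
  have hRge : 1 - 1 / 2 ^ (2 * k) ≤ R := eta_ge hN2
  have hE : P - P * Q / R = P * (R - Q) / R := by field_simp
  have hNbig : (1:ℝ) < 2 ^ (2 * k) := by
    apply one_lt_pow₀ (by norm_num) (by omega)
  have hden : (0:ℝ) < 1 - 1 / 2 ^ (2 * k) := by
    have h : (1:ℝ) / 2 ^ (2 * k) < 1 := by
      rw [div_lt_one (by positivity)]
      exact hNbig
    linarith
  have h2n : (0:ℝ) < 2 ^ n := by positivity
  constructor
  · rw [hE]
    exact div_pos (mul_pos hP0 hRQ) hR0
  · have hexp : (2:ℝ) ^ (1 - 2 * (k:ℤ) + 2 * (j:ℤ)) = 2 / 2 ^ n := by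
      have hcast : ((n:ℕ):ℤ) = 2 * (k:ℤ) - 2 * (j:ℤ) := by
        rw [hndef]
        push_cast [Nat.cast_sub (by omega : 2 * j ≤ 2 * k)]
        ring
      have : (1:ℤ) - 2 * (k:ℤ) + 2 * (j:ℤ) = 1 - (n:ℤ) := by rw [hcast]; ring
      rw [this, zpow_sub₀ (two_ne_zero), zpow_one, zpow_natCast]
    rw [hE, hexp]
    have step1 : P * (R - Q) / R < (R - Q) / R := by
      have hpos : 0 < (R - Q) / R := div_pos hRQ hR0
      calc P * (R - Q) / R = P * ((R - Q) / R) := by ring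
        _ < 1 * ((R - Q) / R) := mul_lt_mul_of_pos_right hP1 hpos
        _ = (R - Q) / R := by ring
    have hc0 : (0:ℝ) ≤ 1 / 2 ^ n - 1 / 2 ^ (2 * k) := by
      have := one_div_le_one_div_of_le h2n
        (pow_le_pow_right₀ (by norm_num : (1:ℝ) ≤ 2) (le_of_lt hnN))
      linarith
    have step2 : (R - Q) / R ≤ (1 / 2 ^ n - 1 / 2 ^ (2 * k)) / (1 - 1 / 2 ^ (2 * k)) :=
      div_le_div₀ hc0 hD hden hRge
    have step3 : ((1 / 2 ^ n - 1 / 2 ^ (2 * k)) / (1 - 1 / 2 ^ (2 * k)) : ℝ) ≤ 2 / 2 ^ n := by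
      rw [div_le_div_iff₀ hden h2n]
      have hx : (1 / 2 ^ n : ℝ) * 2 ^ n = 1 := by field_simp
      have hy1 : (0:ℝ) < 1 / 2 ^ (2 * k) := by positivity
      have hy2 : (1:ℝ) / 2 ^ (2 * k) ≤ 1 / 2 := by
        apply one_div_le_one_div_of_le (by norm_num)
        calc (2:ℝ) = 2 ^ 1 := by norm_num
          _ ≤ 2 ^ (2 * k) := pow_le_pow_right₀ (by norm_num) (by omega)
      nlinarith [mul_pos hy1 h2n]
    linarith
end
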